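/- arXiv:2404.06778 — 3 statements merged into one kernel-verified Lean document; each statement's English description precedes it below -/
import Mathlib

section
/- Let b ≥ 2 be an integer and let φ : ℝ → ℝ^d be a non-constant ℤ-periodic C^3 function. Then p′(φ,b) < d, and there exist only finitely many λ ∈ (1/b, 1) with q′(φ,λ,b) > p′(φ,b). -/
open MeasureTheory Filter Metric Set Function
open scoped ENNReal NNReal Topology

noncomputable section

namespace Weier

/-- `ℝ^d` as a Euclidean space. -/
abbrev Ed (d : ℕ) : Type := EuclideanSpace ℝ (Fin d)

/-- The Weierstrass-type function `W^φ_{λ,b}(x) = ∑ λ^n φ(b^n x)`. -/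
def Wf {E : Type} [NormedAddCommGroup E] [NormedSpace ℝ E]
    (b : ℕ) (lam : ℝ) (φ : ℝ → E) (x : ℝ) : E :=
  ∑' n : ℕ, lam ^ n • φ ((b : ℝ) ^ n * x)

/-- The graph of `W` over `[0,1)`, as a subset of `ℝ × ℝ^d = ℝ^{1+d}`. -/
def graphW {E : Type} [NormedAddCommGroup E] [NormedSpace ℝ E]
    (b : ℕ) (lam : ℝ) (φ : ℝ → E) : Set (ℝ × E) :=
  (fun x => (x, Wf b lam φ x)) '' Set.Ico (0 : ℝ) 1

/-- Minimal number of `ε`-balls needed to cover `E`. -/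
def coverNum {X : Type} [PseudoMetricSpace X] (E : Set X) (ε : ℝ) : ℕ :=
  sInf {n : ℕ | ∃ s : Finset X, s.card = n ∧ E ⊆ ⋃ x ∈ s, Metric.ball x ε}

/-- `E` has box (Minkowski) dimension `D`. -/
def HasBoxDim {X : Type} [PseudoMetricSpace X] (E : Set X) (D : ℝ) : Prop :=
  Tendsto (fun ε : ℝ => Real.log (coverNum E ε) / Real.log (1 / ε)) (𝓝[>] (0 : ℝ)) (𝓝 D)

/-- The upper box dimension of `E`. -/
def upperBoxDim {X : Type} [PseudoMetricSpace X] (E : Set X) : ℝ :=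
  limsup (fun ε : ℝ => Real.log (coverNum E ε) / Real.log (1 / ε)) (𝓝[>] (0 : ℝ))

/-- Orthogonal projection onto a subspace `V`, as a self-map of the ambient space. -/
def projS {d : ℕ} (V : Submodule ℝ (Ed d)) (x : Ed d) : Ed d :=
  (V.orthogonalProjectionOnto x : Ed d)

/-- `q(φ,λ,b)`: the maximal dimension of a subspace `V ≤ ℝ^d` such that
`π_V ∘ W^φ_{λ,b}` is Lipschitz. -/
def qval (d b : ℕ) (lam : ℝ) (φ : ℝ → Ed d) : ℕ :=
  sSup {n : ℕ | ∃ V : Submodule ℝ (Ed d), Module.finrank ℝ V = n ∧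
    ∃ K : ℝ≥0, LipschitzWith K fun x => projS V (Wf b lam φ x)}

/-- `p(φ,b) = min_{λ ∈ (1/b,1)} q(φ,λ,b)`. -/
def pval (d b : ℕ) (φ : ℝ → Ed d) : ℕ :=
  sInf {n : ℕ | ∃ lam ∈ Set.Ioo (1 / (b : ℝ)) 1, qval d b lam φ = n}

/-- `Y^φ_{λ,b}(x,𝐣) = -∑_{n≥1} γ^n φ'((x + j₁ + j₂ b + ⋯ + j_n b^{n-1})/b^n)`
with `γ = 1/(bλ)`; here `j k` stands for `j_{k+1}`. -/
def Yf {E : Type} [NormedAddCommGroup E] [NormedSpace ℝ E]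
    (b : ℕ) (lam : ℝ) (φ : ℝ → E) (x : ℝ) (j : ℕ → Fin b) : E :=
  -∑' n : ℕ, (1 / ((b : ℝ) * lam)) ^ (n + 1) •
      deriv φ ((x + ∑ k ∈ Finset.range (n + 1), ((j k : ℕ) : ℝ) * (b : ℝ) ^ k) / (b : ℝ) ^ (n + 1))

/-- Condition (H*): all the functions `Y(·,𝐣)`, `𝐣 ∈ Σ`, coincide. -/
def CondHstar {E : Type} [NormedAddCommGroup E] [NormedSpace ℝ E]
    (b : ℕ) (lam : ℝ) (φ : ℝ → E) : Prop :=
  ∀ i j : ℕ → Fin b, ∀ x : ℝ, Yf b lam φ x i = Yf b lam φ x j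

/-- Condition (H) for `φ : ℝ → ℝ^d`: for every one-dimensional subspace `A` and all
`𝐢 ≠ 𝐣`, the function `Y^{π_A φ}(·,𝐢) - Y^{π_A φ}(·,𝐣)` is not identically zero. -/
def CondH (d b : ℕ) (lam : ℝ) (φ : ℝ → Ed d) : Prop :=
  ∀ A : Submodule ℝ (Ed d), Module.finrank ℝ A = 1 →
    ∀ i j : ℕ → Fin b, i ≠ j →
      ¬ ∀ x : ℝ, Yf b lam (fun t => projS A (φ t)) x i = Yf b lam (fun t => projS A (φ t)) x j

/-- Condition (H) in the one-dimensional (real-valued) case. -/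
def CondH1 (b : ℕ) (lam : ℝ) (φ : ℝ → ℝ) : Prop :=
  ∀ i j : ℕ → Fin b, i ≠ j → ¬ ∀ x : ℝ, Yf b lam φ x i = Yf b lam φ x j

/-- `q'(φ,λ,b)`: the maximal dimension of a subspace `V ≤ ℝ^d` such that `π_V φ`
satisfies condition (H*). -/
def q'val (d b : ℕ) (lam : ℝ) (φ : ℝ → Ed d) : ℕ :=
  sSup {n : ℕ | ∃ V : Submodule ℝ (Ed d), Module.finrank ℝ V = n ∧
    CondHstar b lam fun x => projS V (φ x)}

/-- `p'(φ,b) = min_{λ ∈ (1/b,1)} q'(φ,λ,b)`. -/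
def p'val (d b : ℕ) (φ : ℝ → Ed d) : ℕ :=
  sInf {n : ℕ | ∃ lam ∈ Set.Ioo (1 / (b : ℝ)) 1, q'val d b lam φ = n}

/-- The lift `μ` of Lebesgue measure on `[0,1)` to the graph of `W`. -/
def muW (d b : ℕ) (lam : ℝ) (φ : ℝ → Ed d) : Measure (ℝ × Ed d) :=
  Measure.map (fun x => (x, Wf b lam φ x)) (volume.restrict (Set.Ico (0 : ℝ) 1))

/-- `Γ_𝐣(x) = ∫₀ˣ Y(t,𝐣) dt`. -/
def Gam {E : Type} [NormedAddCommGroup E] [NormedSpace ℝ E]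
    (b : ℕ) (lam : ℝ) (φ : ℝ → E) (j : ℕ → Fin b) (x : ℝ) : E :=
  ∫ t in (0 : ℝ)..x, Yf b lam φ t j

/-- The flow projection `π_𝐣(x,y) = y - Γ_𝐣(x)`. -/
def pj {E : Type} [NormedAddCommGroup E] [NormedSpace ℝ E] [CompleteSpace E]
    (b : ℕ) (lam : ℝ) (φ : ℝ → E) (j : ℕ → Fin b) (p : ℝ × E) : E :=
  p.2 - Gam b lam φ j p.1

/-- `ν` is the Bernoulli product on `Σ = Λ^{ℤ₊}` of the uniform measure on `Λ = {0,…,b-1}`: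
it is a probability measure giving every cylinder of length `n` measure `b^{-n}`. -/
def IsBernoulli (b : ℕ) (ν : Measure (ℕ → Fin b)) : Prop :=
  IsProbabilityMeasure ν ∧
    ∀ (n : ℕ) (w : Fin n → Fin b), ν {j | ∀ k : Fin n, j (k : ℕ) = w k} = (1 / (b : ℝ≥0∞)) ^ n

/-- A measure is exact dimensional with dimension `β` if
`log ω(B(x,r))/log r → β` as `r → 0⁺` for `ω`-a.e. `x`. -/
def IsExactDim {X : Type} [PseudoMetricSpace X] [MeasurableSpace X]
    (ω : Measure X) (β : ℝ) : Prop :=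
  ∀ᵐ x ∂ω, Tendsto (fun r : ℝ => Real.log (ω (Metric.ball x r)).toReal / Real.log r)
    (𝓝[>] (0 : ℝ)) (𝓝 β)

/-- The level-`n` `b`-adic cell of `ℝ^d` with index `k`. -/
def bcell (d b n : ℕ) (k : Fin d → ℤ) : Set (Ed d) :=
  {x | ∀ i, (k i : ℝ) / (b : ℝ) ^ n ≤ x i ∧ x i < ((k i : ℝ) + 1) / (b : ℝ) ^ n}

/-- The entropy `H(ω, ℒ_n)` (with logarithms in base `b`) of a measure with respect to
the level-`n` `b`-adic partition of `ℝ^d`. -/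
def entH (d b n : ℕ) (ω : Measure (Ed d)) : ℝ :=
  ∑' k : Fin d → ℤ, -((ω (bcell d b n k)).toReal * Real.logb b (ω (bcell d b n k)).toReal)

/-- The level-`i` `b`-adic cell containing `x`. -/
def cellOf (d b i : ℕ) (x : Ed d) : Set (Ed d) :=
  bcell d b i fun t => ⌊x t * (b : ℝ) ^ i⌋

/-- The component measure `ω_{x,i}`: the normalized restriction of `ω` to the level-`i`
`b`-adic cell containing `x`. -/
def compMeas (d b i : ℕ) (ω : Measure (Ed d)) (x : Ed d) : Measure (Ed d) :=
  (ω (cellOf d b i x))⁻¹ • ω.restrict (cellOf d b i x)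

/-- `ω` is `(V,ε,m)`-saturated. -/
def Saturated (d b : ℕ) (ω : Measure (Ed d)) (V : Submodule ℝ (Ed d)) (ε : ℝ) (m : ℕ) : Prop :=
  (1 / (m : ℝ)) * entH d b m ω ≥
    (1 / (m : ℝ)) * entH d b m (Measure.map (projS Vᗮ) ω) + (Module.finrank ℝ V : ℝ) - ε

/-- `ω` is `(V,ε)`-concentrated: some translate `V + y` of `V` carries `1-ε` of the mass
of `ω` within distance `ε`. -/
def Concentrated (d : ℕ) (ω : Measure (Ed d)) (V : Submodule ℝ (Ed d)) (ε : ℝ) : Prop :=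
  ∃ y : Ed d, 1 - ε ≤ (ω {z | ∃ v ∈ V, dist z (v + y) ≤ ε}).toReal

/-- The local inverse branch `g_i(x,y) = ((x+i)/b, λ y + φ((x+i)/b))`. -/
def gmap {E : Type} [NormedAddCommGroup E] [NormedSpace ℝ E]
    (b : ℕ) (lam : ℝ) (φ : ℝ → E) (i : Fin b) (p : ℝ × E) : ℝ × E :=
  ((p.1 + (i : ℕ)) / (b : ℝ), lam • p.2 + φ ((p.1 + (i : ℕ)) / (b : ℝ)))

/-- `g_𝐢 = g_{i₁} ∘ ⋯ ∘ g_{i_n}` for a finite word `𝐢 = [i₁,…,i_n]`. -/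
def gword {E : Type} [NormedAddCommGroup E] [NormedSpace ℝ E]
    (b : ℕ) (lam : ℝ) (φ : ℝ → E) (l : List (Fin b)) : ℝ × E → ℝ × E :=
  l.foldr (fun i f => gmap b lam φ i ∘ f) id

/-- Concatenation of a finite word with an infinite word. -/
def wcat {b : ℕ} (l : List (Fin b)) (j : ℕ → Fin b) : ℕ → Fin b :=
  fun k => if h : k < l.length then l.get ⟨k, h⟩ else j (k - l.length)

/-- The `m`-th Fourier coefficient `a_m(ψ) = ∫₀¹ ψ(x) e^{-2πimx} dx` of a
`ℤ`-periodic function `ψ : ℝ → ℝ`. -/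
def fCoeff (ψ : ℝ → ℝ) (m : ℤ) : ℂ :=
  ∫ x in (0 : ℝ)..1, (ψ x : ℂ) * Complex.exp (-(2 * (Real.pi : ℂ) * Complex.I * (m : ℂ) * (x : ℂ)))

/-- `tEnum b k` is `t_{k+1}`, where `t₁ < t₂ < ⋯` enumerates the positive integers
not divisible by `b`. -/
def tEnum (b : ℕ) (k : ℕ) : ℕ :=
  Nat.nth (fun t => 0 < t ∧ ¬ b ∣ t) k

/-- The vector `(R_{1,k+1}(λ),…,R_{d,k+1}(λ))` of real parts. -/
def Rvec (d b : ℕ) (lam : ℝ) (φ : ℝ → Ed d) (k : ℕ) : Ed d :=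
  (EuclideanSpace.equiv (Fin d) ℝ).symm fun j =>
    ∑' n : ℕ, (fCoeff (fun x => φ x j) ((tEnum b k : ℤ) * (b : ℤ) ^ n)).re * lam⁻¹ ^ n

/-- The vector `(I_{1,k+1}(λ),…,I_{d,k+1}(λ))` of imaginary parts. -/
def Ivec (d b : ℕ) (lam : ℝ) (φ : ℝ → Ed d) (k : ℕ) : Ed d :=
  (EuclideanSpace.equiv (Fin d) ℝ).symm fun j =>
    ∑' n : ℕ, (fCoeff (fun x => φ x j) ((tEnum b k : ℤ) * (b : ℤ) ^ n)).im * lam⁻¹ ^ n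

/-- `Ker A_{λ,m} = {y : yA_{λ,m} = 0}`, i.e. the vectors orthogonal to the first `m`
columns `R_{·,1},…,R_{·,m}` and `I_{·,1},…,I_{·,m}`. -/
def kerA (d b : ℕ) (lam : ℝ) (φ : ℝ → Ed d) (m : ℕ) : Submodule ℝ (Ed d) :=
  ⨅ k ∈ Finset.range m,
    (LinearMap.ker (innerSL ℝ (Rvec d b lam φ k) : Ed d →ₗ[ℝ] ℝ) ⊓ LinearMap.ker (innerSL ℝ (Ivec d b lam φ k) : Ed d →ₗ[ℝ] ℝ))

/-- The `C^r` norm `‖f‖_r = ∑_{k=0}^r ‖f^{(k)}‖_∞`. -/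
def cnorm (d r : ℕ) (f : ℝ → Ed d) : ℝ :=
  ∑ k ∈ Finset.range (r + 1), ⨆ x : ℝ, ‖iteratedDeriv k f x‖


/-! ### Auxiliary development for Theorem B -/

section AuxBasic

lemma bdd_of_periodic {E : Type} [NormedAddCommGroup E] {f : ℝ → E}
    (hf : Continuous f) (hp : Function.Periodic f 1) : ∃ M : ℝ, 0 ≤ M ∧ ∀ x, ‖f x‖ ≤ M := by
  obtain ⟨M, hM⟩ := (isCompact_Icc (a := (0:ℝ)) (b := 1)).exists_bound_of_continuousOn
    hf.continuousOn
  refine ⟨max M 0, le_max_right _ _, fun x => ?_⟩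
  obtain ⟨y, hy, hxy⟩ := hp.exists_mem_Ico₀ one_pos x
  rw [hxy]
  exact le_trans (hM y (Set.mem_Icc_of_Ico hy)) (le_max_left _ _)

lemma summable_geom_smul {E : Type} [NormedAddCommGroup E] [NormedSpace ℝ E] [CompleteSpace E]
    {γ M : ℝ} (h0 : 0 ≤ γ) (h1 : γ < 1) {v : ℕ → E} (hv : ∀ n, ‖v n‖ ≤ M) :
    Summable fun n => γ ^ (n + 1) • v n := by
  refine Summable.of_norm_bounded (g := fun n => (M * γ) * γ ^ n)
    ((summable_geometric_of_lt_one h0 h1).mul_left _) (fun n => ?_)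
  rw [norm_smul, norm_pow, Real.norm_eq_abs, abs_of_nonneg h0]
  have h2 : γ ^ (n+1) * ‖v n‖ ≤ γ ^ (n+1) * M :=
    mul_le_mul_of_nonneg_left (hv n) (pow_nonneg h0 _)
  calc γ ^ (n+1) * ‖v n‖ ≤ γ ^ (n+1) * M := h2
    _ = M * γ * γ ^ n := by ring

lemma periodic_deriv {E : Type} [NormedAddCommGroup E] [NormedSpace ℝ E] {f : ℝ → E}
    (hp : Function.Periodic f 1) : Function.Periodic (deriv f) 1 := by
  intro x
  have h : (fun y => f (y + 1)) = f := funext fun y => hp y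
  calc deriv f (x + 1) = deriv (fun y => f (y + 1)) x := (deriv_comp_add_const f 1 x).symm
    _ = deriv f x := by rw [h]

lemma lip_of_deriv_bdd {E : Type} [NormedAddCommGroup E] [NormedSpace ℝ E] {f : ℝ → E} {C : ℝ}
    (hd : Differentiable ℝ f) (hb : ∀ x, ‖deriv f x‖ ≤ C) (y z : ℝ) :
    ‖f y - f z‖ ≤ C * |y - z| := by
  have := (convex_univ (𝕜 := ℝ) (E := ℝ)).norm_image_sub_le_of_norm_deriv_le
    (fun x _ => hd.differentiableAt) (fun x _ => hb x) (Set.mem_univ z) (Set.mem_univ y)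
  simpa [Real.norm_eq_abs] using this

end AuxBasic

section AuxAnalytic

/-- The function `γ ↦ ∑' n, c n * γ ^ n`. -/
def pser (c : ℕ → ℝ) (γ : ℝ) : ℝ := ∑' n, c n * γ ^ n

lemma pser_eq_ofScalarsSum (c : ℕ → ℝ) :
    pser c = (FormalMultilinearSeries.ofScalars ℝ c).sum := by
  funext γ
  rw [pser, FormalMultilinearSeries.sum]
  exact tsum_congr fun n => by
    rw [FormalMultilinearSeries.ofScalars_apply_eq, smul_eq_mul]

lemma radius_ge {c : ℕ → ℝ} {C : ℝ} {θ : ℝ≥0} (hθ : 0 < θ) (hc : ∀ n, |c n| ≤ C * (θ:ℝ) ^ n) :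
    ((θ⁻¹ : ℝ≥0) : ℝ≥0∞) ≤ (FormalMultilinearSeries.ofScalars ℝ c).radius := by
  refine FormalMultilinearSeries.le_radius_of_bound _ C fun n => ?_
  rw [FormalMultilinearSeries.ofScalars_norm]
  have hθ' : (0:ℝ) < θ := hθ
  have h1 : ‖c n‖ * ((θ⁻¹:ℝ≥0):ℝ) ^ n ≤ (C * (θ:ℝ) ^ n) * ((θ⁻¹:ℝ≥0):ℝ) ^ n :=
    mul_le_mul_of_nonneg_right (hc n) (by positivity)
  refine h1.trans (le_of_eq ?_)
  push_cast
  rw [mul_assoc, ← mul_pow, mul_inv_cancel₀ (ne_of_gt hθ'), one_pow, mul_one]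

lemma radius_pos {c : ℕ → ℝ} {C : ℝ} {θ : ℝ≥0} (hθ : 0 < θ) (hc : ∀ n, |c n| ≤ C * (θ:ℝ) ^ n) :
    (0:ℝ≥0∞) < (FormalMultilinearSeries.ofScalars ℝ c).radius :=
  lt_of_lt_of_le (by exact_mod_cast ENNReal.coe_pos.2 (inv_pos.2 hθ) :
    (0:ℝ≥0∞) < ((θ⁻¹:ℝ≥0):ℝ≥0∞)) (radius_ge hθ hc)

lemma analyticOnNhd_pser {c : ℕ → ℝ} {C : ℝ} {θ : ℝ≥0} (hθ : 0 < θ)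
    (hc : ∀ n, |c n| ≤ C * (θ:ℝ) ^ n) :
    AnalyticOnNhd ℝ (pser c) (Metric.ball (0:ℝ) ((θ⁻¹:ℝ≥0):ℝ)) := by
  intro z hz
  rw [pser_eq_ofScalarsSum]
  have hz' : z ∈ EMetric.ball (0:ℝ) (FormalMultilinearSeries.ofScalars ℝ c).radius := by
    refine EMetric.mem_ball.2 (lt_of_lt_of_le ?_ (radius_ge hθ hc))
    rw [edist_zero_right]
    rw [Metric.mem_ball, dist_zero_right] at hz
    exact_mod_cast (by exact_mod_cast hz : (‖z‖₊ : ℝ≥0) < θ⁻¹)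
  exact ((FormalMultilinearSeries.ofScalars ℝ c).hasFPowerSeriesOnBall
    (radius_pos hθ hc)).analyticAt_of_mem hz'

lemma pser_coeffs_zero {c : ℕ → ℝ} {C : ℝ} {θ : ℝ≥0} (hθ : 0 < θ)
    (hc : ∀ n, |c n| ≤ C * (θ:ℝ) ^ n)
    (h0 : ∀ γ ∈ Metric.ball (0:ℝ) ((θ⁻¹:ℝ≥0):ℝ), pser c γ = 0) : ∀ n, c n = 0 := by
  have hpb := ((FormalMultilinearSeries.ofScalars ℝ c).hasFPowerSeriesOnBall
    (radius_pos hθ hc)).hasFPowerSeriesAt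
  have hzero : (FormalMultilinearSeries.ofScalars ℝ c).sum =ᶠ[𝓝 (0:ℝ)] 0 := by
    have hball : Metric.ball (0:ℝ) ((θ⁻¹:ℝ≥0):ℝ) ∈ 𝓝 (0:ℝ) :=
      Metric.ball_mem_nhds _ (by positivity)
    filter_upwards [hball] with γ hγ
    rw [← pser_eq_ofScalarsSum]; exact h0 γ hγ
  have hz := hpb.eq_zero_of_eventually hzero
  intro n
  exact (FormalMultilinearSeries.ofScalars_eq_zero ℝ n).1 (by rw [hz]; rfl)

lemma analytic_zeros_finite {f : ℝ → ℝ} {ρ : ℝ}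
    (hf : AnalyticOnNhd ℝ f (Metric.ball (0:ℝ) ρ))
    {γ₀ : ℝ} (hγ₀ : γ₀ ∈ Metric.ball (0:ℝ) ρ) (hne : f γ₀ ≠ 0) {K : Set ℝ}
    (hK : IsCompact K) (hKs : K ⊆ Metric.ball (0:ℝ) ρ) :
    {γ ∈ K | f γ = 0}.Finite := by
  by_contra h
  have hinf : {γ ∈ K | f γ = 0}.Infinite := h
  obtain ⟨w, hwK, hacc⟩ := hinf.exists_accPt_of_subset_isCompact hK (Set.sep_subset _ _)
  have h1 := accPt_iff_frequently.1 hacc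
  have h2 : ∃ᶠ z in 𝓝 w, f z = 0 ∧ z ∈ ({w}ᶜ : Set ℝ) :=
    h1.mono fun y hy => ⟨hy.2.2, hy.1⟩
  have hfreq : ∃ᶠ z in 𝓝[≠] w, f z = 0 := frequently_nhdsWithin_iff.2 h2
  have := hf.eqOn_zero_of_preconnected_of_frequently_eq_zero
    ((convex_ball (0:ℝ) ρ).isPreconnected) (hKs hwK) hfreq
  exact hne (this hγ₀)

lemma analytic_zero_on_ball_of_Ioo {f : ℝ → ℝ} {ρ a c : ℝ}
    (hf : AnalyticOnNhd ℝ f (Metric.ball (0:ℝ) ρ)) (hac : a < c)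
    (hsub : Set.Ioo a c ⊆ Metric.ball (0:ℝ) ρ)
    (hz : ∀ γ ∈ Set.Ioo a c, f γ = 0) : ∀ γ ∈ Metric.ball (0:ℝ) ρ, f γ = 0 := by
  set w := (a + c) / 2 with hw
  have hwmem : w ∈ Set.Ioo a c := ⟨by rw [hw]; linarith, by rw [hw]; linarith⟩
  have hev : ∀ᶠ z in 𝓝[≠] w, f z = 0 := by
    have : Set.Ioo a c ∈ 𝓝 w := (isOpen_Ioo).mem_nhds hwmem
    filter_upwards [nhdsWithin_le_nhds this] with z hz'
    exact hz z hz'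
  exact fun γ hγ => hf.eqOn_zero_of_preconnected_of_frequently_eq_zero
    ((convex_ball (0:ℝ) ρ).isPreconnected) (hsub hwmem) hev.frequently hγ

end AuxAnalytic
section Core

/-- The points where `deriv φ` is evaluated in `Yf`. -/
def pnt (b : ℕ) (x : ℝ) (j : ℕ → Fin b) (n : ℕ) : ℝ :=
  (x + ∑ k ∈ Finset.range (n + 1), ((j k : ℕ) : ℝ) * (b : ℝ) ^ k) / (b : ℝ) ^ (n + 1)

lemma Yf_def {E : Type} [NormedAddCommGroup E] [NormedSpace ℝ E] (b : ℕ) (lam : ℝ) (φ : ℝ → E)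
    (x : ℝ) (j : ℕ → Fin b) :
    Yf b lam φ x j = -∑' n, (1 / ((b:ℝ) * lam)) ^ (n+1) • deriv φ (pnt b x j n) := rfl

variable {d b : ℕ} {lam : ℝ} {φ : ℝ → Ed d}

lemma gam_facts (hb : 2 ≤ b) (hlam : lam ∈ Set.Ioo (1/(b:ℝ)) 1) :
    0 < 1/((b:ℝ)*lam) ∧ 1/((b:ℝ)*lam) < 1 := by
  have hb2 : (2:ℝ) ≤ (b:ℝ) := by exact_mod_cast hb
  have hbpos : (0:ℝ) < b := by linarith
  have hlam0 : 0 < lam := lt_trans (by positivity) hlam.1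
  have h1 : 1 < (b:ℝ) * lam := by
    have h := hlam.1
    rw [div_lt_iff₀ hbpos] at h
    linarith
  exact ⟨by positivity, by rw [div_lt_one (by linarith)]; exact h1⟩

lemma Yf_summable {M : ℝ} (hM : ∀ y, ‖deriv φ y‖ ≤ M) {γ : ℝ} (h0 : 0 ≤ γ) (h1 : γ < 1)
    (x : ℝ) (j : ℕ → Fin b) : Summable fun n => γ^(n+1) • deriv φ (pnt b x j n) :=
  summable_geom_smul h0 h1 (fun n => hM _)

lemma Yf_sub {M : ℝ} (hM : ∀ y, ‖deriv φ y‖ ≤ M) (hb : 2 ≤ b)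
    (hlam : lam ∈ Set.Ioo (1/(b:ℝ)) 1) (x : ℝ) (i j : ℕ → Fin b) :
    Yf b lam φ x i - Yf b lam φ x j
      = -∑' n, (1/((b:ℝ)*lam))^(n+1) • (deriv φ (pnt b x i n) - deriv φ (pnt b x j n)) := by
  obtain ⟨h0, h1⟩ := gam_facts hb hlam
  have hsi := Yf_summable hM h0.le h1 x i
  have hsj := Yf_summable hM h0.le h1 x j
  rw [Yf_def, Yf_def]
  have h2 : ∑' n, (1/((b:ℝ)*lam))^(n+1) • (deriv φ (pnt b x i n) - deriv φ (pnt b x j n))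
      = (∑' n, (1/((b:ℝ)*lam))^(n+1) • deriv φ (pnt b x i n))
        - ∑' n, (1/((b:ℝ)*lam))^(n+1) • deriv φ (pnt b x j n) := by
    rw [← Summable.tsum_sub hsi hsj]
    exact tsum_congr fun n => smul_sub _ _ _
  rw [h2]
  abel

lemma clm_Yf {E : Type} [NormedAddCommGroup E] [NormedSpace ℝ E] [CompleteSpace E]
    (L : Ed d →L[ℝ] E) (hd : Differentiable ℝ φ) {M : ℝ} (hM : ∀ y, ‖deriv φ y‖ ≤ M)
    (hb : 2 ≤ b) (hlam : lam ∈ Set.Ioo (1/(b:ℝ)) 1) (x : ℝ) (j : ℕ → Fin b) :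
    Yf b lam (fun t => L (φ t)) x j = L (Yf b lam φ x j) := by
  obtain ⟨h0, h1⟩ := gam_facts hb hlam
  rw [Yf_def, Yf_def, map_neg, L.map_tsum (Yf_summable hM h0.le h1 x j)]
  congr 1
  refine tsum_congr fun n => ?_
  rw [L.map_smul]
  congr 1
  exact (L.hasFDerivAt.comp_hasDerivAt _ (hd _).hasDerivAt).deriv

/-- The set of differences `Y(x,i) - Y(x,j)`. -/
def Sgen (d b : ℕ) (lam : ℝ) (φ : ℝ → Ed d) : Set (Ed d) :=
  {v | ∃ (x : ℝ) (i j : ℕ → Fin b), v = Yf b lam φ x i - Yf b lam φ x j}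

def Sspan (d b : ℕ) (lam : ℝ) (φ : ℝ → Ed d) : Submodule ℝ (Ed d) :=
  Submodule.span ℝ (Sgen d b lam φ)

def rk (d b : ℕ) (lam : ℝ) (φ : ℝ → Ed d) : ℕ := Module.finrank ℝ (Sspan d b lam φ)

lemma condHstar_iff (hd : Differentiable ℝ φ) {M : ℝ} (hM : ∀ y, ‖deriv φ y‖ ≤ M)
    (hb : 2 ≤ b) (hlam : lam ∈ Set.Ioo (1/(b:ℝ)) 1) (V : Submodule ℝ (Ed d)) :
    CondHstar b lam (fun x => projS V (φ x)) ↔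
      ∀ v ∈ Sgen d b lam φ, ((V.orthogonalProjectionOnto v : Ed d)) = 0 := by
  set L : Ed d →L[ℝ] Ed d := V.subtypeL.comp (V.orthogonalProjectionOnto) with hL
  have hLa : ∀ y, L y = ((V.orthogonalProjectionOnto y : Ed d)) := fun y => rfl
  have hfun : (fun x => projS V (φ x)) = (fun t => L (φ t)) := rfl
  have hkey : ∀ (x : ℝ) (j : ℕ → Fin b), Yf b lam (fun x => projS V (φ x)) x j
      = L (Yf b lam φ x j) := by
    intro x j
    rw [hfun]
    exact clm_Yf L hd hM hb hlam x j
  constructor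
  · rintro h v ⟨x, i, j, rfl⟩
    rw [← hLa, map_sub, ← hkey, ← hkey, h i j x, sub_self]
  · intro h i j x
    have h1 := h _ ⟨x, i, j, rfl⟩
    rw [← hLa, map_sub] at h1
    rw [hkey, hkey]
    exact sub_eq_zero.1 h1

lemma q'val_eq (hd : Differentiable ℝ φ) {M : ℝ} (hM : ∀ y, ‖deriv φ y‖ ≤ M)
    (hb : 2 ≤ b) (hlam : lam ∈ Set.Ioo (1/(b:ℝ)) 1) :
    q'val d b lam φ = d - rk d b lam φ := by
  have hfr : Module.finrank ℝ (Ed d) = d := finrank_euclideanSpace_fin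
  have horth : Module.finrank ℝ ((Sspan d b lam φ)ᗮ) = d - rk d b lam φ := by
    have h := Submodule.finrank_add_finrank_orthogonal (K := Sspan d b lam φ)
    rw [hfr] at h
    unfold rk
    omega
  have hub : ∀ n ∈ {n | ∃ V : Submodule ℝ (Ed d), Module.finrank ℝ V = n ∧
      CondHstar b lam fun x => projS V (φ x)}, n ≤ d - rk d b lam φ := by
    rintro n ⟨V, rfl, hV⟩
    have h1 : Sgen d b lam φ ⊆ (Vᗮ : Set (Ed d)) := by
      intro v hv
      have h0 := (condHstar_iff hd hM hb hlam V).1 hV v hv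
      have h2 : v - (V.orthogonalProjectionOnto v : Ed d) ∈ Vᗮ :=
        Submodule.sub_starProjection_mem_orthogonal (K := V) v
      rw [h0, sub_zero] at h2
      exact h2
    have h2 : Sspan d b lam φ ≤ Vᗮ := Submodule.span_le.2 h1
    have h3 : V ≤ (Sspan d b lam φ)ᗮ :=
      le_trans V.le_orthogonal_orthogonal (Submodule.orthogonal_le h2)
    rw [← horth]
    exact Submodule.finrank_mono h3
  have hmem : (d - rk d b lam φ) ∈ {n | ∃ V : Submodule ℝ (Ed d), Module.finrank ℝ V = n ∧
      CondHstar b lam fun x => projS V (φ x)} := by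
    refine ⟨(Sspan d b lam φ)ᗮ, horth, ?_⟩
    rw [condHstar_iff hd hM hb hlam]
    intro v hv
    have hv' : v ∈ ((Sspan d b lam φ)ᗮ)ᗮ :=
      (Sspan d b lam φ).le_orthogonal_orthogonal (Submodule.subset_span hv)
    have h4 := Submodule.orthogonalProjectionOnto_apply_of_mem_orthogonal hv'
    rw [h4]
    rfl
  exact le_antisymm (csSup_le ⟨_, hmem⟩ hub) (le_csSup ⟨d - rk d b lam φ, hub⟩ hmem)

lemma sgen_mem (x : ℝ) (i j : ℕ → Fin b) :
    Yf b lam φ x i - Yf b lam φ x j ∈ Sspan d b lam φ :=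
  Submodule.subset_span ⟨x, i, j, rfl⟩

end Core
section Gram
variable {d : ℕ}

lemma gram_det_ne_zero_iff {R : ℕ} (v : Fin R → Ed d) :
    (Matrix.of fun s t => (inner ℝ (v s) (v t) : ℝ)).det ≠ 0 ↔ LinearIndependent ℝ v := by
  have hmvs : ∀ g : Fin R → ℝ, ∀ s, (Matrix.of fun s t => (inner ℝ (v s) (v t) : ℝ)).mulVec g s
      = (inner ℝ (v s) (∑ t, g t • v t) : ℝ) := by
    intro g s
    rw [inner_sum]
    simp only [Matrix.mulVec, dotProduct, Matrix.of_apply, real_inner_smul_right]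
    exact Finset.sum_congr rfl fun t _ => mul_comm _ _
  constructor
  · intro hdet
    rw [Fintype.linearIndependent_iff]
    intro g hg
    have hmv : (Matrix.of fun s t => (inner ℝ (v s) (v t) : ℝ)).mulVec g = 0 := by
      funext s
      rw [hmvs g s, hg, inner_zero_right]
      rfl
    have hgz : g = 0 := by
      by_contra hne
      exact hdet (Matrix.exists_mulVec_eq_zero_iff.1 ⟨g, hne, hmv⟩)
    exact fun i => by rw [hgz]; rfl
  · intro hli hdet0
    obtain ⟨g, hg0, hmv⟩ := Matrix.exists_mulVec_eq_zero_iff.2 hdet0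
    have hsw : ∀ s, (inner ℝ (v s) (∑ t, g t • v t) : ℝ) = 0 := by
      intro s
      rw [← hmvs g s, hmv]
      rfl
    have hww : (inner ℝ (∑ t, g t • v t) (∑ t, g t • v t) : ℝ) = 0 := by
      rw [sum_inner]
      refine Finset.sum_eq_zero fun s _ => ?_
      rw [real_inner_smul_left, hsw s, mul_zero]
    have hw0 : (∑ t, g t • v t) = 0 := inner_self_eq_zero.1 hww
    exact hg0 (funext fun i => Fintype.linearIndependent_iff.1 hli g hw0 i)

lemma not_li_of_finrank_lt {R : ℕ} {W : Submodule ℝ (Ed d)} {v : Fin R → Ed d}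
    (hmem : ∀ s, v s ∈ W) (hlt : Module.finrank ℝ W < R) : ¬ LinearIndependent ℝ v := by
  intro hli
  have hli' : LinearIndependent ℝ (fun s : Fin R => (⟨v s, hmem s⟩ : W)) :=
    LinearIndependent.of_comp W.subtype (by exact hli)
  have hcard := hli'.fintype_card_le_finrank
  simp only [Fintype.card_fin] at hcard
  omega

lemma exists_indep_family (S : Set (Ed d)) :
    ∃ v : Fin (Module.finrank ℝ (Submodule.span ℝ S)) → Ed d,
      (∀ s, v s ∈ S) ∧ LinearIndependent ℝ v := by
  obtain ⟨t, hts, hspan, hli⟩ := exists_linearIndependent ℝ S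
  have hfin : t.Finite := hli.setFinite
  haveI := hfin.fintype
  have hcard : Fintype.card t = Module.finrank ℝ (Submodule.span ℝ S) := by
    rw [← hspan, finrank_span_set_eq_card hli, Set.toFinset_card]
  obtain e := Fintype.equivFinOfCardEq hcard
  refine ⟨fun s => ((e.symm s : t) : Ed d), fun s => hts (e.symm s).2, ?_⟩
  exact hli.comp e.symm e.symm.injective

end Gram

section Approx

variable {d b : ℕ} {lam : ℝ} {φ : ℝ → Ed d}

/-- Differences coming from eventually-equal digit sequences. -/
def S0gen (d b : ℕ) (lam : ℝ) (φ : ℝ → Ed d) : Set (Ed d) :=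
  {v | ∃ (x : ℝ) (i j : ℕ → Fin b) (κ : ℕ), (∀ n, κ ≤ n → i n = j n) ∧
    v = Yf b lam φ x i - Yf b lam φ x j}

lemma tail_bound {M γ : ℝ} (h0 : 0 ≤ γ) (h1 : γ < 1) {w : ℕ → Ed d}
    (hw : ∀ n, ‖w n‖ ≤ M) {k : ℕ} (hz : ∀ n < k, w n = 0) :
    ‖∑' n, γ^(n+1) • w n‖ ≤ (M * γ^(k+1)) * (1-γ)⁻¹ := by
  have hs : Summable fun n => γ^(n+1) • w n := summable_geom_smul h0 h1 hw
  have hshift : ∑' n, γ^(n+1) • w n = ∑' n, γ^(n+k+1) • w (n+k) := by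
    rw [← Summable.sum_add_tsum_nat_add k hs,
      Finset.sum_eq_zero (fun n hn => by rw [hz n (Finset.mem_range.1 hn), smul_zero]), zero_add]
  rw [hshift]
  have hgs : HasSum (fun n => (M * γ^(k+1)) * γ^n) ((M * γ^(k+1)) * (1-γ)⁻¹) := by
    have := hasSum_geometric_of_lt_one h0 h1
    simpa using this.mul_left (M * γ^(k+1))
  refine tsum_of_norm_bounded hgs fun n => ?_
  rw [norm_smul, norm_pow, Real.norm_eq_abs, abs_of_nonneg h0]
  calc γ^(n+k+1) * ‖w (n+k)‖ ≤ γ^(n+k+1) * M :=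
        mul_le_mul_of_nonneg_left (hw _) (pow_nonneg h0 _)
    _ = M * γ^(k+1) * γ^n := by ring

lemma span_S0_eq {M : ℝ} (hM : ∀ y, ‖deriv φ y‖ ≤ M) (hb : 2 ≤ b)
    (hlam : lam ∈ Set.Ioo (1/(b:ℝ)) 1) :
    Sspan d b lam φ = Submodule.span ℝ (S0gen d b lam φ) := by
  refine le_antisymm ?_ (Submodule.span_mono ?_)
  swap
  · rintro v ⟨x, i, j, κ, _, rfl⟩
    exact ⟨x, i, j, rfl⟩
  rw [Sspan, Submodule.span_le]
  rintro v ⟨x, i, j, rfl⟩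
  obtain ⟨h0, h1⟩ := gam_facts hb hlam
  set γ := 1/((b:ℝ)*lam) with hγ
  set mix : ℕ → (ℕ → Fin b) := fun k n => if n < k then j n else i n with hmix
  have hmem : ∀ k, Yf b lam φ x i - Yf b lam φ x (mix k)
      ∈ Submodule.span ℝ (S0gen d b lam φ) := fun k =>
    Submodule.subset_span ⟨x, i, mix k, k,
      fun n hn => by simp only [hmix]; rw [if_neg (Nat.not_lt.2 hn)], rfl⟩
  have hclosed : IsClosed ((Submodule.span ℝ (S0gen d b lam φ)) : Set (Ed d)) :=
    Submodule.closed_of_finiteDimensional _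
  have hbound : ∀ k : ℕ, ‖Yf b lam φ x (mix k) - Yf b lam φ x j‖
      ≤ ((2*M) * γ^(k+1)) * (1-γ)⁻¹ := by
    intro k
    rw [Yf_sub hM hb hlam, norm_neg]
    refine tail_bound h0.le h1 (fun n => ?_) (fun n hn => ?_)
    · exact le_trans (norm_sub_le _ _) (by linarith [hM (pnt b x (mix k) n), hM (pnt b x j n)])
    · have hpnt : pnt b x (mix k) n = pnt b x j n := by
        unfold pnt
        congr 2
        refine Finset.sum_congr rfl fun m hm => ?_
        have hmk : m < k := lt_of_lt_of_le (Finset.mem_range.1 hm) hn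
        simp only [hmix]
        rw [if_pos hmk]
      rw [hpnt, sub_self]
  have hzero : Filter.Tendsto (fun k : ℕ => Yf b lam φ x (mix k) - Yf b lam φ x j)
      Filter.atTop (𝓝 0) := by
    refine squeeze_zero_norm hbound ?_
    have h2 : Filter.Tendsto (fun k : ℕ => γ ^ k) Filter.atTop (𝓝 0) :=
      tendsto_pow_atTop_nhds_zero_of_lt_one h0.le h1
    have h3 : Filter.Tendsto (fun k : ℕ => ((2*M) * γ * (1-γ)⁻¹) * γ ^ k)
        Filter.atTop (𝓝 (((2*M) * γ * (1-γ)⁻¹) * 0)) := h2.const_mul _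
    rw [mul_zero] at h3
    refine h3.congr fun k => ?_
    ring
  have htend : Filter.Tendsto (fun k => Yf b lam φ x i - Yf b lam φ x (mix k)) Filter.atTop
      (𝓝 (Yf b lam φ x i - Yf b lam φ x j)) := by
    have h4 := (tendsto_const_nhds (x := Yf b lam φ x i - Yf b lam φ x j)
      (f := Filter.atTop (α := ℕ))).sub hzero
    rw [sub_zero] at h4
    refine h4.congr fun k => ?_
    abel
  exact hclosed.mem_of_tendsto htend (Filter.Eventually.of_forall hmem)

end Approx
section Coeff

variable {d b : ℕ} {lam : ℝ} {φ : ℝ → Ed d}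

lemma deriv_facts (hper : Function.Periodic φ 1) (hC3 : ContDiff ℝ 3 φ) :
    Differentiable ℝ φ ∧ Continuous (deriv φ) ∧ (∃ M, 0 ≤ M ∧ ∀ y, ‖deriv φ y‖ ≤ M) ∧
      (∃ M2, 0 ≤ M2 ∧ ∀ y z, ‖deriv φ y - deriv φ z‖ ≤ M2 * |y - z|) := by
  have h31 : (3 : WithTop ℕ∞) = 2 + 1 := by norm_num
  have h2 := contDiff_succ_iff_deriv.1 (h31 ▸ hC3)
  have hd1 : Differentiable ℝ (deriv φ) := h2.2.2.differentiable (by norm_num)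
  have hc1 : Continuous (deriv φ) := hd1.continuous
  have hcd2 : Continuous (deriv (deriv φ)) := h2.2.2.continuous_deriv (by norm_num)
  obtain ⟨M, hM0, hM⟩ := bdd_of_periodic hc1 (periodic_deriv hper)
  obtain ⟨M2, hM20, hM2⟩ := bdd_of_periodic hcd2 (periodic_deriv (periodic_deriv hper))
  exact ⟨h2.1, hc1, ⟨M, hM0, hM⟩, ⟨M2, hM20, fun y z => lip_of_deriv_bdd hd1 hM2 y z⟩⟩

lemma coord_le_norm (x : Ed d) (e : Fin d) : |x e| ≤ ‖x‖ := by
  rw [EuclideanSpace.norm_eq, ← Real.sqrt_sq_eq_abs]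
  apply Real.sqrt_le_sqrt
  have h := Finset.single_le_sum (f := fun i => ‖x i‖^2) (fun i _ => by positivity)
    (Finset.mem_univ e)
  simpa [Real.norm_eq_abs, sq_abs] using h

lemma geom_sum_le (hb : 2 ≤ b) : ∀ κ : ℕ, ∑ k ∈ Finset.range κ, (b:ℝ)^(k+1) ≤ (b:ℝ)^(κ+1)
  | 0 => by
    simp
  | (κ+1) => by
    rw [Finset.sum_range_succ]
    have h1 := geom_sum_le hb κ
    have hb2 : (2:ℝ) ≤ (b:ℝ) := by exact_mod_cast hb
    have h2 : (2:ℝ) * (b:ℝ)^(κ+1) ≤ (b:ℝ) * (b:ℝ)^(κ+1) := by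
      apply mul_le_mul_of_nonneg_right hb2
      positivity
    calc (∑ k ∈ Finset.range κ, (b:ℝ)^(k+1)) + (b:ℝ)^(κ+1)
        ≤ (b:ℝ)^(κ+1) + (b:ℝ)^(κ+1) := by linarith
      _ = 2 * (b:ℝ)^(κ+1) := by ring
      _ ≤ (b:ℝ) * (b:ℝ)^(κ+1) := h2
      _ = (b:ℝ)^(κ+1+1) := by ring

lemma pnt_diff_bound (hb : 2 ≤ b) {i j : ℕ → Fin b} {κ : ℕ} (hij : ∀ n, κ ≤ n → i n = j n)
    (x : ℝ) (n : ℕ) :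
    |pnt b x i n - pnt b x j n| ≤ (b:ℝ)^(κ+1) * ((b:ℝ)⁻¹)^(n+1) := by
  have hb2 : (2:ℝ) ≤ (b:ℝ) := by exact_mod_cast hb
  have hb0 : (0:ℝ) < (b:ℝ) := by linarith
  unfold pnt
  rw [div_sub_div_same]
  have hnum : (x + ∑ k ∈ Finset.range (n+1), ((i k : ℕ):ℝ) * (b:ℝ)^k)
      - (x + ∑ k ∈ Finset.range (n+1), ((j k : ℕ):ℝ) * (b:ℝ)^k)
      = ∑ k ∈ Finset.range (n+1), ((((i k : ℕ):ℝ) - ((j k : ℕ):ℝ)) * (b:ℝ)^k) := by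
    simp only [sub_mul, Finset.sum_sub_distrib]
    ring
  rw [hnum, abs_div, abs_of_pos (by positivity : (0:ℝ) < (b:ℝ)^(n+1))]
  rw [div_le_iff₀ (by positivity : (0:ℝ) < (b:ℝ)^(n+1))]
  have hterm : ∀ k, |(((i k : ℕ):ℝ) - ((j k : ℕ):ℝ)) * (b:ℝ)^k|
      ≤ (if k < κ then (b:ℝ)^(k+1) else 0) := by
    intro k
    by_cases hk : k < κ
    · rw [if_pos hk, abs_mul, abs_of_pos (by positivity : (0:ℝ) < (b:ℝ)^k)]
      have hik : ((i k : ℕ):ℝ) < (b:ℝ) := by exact_mod_cast (i k).is_lt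
      have hjk : ((j k : ℕ):ℝ) < (b:ℝ) := by exact_mod_cast (j k).is_lt
      have hik0 : (0:ℝ) ≤ ((i k : ℕ):ℝ) := by positivity
      have hjk0 : (0:ℝ) ≤ ((j k : ℕ):ℝ) := by positivity
      have habs : |(((i k : ℕ):ℝ) - ((j k : ℕ):ℝ))| ≤ (b:ℝ) :=
        abs_sub_le_iff.2 ⟨by linarith, by linarith⟩
      calc |(((i k : ℕ):ℝ) - ((j k : ℕ):ℝ))| * (b:ℝ)^k ≤ (b:ℝ) * (b:ℝ)^k :=
            mul_le_mul_of_nonneg_right habs (by positivity)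
        _ = (b:ℝ)^(k+1) := by ring
    · rw [if_neg hk, hij k (Nat.le_of_not_lt hk)]
      simp
  calc |∑ k ∈ Finset.range (n+1), ((((i k : ℕ):ℝ) - ((j k : ℕ):ℝ)) * (b:ℝ)^k)|
      ≤ ∑ k ∈ Finset.range (n+1), |(((i k : ℕ):ℝ) - ((j k : ℕ):ℝ)) * (b:ℝ)^k| :=
        Finset.abs_sum_le_sum_abs _ _
    _ ≤ ∑ k ∈ Finset.range (n+1), (if k < κ then (b:ℝ)^(k+1) else 0) :=
        Finset.sum_le_sum fun k _ => hterm k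
    _ = ∑ k ∈ (Finset.range (n+1)).filter (· < κ), (b:ℝ)^(k+1) := by
        rw [Finset.sum_filter]
    _ ≤ ∑ k ∈ Finset.range κ, (b:ℝ)^(k+1) := by
        refine Finset.sum_le_sum_of_subset_of_nonneg ?_ (fun k _ _ => by positivity)
        intro k hk
        rw [Finset.mem_filter] at hk
        exact Finset.mem_range.2 hk.2
    _ ≤ (b:ℝ)^(κ+1) := geom_sum_le hb κ
    _ = (b:ℝ)^(κ+1) * ((b:ℝ)⁻¹)^(n+1) * (b:ℝ)^(n+1) := by
        rw [mul_assoc, ← mul_pow, inv_mul_cancel₀ (ne_of_gt hb0), one_pow, mul_one]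

/-- Coordinate coefficients of the difference series. -/
def cfun (d b : ℕ) (φ : ℝ → Ed d) (x : ℝ) (i j : ℕ → Fin b) (e : Fin d) (n : ℕ) : ℝ :=
  (deriv φ (pnt b x i n) - deriv φ (pnt b x j n)) e

lemma cfun_bound (hb : 2 ≤ b) {M2 : ℝ} (hM20 : 0 ≤ M2)
    (hM2 : ∀ y z, ‖deriv φ y - deriv φ z‖ ≤ M2 * |y - z|)
    {i j : ℕ → Fin b} {κ : ℕ} (hij : ∀ n, κ ≤ n → i n = j n) (x : ℝ) (e : Fin d) (n : ℕ) :
    |cfun d b φ x i j e n| ≤ (M2 * (b:ℝ)^(κ+1) * (b:ℝ)⁻¹) * (((b:ℝ≥0)⁻¹ : ℝ≥0) : ℝ)^n := by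
  have hb2 : (2:ℝ) ≤ (b:ℝ) := by exact_mod_cast hb
  have hb0 : (0:ℝ) < (b:ℝ) := by linarith
  have hcoe : (((b:ℝ≥0)⁻¹ : ℝ≥0) : ℝ) = (b:ℝ)⁻¹ := by
    push_cast
    norm_num
  rw [hcoe]
  have h1 : |cfun d b φ x i j e n| ≤ ‖deriv φ (pnt b x i n) - deriv φ (pnt b x j n)‖ :=
    coord_le_norm _ e
  have h2 := hM2 (pnt b x i n) (pnt b x j n)
  have h3 := pnt_diff_bound hb hij x n
  have h4 : M2 * |pnt b x i n - pnt b x j n| ≤ M2 * ((b:ℝ)^(κ+1) * ((b:ℝ)⁻¹)^(n+1)) :=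
    mul_le_mul_of_nonneg_left h3 hM20
  calc |cfun d b φ x i j e n| ≤ M2 * ((b:ℝ)^(κ+1) * ((b:ℝ)⁻¹)^(n+1)) :=
        le_trans h1 (le_trans h2 h4)
    _ = (M2 * (b:ℝ)^(κ+1) * (b:ℝ)⁻¹) * ((b:ℝ)⁻¹)^n := by ring

lemma Yf_coord {M : ℝ} (hM : ∀ y, ‖deriv φ y‖ ≤ M) (hb : 2 ≤ b)
    (hlam : lam ∈ Set.Ioo (1/(b:ℝ)) 1) (x : ℝ) (i j : ℕ → Fin b) (e : Fin d) :
    (Yf b lam φ x i - Yf b lam φ x j) e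
      = -((1/((b:ℝ)*lam)) * pser (cfun d b φ x i j e) (1/((b:ℝ)*lam))) := by
  obtain ⟨h0, h1⟩ := gam_facts hb hlam
  set γ := 1/((b:ℝ)*lam) with hγ
  rw [Yf_sub hM hb hlam]
  have hsum : Summable fun n => γ^(n+1) • (deriv φ (pnt b x i n) - deriv φ (pnt b x j n)) := by
    refine summable_geom_smul h0.le h1 (M := 2*M) fun n => ?_
    exact le_trans (norm_sub_le _ _) (by linarith [hM (pnt b x i n), hM (pnt b x j n)])
  have hL := (EuclideanSpace.proj e : Ed d →L[ℝ] ℝ).map_tsum hsum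
  have happ : ∀ v : Ed d, (EuclideanSpace.proj e : Ed d →L[ℝ] ℝ) v = v e := fun v => rfl
  calc (-∑' n, γ^(n+1) • (deriv φ (pnt b x i n) - deriv φ (pnt b x j n))) e
      = -((EuclideanSpace.proj e : Ed d →L[ℝ] ℝ)
          (∑' n, γ^(n+1) • (deriv φ (pnt b x i n) - deriv φ (pnt b x j n)))) := rfl
    _ = -∑' n, γ^(n+1) * cfun d b φ x i j e n := by
        rw [hL]
        congr 1
    _ = -(γ * pser (cfun d b φ x i j e) γ) := by
        rw [pser, ← tsum_mul_left]
        congr 1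
        exact tsum_congr fun n => by ring

end Coeff
section PartOne

variable {d b : ℕ} {φ : ℝ → Ed d}

lemma const_of_small_periods {b : ℕ} (hb : 2 ≤ b) {E : Type} [NormedAddCommGroup E] {f : ℝ → E}
    (hf : Continuous f) (hp : ∀ n : ℕ, Function.Periodic f (((b:ℝ)^(n+1))⁻¹)) :
    ∀ y, f y = f 0 := by
  intro y
  have hb2 : (2:ℝ) ≤ (b:ℝ) := by exact_mod_cast hb
  have hb0 : (0:ℝ) < (b:ℝ) := by linarith
  set z : ℕ → ℝ := fun m => ((⌊y * (b:ℝ)^(m+1)⌋ : ℤ) : ℝ) * ((b:ℝ)^(m+1))⁻¹ with hz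
  have hkey : ∀ m, f (z m) = f 0 := fun m => (hp m).int_mul_eq (⌊y * (b:ℝ)^(m+1)⌋)
  have hdist : ∀ m, ‖z m - y‖ ≤ ((b:ℝ)⁻¹) * ((b:ℝ)⁻¹)^m := by
    intro m
    have hB : (0:ℝ) < (b:ℝ)^(m+1) := by positivity
    have h1 : z m - y
        = (((⌊y * (b:ℝ)^(m+1)⌋ : ℤ):ℝ) - y * (b:ℝ)^(m+1)) * ((b:ℝ)^(m+1))⁻¹ := by
      rw [hz]
      field_simp
    have h2 : |((⌊y * (b:ℝ)^(m+1)⌋ : ℤ):ℝ) - y * (b:ℝ)^(m+1)| ≤ 1 := by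
      have hfl := Int.floor_le (y * (b:ℝ)^(m+1))
      have hfl2 := Int.lt_floor_add_one (y * (b:ℝ)^(m+1))
      rw [abs_le]
      constructor <;> linarith
    rw [Real.norm_eq_abs, h1, abs_mul, abs_of_pos (inv_pos.2 hB)]
    calc |((⌊y * (b:ℝ)^(m+1)⌋ : ℤ):ℝ) - y * (b:ℝ)^(m+1)| * ((b:ℝ)^(m+1))⁻¹
        ≤ 1 * ((b:ℝ)^(m+1))⁻¹ := mul_le_mul_of_nonneg_right h2 (by positivity)
      _ = ((b:ℝ)⁻¹) * ((b:ℝ)⁻¹)^m := by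
          rw [one_mul, ← inv_pow]
          ring
  have hbinv1 : (b:ℝ)⁻¹ < 1 := inv_lt_one_of_one_lt₀ (by linarith)
  have htend0 : Filter.Tendsto (fun m : ℕ => ((b:ℝ)⁻¹) * ((b:ℝ)⁻¹)^m) Filter.atTop (𝓝 0) := by
    have h3 := (tendsto_pow_atTop_nhds_zero_of_lt_one (by positivity : (0:ℝ) ≤ (b:ℝ)⁻¹)
      hbinv1).const_mul ((b:ℝ)⁻¹)
    simpa using h3
  have hzy : Filter.Tendsto z Filter.atTop (𝓝 y) :=
    tendsto_sub_nhds_zero_iff.1 (squeeze_zero_norm hdist htend0)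
  have hfz : Filter.Tendsto (fun m => f (z m)) Filter.atTop (𝓝 (f y)) :=
    (hf.tendsto y).comp hzy
  rw [funext hkey] at hfz
  exact tendsto_nhds_unique hfz tendsto_const_nhds

lemma rk_pos (hb : 2 ≤ b) (hper : Function.Periodic φ 1) (hC3 : ContDiff ℝ 3 φ)
    (hnc : ¬ ∃ c : Ed d, ∀ x : ℝ, φ x = c) :
    ∃ lam ∈ Set.Ioo (1/(b:ℝ)) 1, rk d b lam φ ≠ 0 := by
  obtain ⟨hdiff, hc1, ⟨M, hM0, hM⟩, ⟨M2, hM20, hM2⟩⟩ := deriv_facts hper hC3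
  have hb2 : (2:ℝ) ≤ (b:ℝ) := by exact_mod_cast hb
  have hb0 : (0:ℝ) < (b:ℝ) := by linarith
  by_contra hcon
  push_neg at hcon
  have hvanish : ∀ lam ∈ Set.Ioo (1/(b:ℝ)) 1, ∀ (x : ℝ) (i j : ℕ → Fin b),
      Yf b lam φ x i - Yf b lam φ x j = 0 := by
    intro lam hlam x i j
    have h0 : Sspan d b lam φ = ⊥ := Submodule.finrank_eq_zero.1 (hcon lam hlam)
    have h1 := sgen_mem (lam := lam) (φ := φ) x i j
    rw [h0, Submodule.mem_bot] at h1
    exact h1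
  have h0b : 0 < b := by omega
  have h1b : 1 < b := by omega
  set i0 : ℕ → Fin b := fun _ => ⟨0, h0b⟩ with hi0
  set j1 : ℕ → Fin b := fun m => if m = 0 then ⟨1, h1b⟩ else ⟨0, h0b⟩ with hj1
  have hagree : ∀ n, 1 ≤ n → i0 n = j1 n := by
    intro n hn
    have hne : n ≠ 0 := by omega
    simp [hi0, hj1, hne]
  set θ : ℝ≥0 := (b:ℝ≥0)⁻¹ with hθ
  have hbnn : (0:ℝ≥0) < (b:ℝ≥0) := by
    have : (0:ℝ) < ((b:ℝ≥0):ℝ) := by push_cast; linarith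
    exact_mod_cast this
  have hθpos : 0 < θ := by rw [hθ]; exact inv_pos.2 hbnn
  have hrad : ((θ⁻¹:ℝ≥0):ℝ) = (b:ℝ) := by rw [hθ, inv_inv]; simp
  have hIoolt : (1/(b:ℝ)) < 1 := by rw [div_lt_one hb0]; linarith
  have hsubset : Set.Ioo (1/(b:ℝ)) 1 ⊆ Metric.ball (0:ℝ) ((θ⁻¹:ℝ≥0):ℝ) := by
    rw [hrad]
    intro γ hγ
    rw [Metric.mem_ball, dist_zero_right, Real.norm_eq_abs]
    have h2 := hγ.1
    have h3 := hγ.2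
    have h4 : (0:ℝ) < 1/(b:ℝ) := by positivity
    rw [abs_of_pos (by linarith)]
    linarith
  have hczero : ∀ (x : ℝ) (e : Fin d) (n : ℕ), cfun d b φ x i0 j1 e n = 0 := by
    intro x e
    have hbound := fun n => cfun_bound (φ := φ) hb hM20 hM2 hagree x e n
    have hzser : ∀ γ ∈ Set.Ioo (1/(b:ℝ)) 1, pser (cfun d b φ x i0 j1 e) γ = 0 := by
      intro γ hγ
      have hγ0 : 0 < γ := lt_trans (by positivity) hγ.1
      set lam := 1/((b:ℝ)*γ) with hlam'
      have hlmem : lam ∈ Set.Ioo (1/(b:ℝ)) 1 := by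
        constructor
        · rw [hlam', div_lt_div_iff₀ hb0 (by positivity)]
          have : γ < 1 := hγ.2
          nlinarith
        · rw [hlam', div_lt_one (by positivity)]
          have h5 := hγ.1
          rw [div_lt_iff₀ hb0] at h5
          nlinarith
      have hγlam : 1/((b:ℝ)*lam) = γ := by
        rw [hlam']
        field_simp
      have hv := hvanish lam hlmem x i0 j1
      have hcoord := Yf_coord hM hb hlmem x i0 j1 e
      rw [hv, hγlam] at hcoord
      have h6 : γ * pser (cfun d b φ x i0 j1 e) γ = 0 := by
        have h7 : (0 : Ed d) e = 0 := rfl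
        rw [h7] at hcoord
        linarith [hcoord]
      exact (mul_eq_zero.1 h6).resolve_left (ne_of_gt hγ0)
    have hz2 := analytic_zero_on_ball_of_Ioo (analyticOnNhd_pser hθpos hbound) hIoolt
      hsubset hzser
    exact pser_coeffs_zero hθpos hbound hz2
  have hvec : ∀ (x : ℝ) (n : ℕ), deriv φ (pnt b x i0 n) = deriv φ (pnt b x j1 n) := by
    intro x n
    have h8 : deriv φ (pnt b x i0 n) - deriv φ (pnt b x j1 n) = (0 : Ed d) := by
      ext e
      exact hczero x e n
    exact sub_eq_zero.1 h8
  have hperiod : ∀ (n : ℕ), Function.Periodic (deriv φ) (((b:ℝ)^(n+1))⁻¹) := by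
    intro n y
    have hB : (0:ℝ) < (b:ℝ)^(n+1) := by positivity
    have hp1 : pnt b (y * (b:ℝ)^(n+1)) i0 n = y := by
      unfold pnt
      rw [Finset.sum_eq_zero (fun k _ => by simp [hi0])]
      field_simp
      rw [add_zero]
    have hp2 : pnt b (y * (b:ℝ)^(n+1)) j1 n = y + ((b:ℝ)^(n+1))⁻¹ := by
      unfold pnt
      have hsum : ∑ k ∈ Finset.range (n+1), (((j1 k : ℕ):ℝ) * (b:ℝ)^k) = 1 := by
        rw [Finset.sum_eq_single_of_mem 0 (Finset.mem_range.2 (by omega))]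
        · simp [hj1]
        · intro k _ hk
          simp [hj1, hk]
      rw [hsum]
      field_simp
    have h9 := hvec (y * (b:ℝ)^(n+1)) n
    rw [hp1, hp2] at h9
    exact h9.symm
  have hder : ∀ y, deriv φ y = deriv φ 0 := const_of_small_periods hb hc1 hperiod
  set c0 : Ed d := deriv φ 0 with hc0
  have hgd : ∀ x : ℝ, HasDerivAt (fun x : ℝ => φ x - x • c0) 0 x := by
    intro x
    have h10 := ((hdiff x).hasDerivAt).sub ((hasDerivAt_id x).smul_const c0)
    rw [hder x, one_smul, sub_self] at h10
    exact h10
  have hfd : ∀ x : ℝ, fderiv ℝ (fun x : ℝ => φ x - x • c0) x = 0 := by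
    intro x
    have h11 := (hgd x).hasFDerivAt.fderiv
    rw [h11]
    ext u
    simp
  have hgdiff : Differentiable ℝ (fun x : ℝ => φ x - x • c0) :=
    fun x => (hgd x).differentiableAt
  have hgconst : ∀ x : ℝ, φ x - x • c0 = φ 0 - (0:ℝ) • c0 :=
    fun x => is_const_of_fderiv_eq_zero hgdiff hfd x 0
  have hφx : ∀ x : ℝ, φ x = φ 0 + x • c0 := by
    intro x
    have h12 := hgconst x
    rw [zero_smul, sub_zero] at h12
    calc φ x = (φ x - x • c0) + x • c0 := by abel
      _ = φ 0 + x • c0 := by rw [h12]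
  have hc00 : c0 = 0 := by
    have h13 : φ 0 + (1:ℝ) • c0 = φ 0 := by
      rw [← hφx 1]
      exact hper.eq
    rw [one_smul] at h13
    calc c0 = (φ 0 + c0) - φ 0 := by abel
      _ = 0 := by rw [h13]; abel
  exact hnc ⟨φ 0, fun x => by rw [hφx x, hc00, smul_zero, add_zero]⟩

end PartOne
section Final

variable {d b : ℕ} {φ : ℝ → Ed d}

lemma det_expand {R : ℕ} (M : Matrix (Fin R) (Fin R) ℝ) :
    M.det = ∑ σ : Equiv.Perm (Fin R), ((Equiv.Perm.sign σ : ℤ):ℝ) * ∏ s, M (σ s) s := by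
  rw [Matrix.det_apply]
  exact Finset.sum_congr rfl fun σ _ => by rw [Units.smul_def, zsmul_eq_mul]

lemma exists_indep_family' (S : Set (Ed d)) (R : ℕ)
    (hR : Module.finrank ℝ (Submodule.span ℝ S) = R) :
    ∃ v : Fin R → Ed d, (∀ s, v s ∈ S) ∧ LinearIndependent ℝ v := by
  subst hR
  exact exists_indep_family S

lemma rk_le_d (lam : ℝ) : rk d b lam φ ≤ d :=
  le_trans (Submodule.finrank_le _) (le_of_eq finrank_euclideanSpace_fin)

lemma exists_lamstar (hb : 2 ≤ b) :
    ∃ lam0 ∈ Set.Ioo (1/(b:ℝ)) 1, ∀ lam ∈ Set.Ioo (1/(b:ℝ)) 1,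
      rk d b lam φ ≤ rk d b lam0 φ := by
  have hb2 : (2:ℝ) ≤ (b:ℝ) := by exact_mod_cast hb
  have hb0 : (0:ℝ) < (b:ℝ) := by linarith
  have hlt : 1/(b:ℝ) < 1 := by rw [div_lt_one hb0]; linarith
  have hIoo : (Set.Ioo (1/(b:ℝ)) 1).Nonempty :=
    ⟨(1/(b:ℝ) + 1)/2, by rw [Set.mem_Ioo]; constructor <;> linarith⟩
  set Sv : Set ℕ := (fun lam => rk d b lam φ) '' (Set.Ioo (1/(b:ℝ)) 1) with hSv
  have hSsub : Sv ⊆ Set.Iic d := by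
    rintro n ⟨lam, _, rfl⟩
    exact rk_le_d lam
  have hSfin : Sv.Finite := Set.Finite.subset (Set.finite_Iic d) hSsub
  have hSne : Sv.Nonempty := hIoo.image _
  obtain ⟨lam0, hlam0, hval⟩ := hSne.csSup_mem hSfin
  have hval' : rk d b lam0 φ = sSup Sv := hval
  refine ⟨lam0, hlam0, fun lam hlam => ?_⟩
  rw [hval']
  exact le_csSup hSfin.bddAbove ⟨lam, hlam, rfl⟩

lemma bad_set_finite (hb : 2 ≤ b) (hper : Function.Periodic φ 1) (hC3 : ContDiff ℝ 3 φ)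
    {lam0 : ℝ} (hlam0 : lam0 ∈ Set.Ioo (1/(b:ℝ)) 1)
    (hmax : ∀ lam ∈ Set.Ioo (1/(b:ℝ)) 1, rk d b lam φ ≤ rk d b lam0 φ) :
    {lam ∈ Set.Ioo (1/(b:ℝ)) 1 | rk d b lam φ < rk d b lam0 φ}.Finite := by
  obtain ⟨hdiff, hc1, ⟨M, hM0, hM⟩, ⟨M2, hM20, hM2⟩⟩ := deriv_facts hper hC3
  have hb2 : (2:ℝ) ≤ (b:ℝ) := by exact_mod_cast hb
  have hb0 : (0:ℝ) < (b:ℝ) := by linarith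
  set R := rk d b lam0 φ with hRdef
  -- independent family of eventually-agreeing differences at lam0
  have hfr : Module.finrank ℝ (Submodule.span ℝ (S0gen d b lam0 φ)) = R := by
    rw [← span_S0_eq hM hb hlam0]
    rfl
  obtain ⟨v, hvmem, hvli⟩ := exists_indep_family' (S0gen d b lam0 φ) R hfr
  choose X I J K hag hvs using hvmem
  -- the scalar coefficient bounds
  set θ : ℝ≥0 := (b:ℝ≥0)⁻¹ with hθ
  have hbnn : (0:ℝ≥0) < (b:ℝ≥0) := by
    have h : (0:ℝ) < ((b:ℝ≥0):ℝ) := by push_cast; linarith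
    exact_mod_cast h
  have hθpos : 0 < θ := by rw [hθ]; exact inv_pos.2 hbnn
  have hrad : ((θ⁻¹:ℝ≥0):ℝ) = (b:ℝ) := by rw [hθ, inv_inv]; simp
  have hbound : ∀ (s : Fin R) (e : Fin d) (n : ℕ),
      |cfun d b φ (X s) (I s) (J s) e n| ≤ (M2 * (b:ℝ)^(K s+1) * (b:ℝ)⁻¹) * ((θ:ℝ≥0):ℝ)^n :=
    fun s e n => cfun_bound hb hM20 hM2 (hag s) (X s) e n
  -- the analytic function ψ
  set Fc : Fin R → Fin d → ℝ → ℝ :=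
    fun s e γ => γ * pser (cfun d b φ (X s) (I s) (J s) e) γ with hFc
  set ψ : ℝ → ℝ := fun γ => ∑ σ : Equiv.Perm (Fin R),
    ((Equiv.Perm.sign σ : ℤ):ℝ) * ∏ s, (∑ e, Fc (σ s) e γ * Fc s e γ) with hψdef
  have hFanal : ∀ (s : Fin R) (e : Fin d),
      AnalyticOnNhd ℝ (Fc s e) (Metric.ball (0:ℝ) ((θ⁻¹:ℝ≥0):ℝ)) :=
    fun s e => analyticOnNhd_id.mul (analyticOnNhd_pser hθpos (hbound s e))
  have hψanal : AnalyticOnNhd ℝ ψ (Metric.ball (0:ℝ) ((θ⁻¹:ℝ≥0):ℝ)) := by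
    refine Finset.analyticOnNhd_fun_sum _ fun σ _ => analyticOnNhd_const.mul ?_
    refine Finset.analyticOnNhd_fun_prod _ fun s _ => ?_
    exact Finset.analyticOnNhd_fun_sum _ fun e _ => (hFanal (σ s) e).mul (hFanal s e)
  -- value of ψ at parameters of the family
  have hψval : ∀ lam ∈ Set.Ioo (1/(b:ℝ)) 1, ψ (1/((b:ℝ)*lam)) =
      (Matrix.of fun a c : Fin R =>
        (inner ℝ (Yf b lam φ (X a) (I a) - Yf b lam φ (X a) (J a))
          (Yf b lam φ (X c) (I c) - Yf b lam φ (X c) (J c)) : ℝ)).det := by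
    intro lam hlam
    rw [det_expand]
    refine Finset.sum_congr rfl fun σ _ => ?_
    congr 1
    refine Finset.prod_congr rfl fun s _ => ?_
    rw [Matrix.of_apply, PiLp.inner_apply]
    refine Finset.sum_congr rfl fun e _ => ?_
    have hcoord : ∀ a : Fin R,
        (Yf b lam φ (X a) (I a) - Yf b lam φ (X a) (J a)) e = -(Fc a e (1/((b:ℝ)*lam))) :=
      fun a => Yf_coord hM hb hlam (X a) (I a) (J a) e
    rw [RCLike.inner_apply, conj_trivial, hcoord, hcoord, neg_mul_neg]
    exact mul_comm _ _
  -- ψ is nonzero at γ0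
  obtain ⟨hg0, hg1⟩ := gam_facts hb hlam0
  have hγ0mem : (1/((b:ℝ)*lam0)) ∈ Metric.ball (0:ℝ) ((θ⁻¹:ℝ≥0):ℝ) := by
    rw [hrad, Metric.mem_ball, dist_zero_right, Real.norm_eq_abs, abs_of_pos hg0]
    linarith
  have hψne : ψ (1/((b:ℝ)*lam0)) ≠ 0 := by
    rw [hψval lam0 hlam0]
    have hvs' : (fun a : Fin R => Yf b lam0 φ (X a) (I a) - Yf b lam0 φ (X a) (J a)) = v := by
      funext a
      exact (hvs a).symm
    rw [show (Matrix.of fun a c : Fin R =>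
        (inner ℝ (Yf b lam0 φ (X a) (I a) - Yf b lam0 φ (X a) (J a))
          (Yf b lam0 φ (X c) (I c) - Yf b lam0 φ (X c) (J c)) : ℝ))
        = (Matrix.of fun a c : Fin R => (inner ℝ (v a) (v c) : ℝ)) by rw [← hvs']]
    exact (gram_det_ne_zero_iff v).2 hvli
  -- finitely many zeros on the compact interval
  have hKs : Set.Icc (1/(b:ℝ)) 1 ⊆ Metric.ball (0:ℝ) ((θ⁻¹:ℝ≥0):ℝ) := by
    rw [hrad]
    intro γ hγ
    rw [Metric.mem_ball, dist_zero_right, Real.norm_eq_abs]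
    have h1 := hγ.1
    have h2 := hγ.2
    have h3 : (0:ℝ) < 1/(b:ℝ) := by positivity
    rw [abs_of_pos (by linarith)]
    linarith
  have hZfin : {γ ∈ Set.Icc (1/(b:ℝ)) 1 | ψ γ = 0}.Finite :=
    analytic_zeros_finite hψanal hγ0mem hψne isCompact_Icc hKs
  -- the bad set maps injectively into the zero set
  set g : ℝ → ℝ := fun lam => 1/((b:ℝ)*lam) with hg
  have himg : g '' {lam ∈ Set.Ioo (1/(b:ℝ)) 1 | rk d b lam φ < R}
      ⊆ {γ ∈ Set.Icc (1/(b:ℝ)) 1 | ψ γ = 0} := by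
    rintro γ ⟨lam, ⟨hlam, hrk⟩, rfl⟩
    obtain ⟨hl0, hl1⟩ := gam_facts hb hlam
    constructor
    · exact ⟨le_of_lt (by
        have h4 := hlam.2
        have h5 := hlam.1
        have h6 : (0:ℝ) < lam := lt_trans (by positivity) h5
        rw [hg, div_lt_div_iff₀ hb0 (by positivity)]
        nlinarith), le_of_lt hl1⟩
    · rw [hg, hψval lam hlam]
      have hdep : ¬ LinearIndependent ℝ
          (fun s : Fin R => Yf b lam φ (X s) (I s) - Yf b lam φ (X s) (J s)) := by
        refine not_li_of_finrank_lt (W := Sspan d b lam φ)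
          (fun s => sgen_mem (X s) (I s) (J s)) ?_
        exact hrk
      by_contra hne
      exact hdep ((gram_det_ne_zero_iff _).1 hne)
  have hinj : Set.InjOn g {lam ∈ Set.Ioo (1/(b:ℝ)) 1 | rk d b lam φ < R} := by
    rintro l1 ⟨hl1, _⟩ l2 ⟨hl2, _⟩ heq
    have h1 : (0:ℝ) < l1 := lt_trans (by positivity) hl1.1
    have h2 : (0:ℝ) < l2 := lt_trans (by positivity) hl2.1
    rw [hg] at heq
    field_simp at heq
    linarith
  exact Set.Finite.of_finite_image (hZfin.subset himg) hinj

end Final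
/-- Theorem B: for an integer `b ≥ 2` and a non-constant `ℤ`-periodic `C³` function
`φ : ℝ → ℝ^d`, one has `p'(φ,b) < d`, and there are at most finitely many `λ ∈ (1/b,1)`
with `q'(φ,λ,b) > p'(φ,b)`. -/
theorem theorem_B (d b : ℕ) (hb : 2 ≤ b) (φ : ℝ → Ed d)
    (hper : Function.Periodic φ 1) (hC3 : ContDiff ℝ 3 φ)
    (hnc : ¬ ∃ c : Ed d, ∀ x : ℝ, φ x = c) :
    p'val d b φ < d ∧
    {lam ∈ Set.Ioo (1 / (b : ℝ)) 1 | p'val d b φ < q'val d b lam φ}.Finite := by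
  obtain ⟨hdiff, hc1, ⟨M, hM0, hM⟩, hLip⟩ := deriv_facts hper hC3
  obtain ⟨lam0, hlam0, hmax⟩ := exists_lamstar (φ := φ) hb
  set R := rk d b lam0 φ with hR
  have hq : ∀ lam ∈ Set.Ioo (1/(b:ℝ)) 1, q'val d b lam φ = d - rk d b lam φ :=
    fun lam hlam => q'val_eq hdiff hM hb hlam
  have hp : p'val d b φ = d - R := by
    have hmem : (d - R) ∈ {n | ∃ lam ∈ Set.Ioo (1/(b:ℝ)) 1, q'val d b lam φ = n} :=
      ⟨lam0, hlam0, hq lam0 hlam0⟩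
    refine le_antisymm (Nat.sInf_le hmem) (le_csInf ⟨_, hmem⟩ ?_)
    rintro n ⟨lam, hlam, rfl⟩
    rw [hq lam hlam]
    have h1 := hmax lam hlam
    omega
  obtain ⟨lam1, hlam1, hrk1⟩ := rk_pos hb hper hC3 hnc
  have hR1 : 1 ≤ R := le_trans (by omega : 1 ≤ rk d b lam1 φ) (hmax lam1 hlam1)
  have hRd : R ≤ d := rk_le_d lam0
  constructor
  · rw [hp]
    omega
  · refine Set.Finite.subset (bad_set_finite hb hper hC3 hlam0 hmax) ?_
    rintro lam ⟨hlam, hql⟩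
    refine ⟨hlam, ?_⟩
    rw [hp, hq lam hlam] at hql
    have h1 := hmax lam hlam
    have h2 := rk_le_d (φ := φ) (b := b) lam
    omega

end Weier
end
end

section
/- Let b ≥ 2 be an integer and let φ : ℝ → ℝ^d be a ℤ-periodic C^k function, where k ∈ {5, 6, …, ∞, ω}. Then for every λ ∈ (1/b, 1), q(φ,λ,b) = q′(φ,λ,b). -/
open MeasureTheory Filter Metric Set Function
open scoped ENNReal NNReal Topology

noncomputable section

namespace Weier

/-! ### Auxiliary lemmas for the proof of `q_eq_q'` -/

section AuxLemmas

variable {d : ℕ}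

/-- A continuous `ℤ`-periodic function is bounded. -/
lemma bound_of_periodic {f : ℝ → Ed d} (hc : Continuous f) (hp : Function.Periodic f 1) :
    ∃ M : ℝ, 0 ≤ M ∧ ∀ x, ‖f x‖ ≤ M := by
  obtain ⟨M, hM⟩ :=
    (isCompact_Icc (a := (0:ℝ)) (b := 1)).exists_bound_of_continuousOn hc.continuousOn
  refine ⟨max M 0, le_max_right _ _, fun x => ?_⟩
  have h1 : f (x - (⌊x⌋ : ℝ) * 1) = f x := hp.sub_int_mul_eq ⌊x⌋
  rw [mul_one] at h1
  rw [← h1]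
  refine le_trans (hM _ ⟨?_, ?_⟩) (le_max_left _ _)
  · linarith [Int.floor_le x]
  · linarith [Int.lt_floor_add_one x]

lemma summable_geom_smul_s7 {r : ℝ} (h0 : 0 ≤ r) (h1 : r < 1) {g : ℕ → Ed d} {M : ℝ}
    (hM : ∀ n, ‖g n‖ ≤ M) : Summable fun n => r ^ n • g n := by
  refine Summable.of_norm_bounded (g := fun n => M * r ^ n)
    ((summable_geometric_of_lt_one h0 h1).mul_left M) fun n => ?_
  rw [norm_smul, norm_pow, Real.norm_eq_abs, abs_of_nonneg h0]
  exact (mul_le_mul_of_nonneg_left (hM n) (pow_nonneg h0 n)).trans_eq (mul_comm _ _)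

lemma summable_aux (C : ℝ) {r : ℝ} (h0 : 0 ≤ r) (h1 : r < 1) :
    Summable fun n : ℕ => C * r ^ (n + 1) := by
  have h := (summable_geometric_of_lt_one h0 h1).mul_left (C * r)
  exact h.congr fun n => by rw [pow_succ']; ring

/-- Transfer of a.e. statements along affine maps of `ℝ`. -/
lemma ae_affine {B c : ℝ} (hB : B ≠ 0) {P : ℝ → Prop} (h : ∀ᵐ y : ℝ, P y) :
    ∀ᵐ x : ℝ, P ((x + c) / B) := by
  rw [MeasureTheory.ae_iff] at h ⊢
  have hset : {x : ℝ | ¬P ((x + c) / B)} =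
      (fun x : ℝ => B⁻¹ * x) ⁻¹' ((fun y : ℝ => y + c / B) ⁻¹' {y : ℝ | ¬P y}) := by
    ext x
    simp only [Set.mem_preimage, Set.mem_setOf_eq]
    rw [show B⁻¹ * x + c / B = (x + c) / B by field_simp]
  rw [hset, Real.volume_preimage_mul_left (inv_ne_zero hB),
    measure_preimage_add_right volume (c / B) _, h, mul_zero]

end AuxLemmas

section Main

variable {d b : ℕ} {lam : ℝ} {ψ : ℝ → Ed d}

/-- The self-affinity relation for `W`:
`W((y+j)/b) = ψ((y+j)/b) + λ W(y)` for every digit `j ∈ ℕ`. -/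
lemma wf_step (hb : 2 ≤ b) (hlam0 : 0 < lam) (h2 : lam < 1) {M : ℝ}
    (hM : ∀ x, ‖ψ x‖ ≤ M) (hp : Function.Periodic ψ 1) (j : ℕ) (y : ℝ) :
    Wf b lam ψ ((y + (j : ℝ)) / (b : ℝ)) =
      ψ ((y + (j : ℝ)) / (b : ℝ)) + lam • Wf b lam ψ y := by
  have hbne : (b : ℝ) ≠ 0 := Nat.cast_ne_zero.mpr (by omega)
  have hsum : ∀ z : ℝ, Summable fun n => lam ^ n • ψ ((b : ℝ) ^ n * z) :=
    fun z => summable_geom_smul_s7 hlam0.le h2 fun n => hM _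
  simp only [Wf]
  rw [Summable.tsum_eq_zero_add (hsum _)]
  congr 1
  · simp
  · rw [← Summable.tsum_const_smul lam (hsum y)]
    refine tsum_congr fun n => ?_
    have hpt : (b : ℝ) ^ (n + 1) * ((y + (j : ℝ)) / (b : ℝ))
        = (b : ℝ) ^ n * y + ((j * b ^ n : ℕ) : ℝ) * 1 := by
      push_cast
      field_simp
      ring
    rw [hpt, (hp.nat_mul (j * b ^ n)) ((b : ℝ) ^ n * y), pow_succ', mul_smul]

/-- Direction "Lipschitz ⟹ (H*)". -/
theorem lip_to_hstar (hb : 2 ≤ b) (h1 : 1 / (b : ℝ) < lam) (h2 : lam < 1)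
    (hψ : ContDiff ℝ 1 ψ) (hp : Function.Periodic ψ 1)
    {K : ℝ≥0} (hLip : LipschitzWith K (Wf b lam ψ)) : CondHstar b lam ψ := by
  have hb2 : (2 : ℝ) ≤ (b : ℝ) := by exact_mod_cast hb
  have hb0 : (0 : ℝ) < b := by linarith
  have hbne : (b : ℝ) ≠ 0 := ne_of_gt hb0
  have hlam0 : (0 : ℝ) < lam := lt_trans (by positivity) h1
  have hbl : (1 : ℝ) < (b : ℝ) * lam := by
    have h3 := (div_lt_iff₀ hb0).mp h1
    calc (1:ℝ) < lam * b := h3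
      _ = (b : ℝ) * lam := mul_comm _ _
  set γ : ℝ := 1 / ((b : ℝ) * lam) with hγdef
  have hγ0 : 0 < γ := by rw [hγdef]; positivity
  have hγ1 : γ < 1 := by rw [hγdef, div_lt_one (by linarith)]; exact hbl
  obtain ⟨Mψ, hMψ0, hMψ⟩ := bound_of_periodic hψ.continuous hp
  have hdc : Continuous (deriv ψ) := hψ.continuous_deriv le_rfl
  have hdp : Function.Periodic (deriv ψ) 1 := by
    intro x
    have h3 : deriv (fun y => ψ (y + 1)) x = deriv ψ (x + 1) := deriv_comp_add_const ψ 1 x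
    rw [← h3, hp.funext]
  obtain ⟨Md, hMd0, hMd⟩ := bound_of_periodic hdc hdp
  set W := Wf b lam ψ with hWdef
  have hψd : Differentiable ℝ ψ := hψ.differentiable one_ne_zero
  -- one-step derivative identity
  have dstep : ∀ (jj : ℕ) (z : ℝ), DifferentiableAt ℝ W z →
      DifferentiableAt ℝ W ((z + (jj : ℝ)) / (b : ℝ)) →
      deriv W z = γ • deriv W ((z + (jj : ℝ)) / (b : ℝ))
        - γ • deriv ψ ((z + (jj : ℝ)) / (b : ℝ)) := by
    intro jj z hz hz'
    have haff : HasDerivAt (fun y : ℝ => (y + (jj : ℝ)) / (b : ℝ)) (1 / (b : ℝ)) z := by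
      simpa using ((hasDerivAt_id z).add_const (jj : ℝ)).div_const (b : ℝ)
    have hF : HasDerivAt (fun y : ℝ => W ((y + (jj : ℝ)) / (b : ℝ)))
        ((1 / (b : ℝ)) • deriv W ((z + (jj : ℝ)) / (b : ℝ))) z :=
      HasDerivAt.scomp_of_eq z hz'.hasDerivAt haff rfl
    have hG : HasDerivAt (fun y : ℝ => ψ ((y + (jj : ℝ)) / (b : ℝ)) + lam • W y)
        ((1 / (b : ℝ)) • deriv ψ ((z + (jj : ℝ)) / (b : ℝ)) + lam • deriv W z) z :=
      (HasDerivAt.scomp_of_eq z (hψd _).hasDerivAt haff rfl).add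
        ((hz.hasDerivAt).const_smul lam)
    have heq : (fun y : ℝ => W ((y + (jj : ℝ)) / (b : ℝ)))
        = fun y => ψ ((y + (jj : ℝ)) / (b : ℝ)) + lam • W y :=
      funext fun y => wf_step hb hlam0 h2 hMψ hp jj y
    rw [heq] at hF
    have hud := hF.unique hG
    have h3 : lam • deriv W z = (1 / (b : ℝ)) • deriv W ((z + (jj : ℝ)) / (b : ℝ))
        - (1 / (b : ℝ)) • deriv ψ ((z + (jj : ℝ)) / (b : ℝ)) := by
      rw [hud]; abel
    have h4 := congrArg (fun v : Ed d => lam⁻¹ • v) h3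
    simp only [smul_smul, inv_mul_cancel₀ (ne_of_gt hlam0), one_smul, smul_sub] at h4
    rw [h4]
    have hsc : lam⁻¹ * (1 / (b : ℝ)) = γ := by
      rw [hγdef, one_div, one_div, mul_inv_rev]
    rw [hsc]
  -- almost-everywhere identification of Y with the derivative of W
  have key : ∀ jseq : ℕ → Fin b, ∀ᵐ x : ℝ, Yf b lam ψ x jseq = deriv W x := by
    intro j
    set c : ℕ → ℝ := fun n => ∑ k ∈ Finset.range n, ((j k : ℕ) : ℝ) * (b : ℝ) ^ k with hc
    set q : ℕ → ℝ → ℝ := fun n x => (x + c n) / (b : ℝ) ^ n with hq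
    have hq0 : ∀ x, q 0 x = x := by intro x; simp [hq, hc]
    have hqsucc : ∀ (n : ℕ) (x : ℝ), (q n x + ((j n : ℕ) : ℝ)) / (b : ℝ) = q (n + 1) x := by
      intro n x
      simp only [hq, hc, Finset.sum_range_succ]
      field_simp
      ring
    have hae : ∀ᵐ y : ℝ, DifferentiableAt ℝ W y := hLip.ae_differentiableAt
    have hgood : ∀ᵐ x : ℝ, ∀ n, DifferentiableAt ℝ W (q n x) := by
      rw [MeasureTheory.ae_all_iff]
      intro n
      have := ae_affine (B := (b : ℝ) ^ n) (c := c n) (pow_ne_zero n hbne) hae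
      simpa only [hq] using this
    filter_upwards [hgood] with x hx
    have hx0 : DifferentiableAt ℝ W x := by have h5 := hx 0; rwa [hq0] at h5
    have chain : ∀ n : ℕ, deriv W x = γ ^ n • deriv W (q n x)
        - ∑ m ∈ Finset.range n, γ ^ (m + 1) • deriv ψ (q (m + 1) x) := by
      intro n
      induction n with
      | zero => simp [hq0]
      | succ n ih =>
        have hstep1 := dstep ((j n : ℕ)) (q n x) (hx n)
          (by rw [hqsucc n x]; exact hx (n + 1))
        rw [hqsucc n x] at hstep1
        rw [ih, hstep1, Finset.sum_range_succ, smul_sub, smul_smul, smul_smul, ← pow_succ]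
        abel
    have hbound : ∀ y : ℝ, ‖deriv W y‖ ≤ (K : ℝ) := fun y => norm_deriv_le_of_lipschitz hLip
    have hT1 : Filter.Tendsto (fun n : ℕ => γ ^ n • deriv W (q n x)) Filter.atTop (𝓝 0) := by
      refine squeeze_zero_norm (a := fun n => γ ^ n * (K : ℝ)) (fun n => ?_) ?_
      · rw [norm_smul, norm_pow, Real.norm_eq_abs, abs_of_nonneg hγ0.le]
        exact mul_le_mul_of_nonneg_left (hbound _) (pow_nonneg hγ0.le n)
      · simpa using (tendsto_pow_atTop_nhds_zero_of_lt_one hγ0.le hγ1).mul_const (K : ℝ)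
    have hsummand : Summable fun m : ℕ => γ ^ (m + 1) • deriv ψ (q (m + 1) x) := by
      refine Summable.of_norm_bounded (g := fun m => Md * γ ^ (m + 1))
        (summable_aux Md hγ0.le hγ1) fun m => ?_
      rw [norm_smul, norm_pow, Real.norm_eq_abs, abs_of_nonneg hγ0.le]
      exact (mul_le_mul_of_nonneg_left (hMd _) (pow_nonneg hγ0.le _)).trans_eq (mul_comm _ _)
    have hT2 := hsummand.hasSum.tendsto_sum_nat
    have hT3 : Filter.Tendsto
        (fun n : ℕ => ∑ m ∈ Finset.range n, γ ^ (m + 1) • deriv ψ (q (m + 1) x))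
        Filter.atTop (𝓝 (0 - deriv W x)) := by
      have h6 : (fun n : ℕ => ∑ m ∈ Finset.range n, γ ^ (m + 1) • deriv ψ (q (m + 1) x))
          = fun n => γ ^ n • deriv W (q n x) - deriv W x := by
        funext n
        have h5 := chain n
        rw [h5]
        abel
      rw [h6]
      exact hT1.sub_const _
    have htsum : ∑' m : ℕ, γ ^ (m + 1) • deriv ψ (q (m + 1) x) = 0 - deriv W x :=
      tendsto_nhds_unique hT2 hT3
    have hYf : Yf b lam ψ x j = -∑' m : ℕ, γ ^ (m + 1) • deriv ψ (q (m + 1) x) := by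
      simp only [Yf, hq, hc, hγdef]
    rw [hYf, htsum]
    simp
  -- continuity of Y in x
  have ycont : ∀ jseq : ℕ → Fin b, Continuous fun x => Yf b lam ψ x jseq := by
    intro j
    simp only [Yf]
    refine Continuous.neg (continuous_tsum (fun n => ?_) (summable_aux Md hγ0.le hγ1)
      fun n x => ?_)
    · exact (hdc.comp ((continuous_id.add continuous_const).div_const _)).const_smul (γ ^ (n + 1))
    · rw [← hγdef, norm_smul, norm_pow, Real.norm_eq_abs, abs_of_nonneg hγ0.le]
      exact (mul_le_mul_of_nonneg_left (hMd _) (pow_nonneg hγ0.le _)).trans_eq (mul_comm _ _)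
  intro i j x
  have h5 : (fun x => Yf b lam ψ x i) =ᵐ[volume] fun x => Yf b lam ψ x j := by
    filter_upwards [key i, key j] with y e1 e2
    rw [e1, e2]
  have h6 := ((ycont i).ae_eq_iff_eq volume (ycont j)).mp h5
  exact congrFun h6 x

/-- Direction "(H*) ⟹ Lipschitz". -/
theorem hstar_to_lip (hb : 2 ≤ b) (h1 : 1 / (b : ℝ) < lam) (h2 : lam < 1)
    (hψ : ContDiff ℝ 1 ψ) (hp : Function.Periodic ψ 1) (h : CondHstar b lam ψ) :
    ∃ K : ℝ≥0, LipschitzWith K (Wf b lam ψ) := by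
  have hb2 : (2 : ℝ) ≤ (b : ℝ) := by exact_mod_cast hb
  have hb0 : (0 : ℝ) < b := by linarith
  have hbne : (b : ℝ) ≠ 0 := ne_of_gt hb0
  have hlam0 : (0 : ℝ) < lam := lt_trans (by positivity) h1
  have hbl : (1 : ℝ) < (b : ℝ) * lam := by
    have h3 := (div_lt_iff₀ hb0).mp h1
    calc (1:ℝ) < lam * b := h3
      _ = (b : ℝ) * lam := mul_comm _ _
  set γ : ℝ := 1 / ((b : ℝ) * lam) with hγdef
  have hγ0 : 0 < γ := by rw [hγdef]; positivity
  have hγ1 : γ < 1 := by rw [hγdef, div_lt_one (by linarith)]; exact hbl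
  obtain ⟨Mψ, hMψ0, hMψ⟩ := bound_of_periodic hψ.continuous hp
  have hdc : Continuous (deriv ψ) := hψ.continuous_deriv le_rfl
  have hdp : Function.Periodic (deriv ψ) 1 := by
    intro x
    have h3 : deriv (fun y => ψ (y + 1)) x = deriv ψ (x + 1) := deriv_comp_add_const ψ 1 x
    rw [← h3, hp.funext]
  obtain ⟨Md, hMd0, hMd⟩ := bound_of_periodic hdc hdp
  have hψd : Differentiable ℝ ψ := hψ.differentiable one_ne_zero
  have hb0' : 0 < b := by omega
  have hb1' : 1 < b := by omega
  set z : ℕ → Fin b := fun _ => ⟨0, hb0'⟩ with hz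
  set o : ℕ → Fin b := fun k => if k = 0 then ⟨1, hb1'⟩ else ⟨0, hb0'⟩ with ho
  set Y : ℝ → Ed d := fun x => Yf b lam ψ x z with hYdef
  have hsumy : ∀ x : ℝ, Summable fun n : ℕ => γ ^ (n + 1) • deriv ψ (x / (b : ℝ) ^ (n + 1)) := by
    intro x
    refine Summable.of_norm_bounded (g := fun n => Md * γ ^ (n + 1))
      (summable_aux Md hγ0.le hγ1) fun n => ?_
    rw [norm_smul, norm_pow, Real.norm_eq_abs, abs_of_nonneg hγ0.le]
    exact (mul_le_mul_of_nonneg_left (hMd _) (pow_nonneg hγ0.le _)).trans_eq (mul_comm _ _)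
  have hYform : ∀ x : ℝ, Y x = -∑' n : ℕ, γ ^ (n + 1) • deriv ψ (x / (b : ℝ) ^ (n + 1)) := by
    intro x
    simp only [hYdef, Yf]
    congr 1
    refine tsum_congr fun n => ?_
    have harg : (x + ∑ k ∈ Finset.range (n + 1), ((z k : ℕ) : ℝ) * (b : ℝ) ^ k) = x := by
      simp [hz]
    rw [harg, ← hγdef]
  have hYper : Function.Periodic Y 1 := by
    intro x
    have e1 := h z o x
    have e2 : Yf b lam ψ x o = Y (x + 1) := by
      rw [hYform (x + 1)]
      simp only [Yf]
      congr 1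
      refine tsum_congr fun n => ?_
      have harg : (x + ∑ k ∈ Finset.range (n + 1), ((o k : ℕ) : ℝ) * (b : ℝ) ^ k) = x + 1 := by
        rw [Finset.sum_eq_single 0]
        · simp [ho]
        · intro k _ hk0; simp [ho, hk0]
        · intro h0; exact absurd (Finset.mem_range.mpr (Nat.succ_pos n)) h0
      rw [harg, ← hγdef]
    rw [← e2, ← e1]
  have hYcont : Continuous Y := by
    have hc1 : Continuous fun x => ∑' n : ℕ, γ ^ (n + 1) • deriv ψ (x / (b : ℝ) ^ (n + 1)) := by
      refine continuous_tsum (fun n => ?_) (summable_aux Md hγ0.le hγ1) fun n x => ?_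
      · exact (hdc.comp (continuous_id.div_const _)).const_smul (γ ^ (n + 1))
      · rw [norm_smul, norm_pow, Real.norm_eq_abs, abs_of_nonneg hγ0.le]
        exact (mul_le_mul_of_nonneg_left (hMd _) (pow_nonneg hγ0.le _)).trans_eq (mul_comm _ _)
    have hYeq : Y = fun x => -∑' n : ℕ, γ ^ (n + 1) • deriv ψ (x / (b : ℝ) ^ (n + 1)) :=
      funext hYform
    rw [hYeq]
    exact hc1.neg
  obtain ⟨MY, hMY0, hMY⟩ := bound_of_periodic hYcont hYper
  -- the cohomological equation for ψ'
  have hfe : ∀ y : ℝ, deriv ψ y = Y y - ((b : ℝ) * lam) • Y ((b : ℝ) * y) := by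
    intro y
    rw [hYform y, hYform ((b : ℝ) * y)]
    have hby : (∑' n : ℕ, γ ^ (n + 1) • deriv ψ (((b : ℝ) * y) / (b : ℝ) ^ (n + 1)))
        = γ • deriv ψ y + γ • ∑' n : ℕ, γ ^ (n + 1) • deriv ψ (y / (b : ℝ) ^ (n + 1)) := by
      rw [Summable.tsum_eq_zero_add (hsumy ((b : ℝ) * y))]
      congr 1
      · simp only [zero_add, pow_one]
        congr 1
        rw [mul_comm, mul_div_assoc, div_self hbne, mul_one]
      · rw [← Summable.tsum_const_smul γ (hsumy y)]
        refine tsum_congr fun n => ?_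
        rw [smul_smul, ← pow_succ']
        congr 1
        rw [show ((b : ℝ) * y) / (b : ℝ) ^ (n + 1 + 1) = y / (b : ℝ) ^ (n + 1) by
          rw [pow_succ', mul_div_mul_left _ _ hbne]]
    rw [hby]
    have hbg : ((b : ℝ) * lam) * γ = 1 := by
      rw [hγdef]
      field_simp
    simp only [smul_neg, smul_add, smul_smul, hbg, one_smul]
    abel
  -- the primitive Γ of Y
  set Γ : ℝ → Ed d := fun x => ∫ t in (0:ℝ)..x, Y t with hΓdef
  have hYint : ∀ u v : ℝ, IntervalIntegrable Y volume u v :=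
    fun u v => hYcont.intervalIntegrable u v
  have hΓdiff : ∀ u v : ℝ, Γ v - Γ u = ∫ t in u..v, Y t := by
    intro u v
    have h3 := intervalIntegral.integral_add_adjacent_intervals (hYint 0 u) (hYint u v)
    simp only [hΓdef]
    rw [← h3]
    abel
  have hΓnorm : ∀ u v : ℝ, ‖Γ v - Γ u‖ ≤ MY * |v - u| := by
    intro u v
    rw [hΓdiff u v]
    exact intervalIntegral.norm_integral_le_of_norm_le_const fun t _ => hMY t
  -- FTC for ψ
  have hFTC : ∀ x : ℝ, ∫ t in (0:ℝ)..x, deriv ψ t = ψ x - ψ 0 := fun x =>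
    intervalIntegral.integral_deriv_eq_sub (fun t _ => hψd t) (hdc.intervalIntegrable 0 x)
  have hψΓ : ∀ x : ℝ, ψ x - ψ 0 = Γ x - lam • Γ ((b : ℝ) * x) := by
    intro x
    have hint2 : IntervalIntegrable (fun t => ((b : ℝ) * lam) • Y ((b : ℝ) * t)) volume 0 x :=
      ((hYcont.comp (continuous_const.mul continuous_id)).const_smul ((b : ℝ) * lam)).intervalIntegrable 0 x
    have e1 : ∫ t in (0:ℝ)..x, deriv ψ t
        = (∫ t in (0:ℝ)..x, Y t) - ∫ t in (0:ℝ)..x, ((b : ℝ) * lam) • Y ((b : ℝ) * t) := by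
      rw [← intervalIntegral.integral_sub (hYint 0 x) hint2]
      exact intervalIntegral.integral_congr fun t _ => hfe t
    have e2 : ∫ t in (0:ℝ)..x, Y ((b : ℝ) * t)
        = (b : ℝ)⁻¹ • ∫ t in (0:ℝ)..((b : ℝ) * x), Y t := by
      have h3 := intervalIntegral.integral_comp_mul_left (a := (0:ℝ)) (b := x) Y hbne
      simpa using h3
    have e3 : ∫ t in (0:ℝ)..x, ((b : ℝ) * lam) • Y ((b : ℝ) * t)
        = lam • ∫ t in (0:ℝ)..((b : ℝ) * x), Y t := by
      rw [intervalIntegral.integral_smul, e2, smul_smul,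
        show ((b : ℝ) * lam) * (b : ℝ)⁻¹ = lam by
          rw [mul_comm (b : ℝ) lam, mul_assoc, mul_inv_cancel₀ hbne, mul_one]]
    calc ψ x - ψ 0 = ∫ t in (0:ℝ)..x, deriv ψ t := (hFTC x).symm
      _ = (∫ t in (0:ℝ)..x, Y t) - ∫ t in (0:ℝ)..x, ((b : ℝ) * lam) • Y ((b : ℝ) * t) := e1
      _ = (∫ t in (0:ℝ)..x, Y t) - lam • ∫ t in (0:ℝ)..((b : ℝ) * x), Y t := by rw [e3]
      _ = Γ x - lam • Γ ((b : ℝ) * x) := rfl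
  -- the mean of Y vanishes
  set A : Ed d := ∫ t in (0:ℝ)..(1:ℝ), Y t with hAdef
  have hΓshift : ∀ x : ℝ, Γ (x + 1) - Γ x = A := by
    intro x
    rw [hΓdiff x (x + 1), hAdef]
    simpa using hYper.intervalIntegral_add_eq x 0
  set Γ₀ : ℝ → Ed d := fun x => Γ x - x • A with hΓ₀def
  have hΓ₀per : Function.Periodic Γ₀ 1 := by
    intro x
    simp only [hΓ₀def]
    have e5 : Γ (x + 1) = Γ x + A := by rw [← hΓshift x]; abel
    rw [e5, add_smul, one_smul]
    abel
  have hΓcont : Continuous Γ := by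
    have hLipΓ : LipschitzWith (Real.toNNReal MY) Γ := by
      refine LipschitzWith.of_dist_le_mul fun u v => ?_
      rw [dist_eq_norm, Real.dist_eq, Real.coe_toNNReal MY hMY0]
      exact hΓnorm v u
    exact hLipΓ.continuous
  have hΓ₀cont : Continuous Γ₀ := hΓcont.sub (continuous_id.smul continuous_const)
  obtain ⟨MΓ, hMΓ0, hMΓ⟩ := bound_of_periodic hΓ₀cont hΓ₀per
  have hA0 : A = 0 := by
    by_contra hA0
    have hAn : 0 < ‖A‖ := norm_pos_iff.mpr hA0
    have hC0 : (0:ℝ) ≤ 2 * Mψ + 2 * MΓ := by linarith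
    have hkey : ∀ x : ℝ, ((b : ℝ) * lam - 1) * |x| * ‖A‖ ≤ 2 * Mψ + 2 * MΓ := by
      intro x
      have e6 : (x - (b : ℝ) * lam * x) • A
          = (ψ x - ψ 0) - Γ₀ x + lam • Γ₀ ((b : ℝ) * x) := by
        have e7 := hψΓ x
        have e8 : Γ x = Γ₀ x + x • A := by simp only [hΓ₀def]; abel
        have e9 : Γ ((b : ℝ) * x) = Γ₀ ((b : ℝ) * x) + ((b : ℝ) * x) • A := by
          simp only [hΓ₀def]; abel
        rw [e7, e8, e9]
        module
      have e10 : ‖(x - (b : ℝ) * lam * x) • A‖ = ((b : ℝ) * lam - 1) * |x| * ‖A‖ := by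
        rw [norm_smul, Real.norm_eq_abs,
          show x - (b : ℝ) * lam * x = -(((b : ℝ) * lam - 1) * x) by ring, abs_neg, abs_mul,
          abs_of_nonneg (by linarith : (0:ℝ) ≤ (b : ℝ) * lam - 1)]
      calc ((b : ℝ) * lam - 1) * |x| * ‖A‖ = ‖(x - (b : ℝ) * lam * x) • A‖ := e10.symm
        _ = ‖(ψ x - ψ 0) - Γ₀ x + lam • Γ₀ ((b : ℝ) * x)‖ := by rw [e6]
        _ ≤ ‖(ψ x - ψ 0) - Γ₀ x‖ + ‖lam • Γ₀ ((b : ℝ) * x)‖ := norm_add_le _ _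
        _ ≤ (‖ψ x - ψ 0‖ + ‖Γ₀ x‖) + ‖lam • Γ₀ ((b : ℝ) * x)‖ := by
            gcongr
            exact norm_sub_le _ _
        _ ≤ ((‖ψ x‖ + ‖ψ 0‖) + ‖Γ₀ x‖) + ‖lam • Γ₀ ((b : ℝ) * x)‖ := by
            gcongr
            exact norm_sub_le _ _
        _ ≤ ((Mψ + Mψ) + MΓ) + MΓ := by
            gcongr
            · exact hMψ x
            · exact hMψ 0
            · exact hMΓ x
            · rw [norm_smul, Real.norm_eq_abs, abs_of_nonneg hlam0.le]
              calc lam * ‖Γ₀ ((b : ℝ) * x)‖ ≤ 1 * MΓ := by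
                    exact mul_le_mul h2.le (hMΓ _) (norm_nonneg _) zero_le_one
                _ = MΓ := one_mul _
        _ = 2 * Mψ + 2 * MΓ := by ring
    have hden : (0:ℝ) < ((b : ℝ) * lam - 1) * ‖A‖ := mul_pos (by linarith) hAn
    set x0 : ℝ := (2 * Mψ + 2 * MΓ + 1) / (((b : ℝ) * lam - 1) * ‖A‖) with hx0def
    have hx0pos : 0 < x0 := by
      rw [hx0def]
      positivity
    have hx := hkey x0
    rw [abs_of_pos hx0pos] at hx
    have he : ((b : ℝ) * lam - 1) * x0 * ‖A‖ = 2 * Mψ + 2 * MΓ + 1 := by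
      rw [hx0def]
      have hne : (b : ℝ) * lam - 1 ≠ 0 := by linarith
      field_simp
    rw [he] at hx
    linarith
  have hΓbdd : ∀ x, ‖Γ x‖ ≤ MΓ := by
    intro x
    have h3 := hMΓ x
    rw [hΓ₀def] at h3
    simpa [hA0] using h3
  -- bound for W
  have hWbdd : ∀ x, ‖Wf b lam ψ x‖ ≤ Mψ * (1 - lam)⁻¹ := by
    intro x
    simp only [Wf]
    refine tsum_of_norm_bounded ((hasSum_geometric_of_lt_one hlam0.le h2).mul_left Mψ)
      fun n => ?_
    rw [norm_smul, norm_pow, Real.norm_eq_abs, abs_of_nonneg hlam0.le]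
    exact (mul_le_mul_of_nonneg_left (hMψ _) (pow_nonneg hlam0.le n)).trans_eq (mul_comm _ _)
  -- functional equation for W
  have hWfe : ∀ x : ℝ, Wf b lam ψ x = ψ x + lam • Wf b lam ψ ((b : ℝ) * x) := by
    intro x
    have h3 := wf_step (ψ := ψ) hb hlam0 h2 hMψ hp 0 ((b : ℝ) * x)
    have harg : (((b : ℝ) * x) + ((0:ℕ) : ℝ)) / (b : ℝ) = x := by
      push_cast
      rw [add_zero]
      field_simp
    rw [harg] at h3
    exact h3
  -- the difference G
  set c0 : Ed d := (1 - lam)⁻¹ • ψ 0 with hc0def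
  have h1l : (1:ℝ) - lam ≠ 0 := by linarith
  have hc0 : ψ 0 = (1 - lam) • c0 := by
    rw [hc0def, smul_smul, mul_inv_cancel₀ h1l, one_smul]
  set G : ℝ → Ed d := fun x => Wf b lam ψ x - Γ x - c0 with hGdef
  have hGfe : ∀ x : ℝ, G x = lam • G ((b : ℝ) * x) := by
    intro x
    simp only [hGdef]
    have h12 : ψ x = ψ 0 + Γ x - lam • Γ ((b : ℝ) * x) := by
      have h13 := hψΓ x
      rw [sub_eq_iff_eq_add] at h13
      rw [h13]
      abel
    rw [hWfe x, h12, hc0]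
    module
  have hCG : ∀ x, ‖G x‖ ≤ Mψ * (1 - lam)⁻¹ + MΓ + ‖c0‖ := by
    intro x
    simp only [hGdef]
    calc ‖Wf b lam ψ x - Γ x - c0‖ ≤ ‖Wf b lam ψ x - Γ x‖ + ‖c0‖ := norm_sub_le _ _
      _ ≤ (‖Wf b lam ψ x‖ + ‖Γ x‖) + ‖c0‖ := by
          gcongr
          exact norm_sub_le _ _
      _ ≤ (Mψ * (1 - lam)⁻¹ + MΓ) + ‖c0‖ := by
          gcongr
          · exact hWbdd x
          · exact hΓbdd x
  have hGiter : ∀ (n : ℕ) (x : ℝ), G x = lam ^ n • G ((b : ℝ) ^ n * x) := by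
    intro n
    induction n with
    | zero => intro x; simp
    | succ n ih =>
      intro x
      rw [ih x, hGfe ((b : ℝ) ^ n * x), smul_smul, ← pow_succ,
        show (b : ℝ) * ((b : ℝ) ^ n * x) = (b : ℝ) ^ (n + 1) * x by ring]
  have hGzero : ∀ x, G x = 0 := by
    intro x
    have hle : ∀ n : ℕ, ‖G x‖ ≤ lam ^ n * (Mψ * (1 - lam)⁻¹ + MΓ + ‖c0‖) := by
      intro n
      rw [hGiter n x, norm_smul, norm_pow, Real.norm_eq_abs, abs_of_nonneg hlam0.le]
      exact mul_le_mul_of_nonneg_left (hCG _) (pow_nonneg hlam0.le n)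
    have hlim : Filter.Tendsto (fun n : ℕ => lam ^ n * (Mψ * (1 - lam)⁻¹ + MΓ + ‖c0‖))
        Filter.atTop (𝓝 0) := by
      simpa using (tendsto_pow_atTop_nhds_zero_of_lt_one hlam0.le h2).mul_const _
    have h0 : ‖G x‖ ≤ 0 := ge_of_tendsto' hlim hle
    exact norm_le_zero_iff.mp h0
  have hWG : ∀ t : ℝ, Wf b lam ψ t = Γ t + c0 := by
    intro t
    have h3 := hGzero t
    simp only [hGdef] at h3
    rw [sub_sub, sub_eq_zero] at h3
    exact h3
  refine ⟨Real.toNNReal MY, LipschitzWith.of_dist_le_mul fun u v => ?_⟩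
  rw [dist_eq_norm, hWG u, hWG v, Real.coe_toNNReal MY hMY0, Real.dist_eq,
    show Γ u + c0 - (Γ v + c0) = Γ u - Γ v by abel]
  exact hΓnorm v u

end Main

/-- For `b ≥ 2` and a `ℤ`-periodic `C^k` function `φ : ℝ → ℝ^d` with `k ∈ {5,6,…,∞,ω}`,
one has `q(φ,λ,b) = q'(φ,λ,b)` for every `λ ∈ (1/b,1)`. -/
theorem q_eq_q' (d b : ℕ) (hb : 2 ≤ b) (φ : ℝ → Ed d)
    (hper : Function.Periodic φ 1) (k : WithTop ℕ∞) (hk : 5 ≤ k)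
    (hφ : ContDiff ℝ k φ) :
    ∀ lam ∈ Set.Ioo (1 / (b : ℝ)) 1, qval d b lam φ = q'val d b lam φ := by
  intro lam hlam
  obtain ⟨h1, h2⟩ := hlam
  have h15 : (1 : WithTop ℕ∞) ≤ 5 := by norm_num
  have hφ1 : ContDiff ℝ 1 φ := hφ.of_le (le_trans h15 hk)
  have hb2 : (2 : ℝ) ≤ (b : ℝ) := by exact_mod_cast hb
  have hb0 : (0 : ℝ) < b := by linarith
  have hlam0 : (0 : ℝ) < lam := lt_trans (by positivity) h1
  obtain ⟨Mφ, hMφ0, hMφ⟩ := bound_of_periodic hφ1.continuous hper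
  have hproj : ∀ (V : Submodule ℝ (Ed d)) (x : ℝ),
      projS V (Wf b lam φ x) = Wf b lam (fun t => projS V (φ t)) x := by
    intro V x
    have hsum : Summable fun n : ℕ => lam ^ n • φ ((b : ℝ) ^ n * x) :=
      summable_geom_smul_s7 hlam0.le h2 fun n => hMφ _
    calc projS V (Wf b lam φ x)
        = (V.subtypeL.comp V.orthogonalProjectionOnto) (∑' n : ℕ, lam ^ n • φ ((b : ℝ) ^ n * x)) :=
          rfl
      _ = ∑' n : ℕ, (V.subtypeL.comp V.orthogonalProjectionOnto) (lam ^ n • φ ((b : ℝ) ^ n * x)) :=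
          ContinuousLinearMap.map_tsum _ hsum
      _ = Wf b lam (fun t => projS V (φ t)) x := by
          refine tsum_congr fun n => ?_
          rw [ContinuousLinearMap.map_smul]
          rfl
  have hψV : ∀ V : Submodule ℝ (Ed d), ContDiff ℝ 1 fun x => projS V (φ x) :=
    fun V => (V.subtypeL.comp V.orthogonalProjectionOnto).contDiff.comp hφ1
  have hψper : ∀ V : Submodule ℝ (Ed d), Function.Periodic (fun x => projS V (φ x)) 1 := by
    intro V x
    show projS V (φ (x + 1)) = projS V (φ x)
    rw [hper x]
  unfold qval q'val
  congr 1
  ext n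
  simp only [Set.mem_setOf_eq]
  constructor
  · rintro ⟨V, hV, K, hK⟩
    refine ⟨V, hV, ?_⟩
    have heq : (fun x => projS V (Wf b lam φ x)) = Wf b lam fun t => projS V (φ t) :=
      funext (hproj V)
    rw [heq] at hK
    exact lip_to_hstar hb h1 h2 (hψV V) (hψper V) hK
  · rintro ⟨V, hV, hH⟩
    refine ⟨V, hV, ?_⟩
    obtain ⟨K, hK⟩ := hstar_to_lip hb h1 h2 (hψV V) (hψper V) hH
    refine ⟨K, ?_⟩
    have heq : (fun x => projS V (Wf b lam φ x)) = Wf b lam fun t => projS V (φ t) :=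
      funext (hproj V)
    rw [heq]
    exact hK

end Weier
end
end

section
/- For any ε > 0 there exists M(ε) such that for every m ≥ M(ε) the following holds. Let ω, η be compactly supported Borel probability measures on ℝ^d and V < ℝ^d a linear subspace. If ω is (V, ε, m)-saturated and (1/m)H(ω ∗ η, ℒ_m) ≤ (1/m)H(η, ℒ_m) + ε, then η is (V, 3ε, m)-saturated. -/
open MeasureTheory Filter Metric Set Function
open scoped ENNReal NNReal Topology

noncomputable section

namespace Weier

namespace SatAux

/-- Partial-entropy summand `F s q = s log q - s log s` (= `s * log (q/s)`). -/
def F (s q : ℝ) : ℝ := s * Real.log q - s * Real.log s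

@[simp] lemma F_zero (q : ℝ) : F 0 q = 0 := by simp [F]

lemma F_nonneg {s q : ℝ} (h0 : 0 ≤ s) (h1 : s ≤ q) : 0 ≤ F s q := by
  rcases eq_or_lt_of_le h0 with h|h
  · simp [← h]
  · have : Real.log s ≤ Real.log q := Real.log_le_log h h1
    have := mul_le_mul_of_nonneg_left this h0
    simp [F]; nlinarith

lemma F_tangent {s q t : ℝ} (hs : 0 < s) (hq : 0 < q) (ht : 0 < t) :
    F s q ≤ t * q - s - s * Real.log t := by
  have hx : 0 < q * t / s := by positivity
  have h := Real.log_le_sub_one_of_pos hx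
  have hlog : Real.log (q * t / s) = Real.log q + Real.log t - Real.log s := by
    rw [Real.log_div (by positivity) (ne_of_gt hs), Real.log_mul (ne_of_gt hq) (ne_of_gt ht)]
  rw [hlog] at h
  have := mul_le_mul_of_nonneg_left h (le_of_lt hs)
  have hqt : s * (q * t / s) = q * t := by field_simp
  have h2 : s * (q * t / s - 1) = q * t - s := by rw [mul_sub, hqt]; ring
  rw [h2] at this
  simp only [F]
  nlinarith

lemma F_tangent' {s q t : ℝ} (hs : 0 ≤ s) (hsq : s ≤ q) (ht : 0 < t) :
    F s q ≤ t * q - s - s * Real.log t := by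
  rcases eq_or_lt_of_le hs with h|h
  · subst h; simp; positivity
  · exact F_tangent h (lt_of_lt_of_le h hsq) ht

/-- Finite superadditivity of `F` (joint concavity + homogeneity). -/
lemma F_sum_le {ι : Type*} (J : Finset ι) (sf qf : ι → ℝ)
    (h0 : ∀ i ∈ J, 0 ≤ sf i) (h1 : ∀ i ∈ J, sf i ≤ qf i) :
    ∑ i ∈ J, F (sf i) (qf i) ≤ F (∑ i ∈ J, sf i) (∑ i ∈ J, qf i) := by
  set S := ∑ i ∈ J, sf i with hS
  set Q := ∑ i ∈ J, qf i with hQ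
  have hS0 : 0 ≤ S := Finset.sum_nonneg h0
  have hSQ : S ≤ Q := Finset.sum_le_sum h1
  rcases eq_or_lt_of_le hS0 with h|h
  · -- all sf are zero
    have hz : ∀ i ∈ J, sf i = 0 := by
      intro i hi
      exact (Finset.sum_eq_zero_iff_of_nonneg h0).mp h.symm i hi
    have hL : ∑ i ∈ J, F (sf i) (qf i) = 0 := by
      apply Finset.sum_eq_zero; intro i hi; rw [hz i hi]; simp
    have hR : F S Q = 0 := by rw [hS]; rw [Finset.sum_eq_zero hz]; simp
    rw [hL, hR]
  · have hQ0 : 0 < Q := lt_of_lt_of_le h hSQ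
    set t := S / Q with htdef
    have ht : 0 < t := div_pos h hQ0
    have key : ∀ i ∈ J, F (sf i) (qf i) ≤ t * qf i - sf i - sf i * Real.log t := by
      intro i hi
      exact F_tangent' (h0 i hi) (h1 i hi) ht
    calc ∑ i ∈ J, F (sf i) (qf i) ≤ ∑ i ∈ J, (t * qf i - sf i - sf i * Real.log t) :=
          Finset.sum_le_sum key
      _ = t * Q - S - S * Real.log t := by
          rw [Finset.sum_sub_distrib, Finset.sum_sub_distrib, ← Finset.mul_sum, ← Finset.sum_mul]
      _ = F S Q := by
          have h1 : t * Q = S := by rw [htdef, div_mul_cancel₀ _ (ne_of_gt hQ0)]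
          have h2 : Real.log t = Real.log S - Real.log Q := by
            rw [htdef, Real.log_div (ne_of_gt h) (ne_of_gt hQ0)]
          simp only [F]; rw [h1, h2]; ring


lemma negMulLog_tangent {t t0 : ℝ} (ht : 0 ≤ t) (ht0 : 0 < t0) :
    Real.negMulLog t ≤ -(t * Real.log t0) + t0 - t := by
  rcases eq_or_lt_of_le ht with h|h
  · subst h; simp [le_of_lt ht0]
  · have hx : 0 < t0 / t := by positivity
    have hlog := Real.log_le_sub_one_of_pos hx
    rw [Real.log_div (ne_of_gt ht0) (ne_of_gt h)] at hlog
    have := mul_le_mul_of_nonneg_left hlog (le_of_lt h)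
    have h2 : t * (t0 / t - 1) = t0 - t := by field_simp
    rw [h2] at this
    simp only [Real.negMulLog]
    nlinarith

lemma F_eq_negMulLog (t M : ℝ) : F t M = Real.negMulLog t + t * Real.log M := by
  simp only [F, Real.negMulLog]; ring

lemma sum_negMulLog_le {ι : Type*} (s : Finset ι) (t : ι → ℝ)
    (h0 : ∀ i ∈ s, 0 ≤ t i) :
    ∑ i ∈ s, Real.negMulLog (t i) ≤
      Real.negMulLog (∑ i ∈ s, t i) + (∑ i ∈ s, t i) * Real.log s.card := by
  set T := ∑ i ∈ s, t i with hT
  have hT0 : 0 ≤ T := Finset.sum_nonneg h0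
  rcases eq_or_lt_of_le hT0 with h|h
  · have hz : ∀ i ∈ s, t i = 0 := (Finset.sum_eq_zero_iff_of_nonneg h0).mp h.symm
    have hL : ∑ i ∈ s, Real.negMulLog (t i) = 0 := by
      apply Finset.sum_eq_zero; intro i hi; rw [hz i hi]; simp
    rw [hL, ← h]; simp
  · have hcard : 0 < (s.card : ℝ) := by
      have : s.Nonempty := by
        by_contra hc
        rw [Finset.not_nonempty_iff_eq_empty] at hc
        rw [hT, hc] at h; simp at h
      exact_mod_cast Finset.card_pos.mpr this
    set t0 := T / s.card with ht0def
    have ht0 : 0 < t0 := div_pos h hcard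
    calc ∑ i ∈ s, Real.negMulLog (t i)
        ≤ ∑ i ∈ s, (-(t i * Real.log t0) + t0 - t i) :=
          Finset.sum_le_sum fun i hi => negMulLog_tangent (h0 i hi) ht0
      _ = -(T * Real.log t0) + s.card * t0 - T := by
          rw [Finset.sum_sub_distrib, Finset.sum_add_distrib, Finset.sum_neg_distrib,
            ← Finset.sum_mul, Finset.sum_const, nsmul_eq_mul]
      _ = Real.negMulLog T + T * Real.log s.card := by
          have h1 : (s.card : ℝ) * t0 = T := by
            rw [ht0def, mul_div_cancel₀ _ (ne_of_gt hcard)]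
          have h2 : Real.log t0 = Real.log T - Real.log s.card := by
            rw [ht0def, Real.log_div (ne_of_gt h) (ne_of_gt hcard)]
          rw [h1, h2]; simp only [Real.negMulLog]; ring

lemma sum_F_group {ι : Type*} (s : Finset ι) (t : ι → ℝ) (M : ℝ)
    (h0 : ∀ i ∈ s, 0 ≤ t i) :
    ∑ i ∈ s, F (t i) M ≤ F (∑ i ∈ s, t i) M + (∑ i ∈ s, t i) * Real.log s.card := by
  have h := sum_negMulLog_le s t h0
  calc ∑ i ∈ s, F (t i) M = ∑ i ∈ s, Real.negMulLog (t i) + (∑ i ∈ s, t i) * Real.log M := by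
        simp only [F_eq_negMulLog, Finset.sum_add_distrib, Finset.sum_mul]
    _ ≤ Real.negMulLog (∑ i ∈ s, t i) + (∑ i ∈ s, t i) * Real.log s.card
          + (∑ i ∈ s, t i) * Real.log M := by linarith
    _ = F (∑ i ∈ s, t i) M + (∑ i ∈ s, t i) * Real.log s.card := by
        rw [F_eq_negMulLog]; ring


/-- Single-argument superadditivity of `F` in its first argument. -/
lemma F_sum_left {ι : Type*} (J : Finset ι) (c : ι → ℝ) (M : ℝ)
    (h0 : ∀ j ∈ J, 0 ≤ c j) :
    F (∑ j ∈ J, c j) M ≤ ∑ j ∈ J, F (c j) M := by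
  have key : Real.negMulLog (∑ j ∈ J, c j) ≤ ∑ j ∈ J, Real.negMulLog (c j) := by
    set T := ∑ j ∈ J, c j with hT
    have hT0 : 0 ≤ T := Finset.sum_nonneg h0
    have h1 : Real.negMulLog T = ∑ j ∈ J, c j * (-Real.log T) := by
      rw [← Finset.sum_mul, ← hT]; simp [Real.negMulLog]
    rw [h1]
    apply Finset.sum_le_sum
    intro j hj
    rcases eq_or_lt_of_le (h0 j hj) with h|h
    · rw [← h]; simp
    · have hle : c j ≤ T := Finset.single_le_sum h0 hj
      have : Real.log (c j) ≤ Real.log T := Real.log_le_log h hle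
      simp only [Real.negMulLog]
      nlinarith
  simp only [F_eq_negMulLog, Finset.sum_add_distrib, ← Finset.sum_mul]
  linarith

section Meas
variable {X : Type*} [MeasurableSpace X]

/-- Generalized (homogeneous) entropy of `μ` w.r.t. a family of sets. -/
def Hg {ι : Type*} (μ : Measure X) (A : ι → Set X) : ℝ :=
  ∑' i, F (μ (A i)).toReal (μ Set.univ).toReal

lemma Hg_eq_sum {ι : Type*} (μ : Measure X) (A : ι → Set X) (I : Finset ι)
    (hI : ∀ i ∉ I, μ (A i) = 0) :
    Hg μ A = ∑ i ∈ I, F (μ (A i)).toReal (μ Set.univ).toReal := by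
  apply tsum_eq_sum
  intro i hi
  rw [hI i hi]; simp

lemma measure_eq_sum_inter {κ : Type*} [Countable κ] (μ : Measure X) (T : Set X)
    (hTm : MeasurableSet T)
    (B : κ → Set X) (hBm : ∀ j, MeasurableSet (B j)) (hBd : Pairwise (Disjoint on B))
    (S : Set X) (hSm : MeasurableSet S) (hS : μ Sᶜ = 0) (hSB : S ⊆ ⋃ j, B j)
    (J : Finset κ) (hJ : ∀ j ∉ J, μ (B j) = 0) :
    μ T = ∑ j ∈ J, μ (T ∩ B j ∩ S) := by
  have hTS : μ T = μ (T ∩ S) := (measure_inter_conull hS).symm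
  have hdisj : (↑J : Set κ).PairwiseDisjoint fun j => T ∩ B j ∩ S := by
    intro a _ b _ hab
    exact Disjoint.mono (fun x hx => hx.1.2) (fun x hx => hx.1.2) (hBd hab)
  have hU : μ (⋃ j ∈ {j : κ | j ∉ J}, B j) = 0 := by
    apply (measure_biUnion_null_iff (Set.to_countable _)).mpr
    intro j hj
    exact hJ j hj
  have hsub : T ∩ S ⊆ (⋃ j ∈ J, T ∩ B j ∩ S) ∪ (⋃ j ∈ {j : κ | j ∉ J}, B j) := by
    intro x hx
    obtain ⟨j, hj⟩ := Set.mem_iUnion.mp (hSB hx.2)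
    by_cases hjJ : j ∈ J
    · exact Or.inl (Set.mem_biUnion hjJ ⟨⟨hx.1, hj⟩, hx.2⟩)
    · exact Or.inr (Set.mem_biUnion hjJ hj)
  have hle : μ (T ∩ S) ≤ ∑ j ∈ J, μ (T ∩ B j ∩ S) := by
    calc μ (T ∩ S) ≤ μ ((⋃ j ∈ J, T ∩ B j ∩ S) ∪ (⋃ j ∈ {j : κ | j ∉ J}, B j)) :=
          measure_mono hsub
      _ ≤ μ (⋃ j ∈ J, T ∩ B j ∩ S) + μ (⋃ j ∈ {j : κ | j ∉ J}, B j) := measure_union_le _ _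
      _ = μ (⋃ j ∈ J, T ∩ B j ∩ S) := by rw [hU, add_zero]
      _ = ∑ j ∈ J, μ (T ∩ B j ∩ S) :=
          measure_biUnion_finset hdisj fun j _ => ((hTm.inter (hBm j)).inter hSm)
  have hge : ∑ j ∈ J, μ (T ∩ B j ∩ S) ≤ μ (T ∩ S) := by
    rw [← measure_biUnion_finset hdisj fun j _ => ((hTm.inter (hBm j)).inter hSm)]
    apply measure_mono
    intro x hx
    obtain ⟨j, -, hj⟩ := Set.mem_iUnion₂.mp hx
    exact ⟨hj.1.1, hj.2⟩
  rw [hTS]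
  exact le_antisymm hle hge

/-- The workhorse: entropy almost-monotonicity under bounded-multiplicity refinement. -/
lemma multi {ι κ : Type*} [Countable ι] [Countable κ]
    (μ : Measure X) [IsFiniteMeasure μ]
    (A : ι → Set X) (B : κ → Set X) (S : Set X)
    (hAm : ∀ i, MeasurableSet (A i)) (hBm : ∀ j, MeasurableSet (B j))
    (hSm : MeasurableSet S)
    (hAd : Pairwise (Disjoint on A)) (hBd : Pairwise (Disjoint on B))
    (hS : μ Sᶜ = 0) (hSA : S ⊆ ⋃ i, A i) (hSB : S ⊆ ⋃ j, B j)
    (I : Finset ι) (J : Finset κ)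
    (hI : ∀ i ∉ I, μ (A i) = 0) (hJ : ∀ j ∉ J, μ (B j) = 0)
    (N : ℕ) (hN : 1 ≤ N)
    (hmult : ∀ j ∈ J, ∃ s : Finset ι, s.card ≤ N ∧
      ∀ i, (A i ∩ B j ∩ S).Nonempty → i ∈ s) :
    Hg μ A ≤ Hg μ B + (μ Set.univ).toReal * Real.log N := by
  classical
  have hN' : (1 : ℝ) ≤ (N : ℝ) := by exact_mod_cast hN
  set M := (μ Set.univ).toReal with hM
  have hfin : ∀ T : Set X, μ T ≠ ∞ := fun T => measure_ne_top μ T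
  -- real-valued cell masses
  set c : ι → κ → ℝ := fun i j => (μ (A i ∩ B j ∩ S)).toReal with hc
  have hc0 : ∀ i j, 0 ≤ c i j := fun i j => ENNReal.toReal_nonneg
  -- A-side decomposition
  have hA_eq : ∀ i, (μ (A i)).toReal = ∑ j ∈ J, c i j := by
    intro i
    rw [measure_eq_sum_inter μ (A i) (hAm i) B hBm hBd S hSm hS hSB J hJ]
    exact ENNReal.toReal_sum fun j _ => hfin _
  -- B-side decomposition
  have hB_eq : ∀ j, (μ (B j)).toReal = ∑ i ∈ I, c i j := by
    intro j
    rw [measure_eq_sum_inter μ (B j) (hBm j) A hAm hAd S hSm hS hSA I hI]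
    rw [ENNReal.toReal_sum fun i _ => hfin _]
    exact Finset.sum_congr rfl fun i _ => by rw [Set.inter_comm (B j) (A i)]
  rw [Hg_eq_sum μ A I hI, Hg_eq_sum μ B J hJ]
  have step1 : ∑ i ∈ I, F (μ (A i)).toReal M ≤ ∑ i ∈ I, ∑ j ∈ J, F (c i j) M := by
    apply Finset.sum_le_sum
    intro i _
    rw [hA_eq i]
    -- single-argument superadditivity
    exact F_sum_left J (c i) M fun j _ => hc0 i j
  have step2 : ∀ j ∈ J, ∑ i ∈ I, F (c i j) M ≤
      F (μ (B j)).toReal M + (μ (B j)).toReal * Real.log N := by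
    intro j hj
    obtain ⟨s, hcard, hs⟩ := hmult j hj
    have hzero : ∀ i ∈ I, i ∉ s → F (c i j) M = 0 := by
      intro i _ his
      have : A i ∩ B j ∩ S = ∅ := by
        by_contra hne
        exact his (hs i (Set.nonempty_iff_ne_empty.mpr hne))
      rw [hc]; simp only; rw [this]; simp
    have hsum_eq : ∑ i ∈ I, F (c i j) M = ∑ i ∈ I ∩ s, F (c i j) M := by
      symm
      apply Finset.sum_subset Finset.inter_subset_left
      intro i hiI hins
      exact hzero i hiI fun h => hins (Finset.mem_inter.mpr ⟨hiI, h⟩)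
    have hmass : ∑ i ∈ I ∩ s, c i j = (μ (B j)).toReal := by
      rw [hB_eq j]
      apply Finset.sum_subset Finset.inter_subset_left
      intro i hiI hins
      have hemp : A i ∩ B j ∩ S = ∅ := by
        by_contra hne
        exact hins (Finset.mem_inter.mpr ⟨hiI, hs i (Set.nonempty_iff_ne_empty.mpr hne)⟩)
      rw [hc]; simp only; rw [hemp]; simp
    calc ∑ i ∈ I, F (c i j) M = ∑ i ∈ I ∩ s, F (c i j) M := hsum_eq
      _ ≤ F (∑ i ∈ I ∩ s, c i j) M + (∑ i ∈ I ∩ s, c i j) * Real.log (I ∩ s).card :=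
          sum_F_group (I ∩ s) (fun i => c i j) M fun i _ => hc0 i j
      _ ≤ F (μ (B j)).toReal M + (μ (B j)).toReal * Real.log N := by
          rw [hmass]
          have hlog : Real.log (I ∩ s).card ≤ Real.log N := by
            rcases Nat.eq_zero_or_pos (I ∩ s).card with h|h
            · rw [h]; simpa using Real.log_nonneg hN'
            · apply Real.log_le_log (by exact_mod_cast h)
              have : (I ∩ s).card ≤ N := le_trans (Finset.card_le_card
                (Finset.inter_subset_right)) hcard
              exact_mod_cast this
          exact add_le_add (le_refl _) (mul_le_mul_of_nonneg_left hlog ENNReal.toReal_nonneg)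
  have step3 : ∑ j ∈ J, (μ (B j)).toReal ≤ M := by
    have : ∑ j ∈ J, μ (B j) ≤ μ Set.univ := by
      have hdisj : (↑J : Set κ).PairwiseDisjoint B := fun a _ b _ hab => hBd hab
      rw [← measure_biUnion_finset hdisj fun j _ => hBm j]
      exact measure_mono (Set.subset_univ _)
    calc ∑ j ∈ J, (μ (B j)).toReal = (∑ j ∈ J, μ (B j)).toReal :=
          (ENNReal.toReal_sum fun j _ => hfin _).symm
      _ ≤ M := ENNReal.toReal_mono (hfin _) this
  calc ∑ i ∈ I, F (μ (A i)).toReal M ≤ ∑ i ∈ I, ∑ j ∈ J, F (c i j) M := step1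
    _ = ∑ j ∈ J, ∑ i ∈ I, F (c i j) M := Finset.sum_comm
    _ ≤ ∑ j ∈ J, (F (μ (B j)).toReal M + (μ (B j)).toReal * Real.log N) :=
        Finset.sum_le_sum step2
    _ = ∑ j ∈ J, F (μ (B j)).toReal M + (∑ j ∈ J, (μ (B j)).toReal) * Real.log N := by
        rw [Finset.sum_add_distrib, Finset.sum_mul]
    _ ≤ ∑ j ∈ J, F (μ (B j)).toReal M + M * Real.log N := by
        have := mul_le_mul_of_nonneg_right step3 (Real.log_nonneg hN')
        linarith


/-- Generalized two-family entropy. -/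
def Dg {ι : Type*} (μ : Measure X) (R Q : ι → Set X) : ℝ :=
  ∑' a, F (μ (R a)).toReal (μ (Q a)).toReal

lemma Hg_eq_Dg {ι : Type*} (μ : Measure X) (A : ι → Set X) :
    Hg μ A = Dg μ A fun _ => Set.univ := rfl

lemma Dg_eq_sum {ι : Type*} (μ : Measure X) (R Q : ι → Set X) (I : Finset ι)
    (hI : ∀ a ∉ I, μ (R a) = 0) :
    Dg μ R Q = ∑ a ∈ I, F (μ (R a)).toReal (μ (Q a)).toReal := by
  apply tsum_eq_sum
  intro a ha
  rw [hI a ha]; simp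

/-- Superadditivity of `Dg` over a finite decomposition of the measure. -/
lemma Dg_super {ι L : Type*} (μ : Measure X) [IsFiniteMeasure μ]
    (p : L → Measure X) (T : Finset L)
    (hsum : ∀ s : Set X, MeasurableSet s → μ s = ∑ l ∈ T, p l s)
    (R Q : ι → Set X) (hRQ : ∀ a, R a ⊆ Q a)
    (hRm : ∀ a, MeasurableSet (R a)) (hQm : ∀ a, MeasurableSet (Q a))
    (I : Finset ι) (hI : ∀ a ∉ I, μ (R a) = 0) :
    ∑ l ∈ T, Dg (p l) R Q ≤ Dg μ R Q := by
  have hple : ∀ l ∈ T, ∀ s : Set X, MeasurableSet s → p l s ≤ μ s := by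
    intro l hl s hs
    rw [hsum s hs]
    exact Finset.single_le_sum (f := fun l => p l s) (fun _ _ => zero_le) hl
  have hfin : ∀ l ∈ T, ∀ s : Set X, MeasurableSet s → p l s ≠ ∞ :=
    fun l hl s hs => lt_of_le_of_lt (hple l hl s hs) (measure_lt_top μ s) |>.ne
  have hIl : ∀ l ∈ T, ∀ a ∉ I, p l (R a) = 0 := by
    intro l hl a ha
    exact le_antisymm (le_trans (hple l hl _ (hRm a)) (le_of_eq (hI a ha))) (zero_le)
  rw [Dg_eq_sum μ R Q I hI]
  have hrw : ∀ l ∈ T, Dg (p l) R Q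
      = ∑ a ∈ I, F ((p l) (R a)).toReal ((p l) (Q a)).toReal :=
    fun l hl => Dg_eq_sum (p l) R Q I (hIl l hl)
  rw [Finset.sum_congr rfl hrw, Finset.sum_comm]
  apply Finset.sum_le_sum
  intro a _
  have h1 : (μ (R a)).toReal = ∑ l ∈ T, (p l (R a)).toReal := by
    rw [hsum _ (hRm a)]
    exact ENNReal.toReal_sum fun l hl => hfin l hl _ (hRm a)
  have h2 : (μ (Q a)).toReal = ∑ l ∈ T, (p l (Q a)).toReal := by
    rw [hsum _ (hQm a)]
    exact ENNReal.toReal_sum fun l hl => hfin l hl _ (hQm a)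
  rw [h1, h2]
  exact F_sum_le T _ _ (fun l _ => ENNReal.toReal_nonneg)
    (fun l hl => ENNReal.toReal_mono (hfin l hl _ (hQm a)) (measure_mono (hRQ a)))

/-- Chain rule: joint entropy = marginal entropy + conditional entropy. -/
lemma chain_rule {ι κ : Type*} [Countable ι] (μ : Measure X) [IsFiniteMeasure μ]
    (P' : ι → Set X) (Q : κ → Set X)
    (hPm : ∀ i, MeasurableSet (P' i)) (hQm : ∀ l, MeasurableSet (Q l))
    (hPd : Pairwise (Disjoint on P')) (hPu : (⋃ i, P' i) = Set.univ)
    (IP : Finset ι) (hIP : ∀ i ∉ IP, μ (P' i) = 0)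
    (IQ : Finset κ) (hIQ : ∀ l ∉ IQ, μ (Q l) = 0) :
    Dg μ (fun p : ι × κ => P' p.1 ∩ Q p.2) (fun _ => Set.univ)
      = Hg μ Q + Dg μ (fun p : ι × κ => P' p.1 ∩ Q p.2) (fun p => Q p.2) := by
  classical
  have hsupp : ∀ p : ι × κ, p ∉ IP ×ˢ IQ → μ (P' p.1 ∩ Q p.2) = 0 := by
    intro p hp
    by_cases h1 : p.1 ∈ IP
    · have h2 : p.2 ∉ IQ := fun h2 => hp (Finset.mem_product.mpr ⟨h1, h2⟩)
      exact le_antisymm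
        (le_trans (measure_mono Set.inter_subset_right) (le_of_eq (hIQ _ h2))) (zero_le)
    · exact le_antisymm
        (le_trans (measure_mono Set.inter_subset_left) (le_of_eq (hIP _ h1))) (zero_le)
  have hmass : ∀ l, (μ (Q l)).toReal = ∑ i ∈ IP, (μ (P' i ∩ Q l)).toReal := by
    intro l
    have := measure_eq_sum_inter μ (Q l) (hQm l) P' hPm hPd Set.univ MeasurableSet.univ
      (by simp) (by rw [hPu]) IP hIP
    rw [this, ENNReal.toReal_sum fun i _ => measure_ne_top μ _]
    exact Finset.sum_congr rfl fun i _ => by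
      rw [Set.inter_univ, Set.inter_comm (Q l) (P' i)]
  rw [Dg_eq_sum μ _ _ (IP ×ˢ IQ) hsupp, Dg_eq_sum μ _ _ (IP ×ˢ IQ) hsupp,
    Hg_eq_Dg, Dg_eq_sum μ _ _ IQ hIQ]
  rw [Finset.sum_product_right, Finset.sum_product_right, ← Finset.sum_add_distrib]
  apply Finset.sum_congr rfl
  intro l _
  have key : ∀ s q M : ℝ, F s M - F s q = s * (Real.log M - Real.log q) := by
    intro s q M; simp only [F]; ring
  have : ∑ i ∈ IP, F (μ (P' i ∩ Q l)).toReal (μ Set.univ).toReal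
      - ∑ i ∈ IP, F (μ (P' i ∩ Q l)).toReal (μ (Q l)).toReal
      = (μ (Q l)).toReal * (Real.log (μ Set.univ).toReal - Real.log (μ (Q l)).toReal) := by
    rw [← Finset.sum_sub_distrib]
    have : ∀ i ∈ IP, F (μ (P' i ∩ Q l)).toReal (μ Set.univ).toReal
        - F (μ (P' i ∩ Q l)).toReal (μ (Q l)).toReal
        = (μ (P' i ∩ Q l)).toReal * (Real.log (μ Set.univ).toReal - Real.log (μ (Q l)).toReal) :=
      fun i _ => key _ _ _
    rw [Finset.sum_congr rfl this, ← Finset.sum_mul, ← hmass l]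
  have hF : F (μ (Q l)).toReal (μ Set.univ).toReal
      = (μ (Q l)).toReal * (Real.log (μ Set.univ).toReal - Real.log (μ (Q l)).toReal) := by
    simp only [F]; ring
  linarith

end Meas

end SatAux

namespace SatAux
section Geometry

variable {d : ℕ} (b m : ℕ)

lemma mem_bcell_iff (hb : 2 ≤ b) (k : Fin d → ℤ) (x : Ed d) :
    x ∈ bcell d b m k ↔ ∀ i, ⌊x i * (b:ℝ)^m⌋ = k i := by
  have hbm : (0:ℝ) < (b:ℝ)^m := by positivity
  constructor
  · intro h i
    obtain ⟨h1, h2⟩ := h i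
    rw [Int.floor_eq_iff]
    constructor
    · rwa [div_le_iff₀ hbm] at h1
    · rw [lt_div_iff₀ hbm] at h2; push_cast at h2 ⊢; linarith
  · intro h
    intro i
    have h1 := Int.floor_le (x i * (b:ℝ)^m)
    have h2 := Int.lt_floor_add_one (x i * (b:ℝ)^m)
    rw [h i] at h1 h2
    constructor
    · rwa [div_le_iff₀ hbm]
    · rw [lt_div_iff₀ hbm]; push_cast at h2 ⊢; linarith

lemma bcell_cover (hb : 2 ≤ b) (x : Ed d) :
    x ∈ bcell d b m (fun i => ⌊x i * (b:ℝ)^m⌋) :=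
  (mem_bcell_iff b m hb _ x).mpr fun _ => rfl

lemma bcell_iUnion (hb : 2 ≤ b) : (⋃ k : Fin d → ℤ, bcell d b m k) = Set.univ := by
  apply Set.eq_univ_of_forall
  intro x
  exact Set.mem_iUnion.mpr ⟨_, bcell_cover b m hb x⟩

lemma bcell_disjoint (hb : 2 ≤ b) :
    Pairwise (Disjoint on fun k : Fin d → ℤ => bcell d b m k) := by
  intro k k' hkk'
  rw [Function.onFun]
  rw [Set.disjoint_left]
  intro x hx hx'
  apply hkk'
  funext i
  rw [← (mem_bcell_iff b m hb k x).mp hx i, ← (mem_bcell_iff b m hb k' x).mp hx' i]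

lemma measurable_coord (i : Fin d) : Measurable fun x : Ed d => x i := by
  have : Continuous fun x : Ed d => x i := by
    exact (continuous_apply i).comp (PiLp.continuous_ofLp 2 fun _ : Fin d => ℝ)
  exact this.measurable

lemma bcell_measurable (k : Fin d → ℤ) : MeasurableSet (bcell d b m k) := by
  have : bcell d b m k = ⋂ i, {x : Ed d |
      (k i : ℝ) / (b:ℝ)^m ≤ x i ∧ x i < ((k i : ℝ) + 1) / (b:ℝ)^m} := by
    ext x; simp [bcell, Set.mem_iInter]
  rw [this]
  apply MeasurableSet.iInter
  intro i
  have h1 : MeasurableSet {x : Ed d | (k i : ℝ) / (b:ℝ)^m ≤ x i} :=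
    measurableSet_le measurable_const (measurable_coord i)
  have h2 : MeasurableSet {x : Ed d | x i < ((k i : ℝ) + 1) / (b:ℝ)^m} :=
    measurableSet_lt (measurable_coord i) measurable_const
  exact h1.inter h2

/-- The corner of a cell. -/
def corner (k : Fin d → ℤ) : Ed d :=
  (EuclideanSpace.equiv (Fin d) ℝ).symm fun i => (k i : ℝ) / (b:ℝ)^m

lemma corner_apply (k : Fin d → ℤ) (i : Fin d) :
    corner b m k i = (k i : ℝ) / (b:ℝ)^m := rfl

lemma coord_le_dist (x y : Ed d) (i : Fin d) : |x i - y i| ≤ dist x y := by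
  rw [EuclideanSpace.dist_eq]
  have h1 : dist (x i) (y i) ^ 2 ≤ ∑ j, dist (x j) (y j) ^ 2 :=
    Finset.single_le_sum (f := fun j => dist (x j) (y j) ^ 2)
      (fun j _ => sq_nonneg _) (Finset.mem_univ i)
  calc |x i - y i| = dist (x i) (y i) := (Real.dist_eq _ _).symm
    _ = Real.sqrt (dist (x i) (y i) ^ 2) := (Real.sqrt_sq dist_nonneg).symm
    _ ≤ Real.sqrt (∑ j, dist (x j) (y j) ^ 2) := Real.sqrt_le_sqrt h1

lemma dist_corner_le (hb : 2 ≤ b) {k : Fin d → ℤ} {x : Ed d}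
    (hx : x ∈ bcell d b m k) :
    dist x (corner b m k) ≤ (d : ℝ) * ((b:ℝ)^m)⁻¹ := by
  have hbm : (0:ℝ) < (b:ℝ)^m := by positivity
  set β := ((b:ℝ)^m)⁻¹ with hβdef
  have hβ : 0 ≤ β := by positivity
  have hcoord : ∀ i, dist (x i) (corner b m k i) ^ 2 ≤ β ^ 2 := by
    intro i
    obtain ⟨h1, h2⟩ := hx i
    rw [corner_apply, Real.dist_eq]
    have hub : x i - (k i : ℝ) / (b:ℝ)^m < β := by
      have : ((k i : ℝ) + 1) / (b:ℝ)^m = (k i : ℝ) / (b:ℝ)^m + β := by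
        rw [hβdef]; field_simp
      rw [this] at h2; linarith
    have hlb : (0:ℝ) ≤ x i - (k i : ℝ) / (b:ℝ)^m := by linarith
    have habs : |x i - (k i : ℝ) / (b:ℝ)^m| ≤ β := by
      rw [abs_of_nonneg hlb]; linarith
    nlinarith [abs_nonneg (x i - (k i : ℝ) / (b:ℝ)^m), habs, hβ]
  rw [EuclideanSpace.dist_eq]
  calc Real.sqrt (∑ i, dist (x i) (corner b m k i) ^ 2)
      ≤ Real.sqrt (∑ _i : Fin d, β ^ 2) :=
        Real.sqrt_le_sqrt (Finset.sum_le_sum fun i _ => hcoord i)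
    _ = Real.sqrt ((d : ℝ) * β ^ 2) := by rw [Finset.sum_const, Finset.card_univ,
        Fintype.card_fin, nsmul_eq_mul]
    _ = Real.sqrt d * β := by rw [Real.sqrt_mul (by positivity), Real.sqrt_sq hβ]
    _ ≤ (d:ℝ) * β := by
        apply mul_le_mul_of_nonneg_right _ hβ
        have h1 : (d:ℝ) ≤ (d:ℝ)^2 := by
          rcases Nat.eq_zero_or_pos d with h|h
          · simp [h]
          · have : (1:ℝ) ≤ (d:ℝ) := by exact_mod_cast h
            nlinarith
        calc Real.sqrt d ≤ Real.sqrt ((d:ℝ)^2) := Real.sqrt_le_sqrt h1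
          _ = (d:ℝ) := Real.sqrt_sq (by positivity)

/-- Counting: cells meeting a ball of radius `c·b⁻ᵐ` around `z`. -/
lemma cell_count (hb : 2 ≤ b) (c : ℕ) (z : Ed d) :
    ∃ s : Finset (Fin d → ℤ), s.card ≤ (2*c+2)^d ∧
      ∀ k (x : Ed d), x ∈ bcell d b m k → dist x z ≤ (c:ℝ) * ((b:ℝ)^m)⁻¹ → k ∈ s := by
  have hbm : (0:ℝ) < (b:ℝ)^m := by positivity
  refine ⟨Fintype.piFinset fun i =>
    Finset.Icc (⌊z i * (b:ℝ)^m⌋ - (c+1)) (⌊z i * (b:ℝ)^m⌋ + c), ?_, ?_⟩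
  · rw [Fintype.card_piFinset]
    calc ∏ i : Fin d, (Finset.Icc (⌊z i * (b:ℝ)^m⌋ - (c+1)) (⌊z i * (b:ℝ)^m⌋ + c)).card
        ≤ ∏ _i : Fin d, (2*c+2) := by
          apply Finset.prod_le_prod (fun _ _ => Nat.zero_le _)
          intro i _
          rw [Int.card_Icc]
          omega
      _ = (2*c+2)^d := by rw [Finset.prod_const, Finset.card_univ, Fintype.card_fin]
  · intro k x hx hdist
    rw [Fintype.mem_piFinset]
    intro i
    rw [Finset.mem_Icc]
    obtain ⟨h1, h2⟩ := hx i
    have hco : |x i - z i| ≤ (c:ℝ) * ((b:ℝ)^m)⁻¹ := le_trans (coord_le_dist x z i) hdist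
    have hub : x i * (b:ℝ)^m ≤ z i * (b:ℝ)^m + c := by
      have h := (abs_le.mp hco).2
      have := mul_le_mul_of_nonneg_right (by linarith : x i ≤ z i + (c:ℝ) * ((b:ℝ)^m)⁻¹)
        (le_of_lt hbm)
      calc x i * (b:ℝ)^m ≤ (z i + (c:ℝ) * ((b:ℝ)^m)⁻¹) * (b:ℝ)^m := this
        _ = z i * (b:ℝ)^m + c := by field_simp
    have hlb : z i * (b:ℝ)^m - c ≤ x i * (b:ℝ)^m := by
      have h := (abs_le.mp hco).1
      have := mul_le_mul_of_nonneg_right (by linarith : z i - (c:ℝ) * ((b:ℝ)^m)⁻¹ ≤ x i)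
        (le_of_lt hbm)
      calc z i * (b:ℝ)^m - c = (z i - (c:ℝ) * ((b:ℝ)^m)⁻¹) * (b:ℝ)^m := by field_simp; try ring
        _ ≤ x i * (b:ℝ)^m := this
    constructor
    · -- k i ≥ ⌊z i b^m⌋ - (c+1)
      have hzk : z i * (b:ℝ)^m < (k i : ℝ) + 1 + c := by
        rw [div_le_iff₀ hbm] at h1
        rw [lt_div_iff₀ hbm] at h2
        push_cast at h2
        linarith
      have : ⌊z i * (b:ℝ)^m⌋ < k i + 1 + c := by
        apply Int.floor_lt.mpr
        push_cast
        linarith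
      omega
    · -- k i ≤ ⌊z i b^m⌋ + c
      have hk : (k i : ℝ) ≤ z i * (b:ℝ)^m + c := by
        rw [div_le_iff₀ hbm] at h1
        linarith
      have : (k i : ℝ) - c ≤ z i * (b:ℝ)^m := by linarith
      have h3 : k i - c ≤ ⌊z i * (b:ℝ)^m⌋ := by
        apply Int.le_floor.mpr
        push_cast
        linarith
      omega

end Geometry
end SatAux



namespace SatAux
section Interface
variable {d : ℕ} (b m : ℕ)

lemma F_smul {c s q : ℝ} (hc : 0 ≤ c) (hs : 0 ≤ s) (hsq : s ≤ q) :
    F (c * s) (c * q) = c * F s q := by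
  rcases eq_or_lt_of_le hc with h|hc
  · simp [← h, F]
  rcases eq_or_lt_of_le hs with h|hs
  · simp [← h, F]
  have hq : 0 < q := lt_of_lt_of_le hs hsq
  simp only [F]
  rw [Real.log_mul (ne_of_gt hc) (ne_of_gt hq), Real.log_mul (ne_of_gt hc) (ne_of_gt hs)]
  ring

lemma entH_eq_Hg (μ : Measure (Ed d)) [IsProbabilityMeasure μ] :
    entH d b m μ = Hg μ (fun k => bcell d b m k) * (Real.log b)⁻¹ := by
  unfold entH Hg
  rw [← tsum_mul_right]
  apply tsum_congr
  intro k
  have h1 : (μ Set.univ).toReal = 1 := by simp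
  rw [h1]
  simp only [F, Real.log_one, Real.logb]
  ring

lemma projS_add {V : Submodule ℝ (Ed d)} (x y : Ed d) :
    projS V (x + y) = projS V x + projS V y := by
  simp only [projS, map_add, Submodule.coe_add]

lemma projS_dist {V : Submodule ℝ (Ed d)} (x y : Ed d) :
    dist (projS V x) (projS V y) ≤ dist x y := by
  rw [dist_eq_norm, dist_eq_norm]
  have h1 : projS V x - projS V y = projS V (x - y) := by
    simp only [projS, map_sub, Submodule.coe_sub]
  rw [h1]
  calc ‖projS V (x - y)‖ = ‖V.orthogonalProjectionOnto (x - y)‖ := rfl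
    _ ≤ ‖V.orthogonalProjectionOnto (𝕜 := ℝ)‖ * ‖x - y‖ :=
        (V.orthogonalProjectionOnto).le_opNorm _
    _ ≤ 1 * ‖x - y‖ :=
        mul_le_mul_of_nonneg_right (Submodule.orthogonalProjectionOnto_norm_le V) (norm_nonneg _)
    _ = ‖x - y‖ := one_mul _

lemma projS_continuous {V : Submodule ℝ (Ed d)} : Continuous (projS (d := d) V) :=
  continuous_subtype_val.comp (V.orthogonalProjectionOnto).continuous

lemma projS_measurable {V : Submodule ℝ (Ed d)} : Measurable (projS (d := d) V) :=
  projS_continuous.measurable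

/-- Support finset for masses of cells pulled back by `g`. -/
lemma supp_finset {Y : Type*} [MeasurableSpace Y] (hb : 2 ≤ b) (μ : Measure Y)
    (g : Y → Ed d) (T : Set Y) (hT : μ Tᶜ = 0)
    (z : Ed d) (ρ : ℝ) (hρ : 0 ≤ ρ) (hTb : ∀ y ∈ T, dist (g y) z ≤ ρ) :
    ∃ I : Finset (Fin d → ℤ), ∀ k ∉ I, μ (g ⁻¹' (bcell d b m k)) = 0 := by
  have hbm : (0:ℝ) < (b:ℝ)^m := by positivity
  set c := ⌈ρ * (b:ℝ)^m⌉₊ with hc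
  obtain ⟨s, -, hs⟩ := cell_count b m hb c z
  refine ⟨s, fun k hk => ?_⟩
  have hsub : g ⁻¹' (bcell d b m k) ⊆ Tᶜ := by
    intro y hy hyT
    apply hk
    apply hs k (g y) hy
    calc dist (g y) z ≤ ρ := hTb y hyT
      _ ≤ (c:ℝ) * ((b:ℝ)^m)⁻¹ := by
          calc ρ = ρ * (b:ℝ)^m * ((b:ℝ)^m)⁻¹ := by field_simp
            _ ≤ (c:ℝ) * ((b:ℝ)^m)⁻¹ :=
                mul_le_mul_of_nonneg_right (Nat.le_ceil _) (by positivity)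
  exact le_antisymm (le_trans (measure_mono hsub) (le_of_eq hT)) (zero_le)

end Interface
end SatAux


namespace SatAux

lemma pair_disjoint {Y : Type*} {ι κ : Type*} {A : ι → Set Y} {B : κ → Set Y}
    (hA : Pairwise (Disjoint on A)) (hB : Pairwise (Disjoint on B)) :
    Pairwise (Disjoint on fun p : ι × κ => A p.1 ∩ B p.2) := by
  intro p q hpq
  by_cases h1 : p.1 = q.1
  · have h2 : p.2 ≠ q.2 := fun h2 => hpq (Prod.ext h1 h2)
    exact Disjoint.mono Set.inter_subset_right Set.inter_subset_right (hB h2)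
  · exact Disjoint.mono Set.inter_subset_left Set.inter_subset_left (hA h1)

lemma pair_iUnion {Y : Type*} {ι κ : Type*} {A : ι → Set Y} {B : κ → Set Y}
    (hA : (⋃ i, A i) = Set.univ) (hB : (⋃ j, B j) = Set.univ) :
    (⋃ p : ι × κ, A p.1 ∩ B p.2) = Set.univ := by
  apply Set.eq_univ_of_forall
  intro y
  have h1 : y ∈ ⋃ i, A i := hA ▸ Set.mem_univ y
  have h2 : y ∈ ⋃ j, B j := hB ▸ Set.mem_univ y
  obtain ⟨i, hi⟩ := Set.mem_iUnion.mp h1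
  obtain ⟨j, hj⟩ := Set.mem_iUnion.mp h2
  exact Set.mem_iUnion.mpr ⟨(i,j), hi, hj⟩

end SatAux

set_option maxHeartbeats 2000000 in
/-- Saturation transfer: for any `ε > 0` and all sufficiently large `m`, if `ω` is
`(V,ε,m)`-saturated and the convolution `ω ∗ η` gains at most `ε` entropy over `η` at
scale `m`, then `η` is `(V,3ε,m)`-saturated. -/
theorem saturated_transfer (d b : ℕ) (hb : 2 ≤ b) :
    ∀ ε : ℝ, 0 < ε →
      ∃ M : ℕ, ∀ m : ℕ, M ≤ m →
        ∀ ω η : Measure (Ed d), IsProbabilityMeasure ω → IsProbabilityMeasure η →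
          (∃ K : Set (Ed d), IsCompact K ∧ ω Kᶜ = 0) →
          (∃ K : Set (Ed d), IsCompact K ∧ η Kᶜ = 0) →
          ∀ V : Submodule ℝ (Ed d), Saturated d b ω V ε m →
            (1 / (m : ℝ)) * entH d b m (ω ∗ η) ≤ (1 / (m : ℝ)) * entH d b m η + ε →
            Saturated d b η V (3 * ε) m := by
  classical
  intro ε hε
  set N : ℕ := ((4*d+2)^d) * ((4*d+2)^d) with hNdef
  have hNf : 0 < (4*d+2)^d := Nat.pow_pos (by omega)
  have hN1 : 1 ≤ N := Nat.one_le_iff_ne_zero.mpr (Nat.mul_ne_zero hNf.ne' hNf.ne')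
  set δ : ℝ := Real.log N with hδdef
  have hδ0 : 0 ≤ δ := Real.log_nonneg (by exact_mod_cast hN1)
  have hlog2 : 0 < Real.log 2 := Real.log_pos (by norm_num)
  refine ⟨⌈(5*δ) / (Real.log 2 * ε)⌉₊ + 1, ?_⟩
  intro m hm ω η hω hη hKωe hKηe V hsat hconv
  obtain ⟨Kω, hKωc, hKω0⟩ := hKωe
  obtain ⟨Kη, hKηc, hKη0⟩ := hKηe
  have hm1 : 1 ≤ m := le_trans (Nat.le_add_left 1 _) hm
  have hmR : (0:ℝ) < m := by exact_mod_cast hm1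
  have hbm : (0:ℝ) < (b:ℝ)^m := by positivity
  set β : ℝ := ((b:ℝ)^m)⁻¹ with hβdef
  have hLb : 0 < Real.log b := Real.log_pos (by exact_mod_cast hb)
  -- projection
  set π : Ed d → Ed d := projS Vᗮ with hπdef
  have hπm : Measurable π := SatAux.projS_measurable
  have hπd : ∀ x y : Ed d, dist (π x) (π y) ≤ dist x y := fun x y => SatAux.projS_dist x y
  have hπa : ∀ x y : Ed d, π (x+y) = π x + π y := fun x y => SatAux.projS_add x y
  -- partitions on Ed d
  set P : (Fin d → ℤ) → Set (Ed d) := fun k => bcell d b m k with hPdef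
  set Q : (Fin d → ℤ) → Set (Ed d) := fun l => π ⁻¹' (P l) with hQdef
  have hPm : ∀ k, MeasurableSet (P k) := fun k => SatAux.bcell_measurable b m k
  have hQm : ∀ l, MeasurableSet (Q l) := fun l => hπm (hPm l)
  have hPd : Pairwise (Disjoint on P) := SatAux.bcell_disjoint b m hb
  have hPu : (⋃ k, P k) = Set.univ := SatAux.bcell_iUnion b m hb
  have hQd : Pairwise (Disjoint on Q) := fun i j hij => Disjoint.preimage π (hPd hij)
  have hQu : (⋃ l, Q l) = Set.univ := by
    rw [hQdef, ← Set.preimage_iUnion, hPu, Set.preimage_univ]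
  -- product space
  set mh : Measure (Ed d × Ed d) := ω.prod η with hmhdef
  haveI : IsProbabilityMeasure mh := by rw [hmhdef]; infer_instance
  set add2 : Ed d × Ed d → Ed d := fun p => p.1 + p.2 with hadd2def
  have hadd2m : Measurable add2 := (continuous_fst.add continuous_snd).measurable
  set Ah : (Fin d → ℤ) → Set (Ed d × Ed d) := fun k => add2 ⁻¹' (P k) with hAhdef
  set Qh : (Fin d → ℤ) → Set (Ed d × Ed d) := fun i => add2 ⁻¹' (Q i) with hQhdef
  set PL : (Fin d → ℤ) → Set (Ed d × Ed d) := fun j => Prod.fst ⁻¹' (P j) with hPLdef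
  set PR : (Fin d → ℤ) → Set (Ed d × Ed d) := fun l => Prod.snd ⁻¹' (P l) with hPRdef
  set QX : (Fin d → ℤ) → Set (Ed d × Ed d) := fun i => Prod.fst ⁻¹' (Q i) with hQXdef
  set QY : (Fin d → ℤ) → Set (Ed d × Ed d) := fun i => Prod.snd ⁻¹' (Q i) with hQYdef
  have hAhm : ∀ k, MeasurableSet (Ah k) := fun k => hadd2m (hPm k)
  have hQhm : ∀ i, MeasurableSet (Qh i) := fun i => hadd2m (hQm i)
  have hPLm : ∀ j, MeasurableSet (PL j) := fun j => measurable_fst (hPm j)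
  have hPRm : ∀ l, MeasurableSet (PR l) := fun l => measurable_snd (hPm l)
  have hQXm : ∀ i, MeasurableSet (QX i) := fun i => measurable_fst (hQm i)
  have hQYm : ∀ i, MeasurableSet (QY i) := fun i => measurable_snd (hQm i)
  have hAhd : Pairwise (Disjoint on Ah) := fun i j hij => Disjoint.preimage add2 (hPd hij)
  have hQhd : Pairwise (Disjoint on Qh) := fun i j hij => Disjoint.preimage add2 (hQd hij)
  have hPLd : Pairwise (Disjoint on PL) := fun i j hij => Disjoint.preimage Prod.fst (hPd hij)
  have hPRd : Pairwise (Disjoint on PR) := fun i j hij => Disjoint.preimage Prod.snd (hPd hij)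
  have hQXd : Pairwise (Disjoint on QX) := fun i j hij => Disjoint.preimage Prod.fst (hQd hij)
  have hQYd : Pairwise (Disjoint on QY) := fun i j hij => Disjoint.preimage Prod.snd (hQd hij)
  have hAhu : (⋃ k, Ah k) = Set.univ := by
    rw [hAhdef, ← Set.preimage_iUnion, hPu, Set.preimage_univ]
  have hQhu : (⋃ i, Qh i) = Set.univ := by
    rw [hQhdef, ← Set.preimage_iUnion, hQu, Set.preimage_univ]
  have hPLu : (⋃ j, PL j) = Set.univ := by
    rw [hPLdef, ← Set.preimage_iUnion, hPu, Set.preimage_univ]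
  have hPRu : (⋃ l, PR l) = Set.univ := by
    rw [hPRdef, ← Set.preimage_iUnion, hPu, Set.preimage_univ]
  have hQYu : (⋃ i, QY i) = Set.univ := by
    rw [hQYdef, ← Set.preimage_iUnion, hQu, Set.preimage_univ]
  have hQXu : (⋃ i, QX i) = Set.univ := by
    rw [hQXdef, ← Set.preimage_iUnion, hQu, Set.preimage_univ]
  -- prod identities
  have hPLprod : ∀ j, PL j = (P j) ×ˢ (Set.univ : Set (Ed d)) := by
    intro j; ext p; simp [hPLdef, Set.mem_prod]
  have hPRprod : ∀ l, PR l = (Set.univ : Set (Ed d)) ×ˢ (P l) := by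
    intro l; ext p; simp [hPRdef, Set.mem_prod]
  -- support bounds
  obtain ⟨ρω, hρω⟩ := hKωc.isBounded.subset_closedBall 0
  obtain ⟨ρη, hρη⟩ := hKηc.isBounded.subset_closedBall 0
  set ρ : ℝ := |ρω| + |ρη| with hρdef
  have hρ0 : 0 ≤ ρ := by positivity
  have hKωb : ∀ x ∈ Kω, dist x (0 : Ed d) ≤ ρ := by
    intro x hx
    have := hρω hx
    rw [Metric.mem_closedBall] at this
    calc dist x 0 ≤ ρω := this
      _ ≤ |ρω| := le_abs_self _
      _ ≤ ρ := by rw [hρdef]; linarith [abs_nonneg ρω, abs_nonneg ρη]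
  have hKηb : ∀ x ∈ Kη, dist x (0 : Ed d) ≤ ρ := by
    intro x hx
    have := hρη hx
    rw [Metric.mem_closedBall] at this
    calc dist x 0 ≤ ρη := this
      _ ≤ |ρη| := le_abs_self _
      _ ≤ ρ := by rw [hρdef]; linarith [abs_nonneg ρω, abs_nonneg ρη]
  set T2 : Set (Ed d × Ed d) := Kω ×ˢ Kη with hT2def
  have hT2 : mh T2ᶜ = 0 := by
    apply le_antisymm _ (zero_le)
    have hsub : T2ᶜ ⊆ (Kωᶜ ×ˢ (Set.univ : Set (Ed d))) ∪ ((Set.univ : Set (Ed d)) ×ˢ Kηᶜ) := by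
      intro p hp
      by_cases h : p.1 ∈ Kω
      · right
        refine ⟨Set.mem_univ _, ?_⟩
        intro hc
        exact hp ⟨h, hc⟩
      · exact Or.inl ⟨h, Set.mem_univ _⟩
    calc mh T2ᶜ ≤ mh (Kωᶜ ×ˢ (Set.univ : Set (Ed d)))
          + mh ((Set.univ : Set (Ed d)) ×ˢ Kηᶜ) :=
        le_trans (measure_mono hsub) (measure_union_le _ _)
      _ = 0 := by
          rw [hmhdef, Measure.prod_prod, Measure.prod_prod, hKω0, hKη0]
          simp
  have hT2ω : ∀ p ∈ T2, dist p.1 (0 : Ed d) ≤ 2*ρ := by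
    intro p hp
    calc dist p.1 0 ≤ ρ := hKωb p.1 hp.1
      _ ≤ 2*ρ := by linarith
  have hT2η : ∀ p ∈ T2, dist p.2 (0 : Ed d) ≤ 2*ρ := by
    intro p hp
    calc dist p.2 0 ≤ ρ := hKηb p.2 hp.2
      _ ≤ 2*ρ := by linarith
  have hT2add : ∀ p ∈ T2, dist (add2 p) (0 : Ed d) ≤ 2*ρ := by
    intro p hp
    have : dist (p.1 + p.2) ((0:Ed d) + 0) ≤ dist p.1 0 + dist p.2 0 :=
      dist_add_add_le _ _ _ _
    rw [add_zero] at this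
    calc dist (add2 p) 0 ≤ dist p.1 0 + dist p.2 0 := this
      _ ≤ ρ + ρ := add_le_add (hKωb p.1 hp.1) (hKηb p.2 hp.2)
      _ = 2*ρ := by ring
  have hπ0 : π (0 : Ed d) = 0 := by
    have := hπa 0 0
    rw [add_zero] at this
    have h2 : π 0 + π 0 = π 0 + 0 := by rw [← this, add_zero]
    exact (add_left_cancel h2)
  have hπbd : ∀ (g : Ed d × Ed d → Ed d),
      (∀ p ∈ T2, dist (g p) (0 : Ed d) ≤ 2*ρ) →
      ∀ p ∈ T2, dist (π (g p)) (0 : Ed d) ≤ 2*ρ := by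
    intro g hg p hp
    calc dist (π (g p)) 0 = dist (π (g p)) (π 0) := by rw [hπ0]
      _ ≤ dist (g p) 0 := hπd _ _
      _ ≤ 2*ρ := hg p hp
  -- support finsets on the product space
  obtain ⟨IA, hIA⟩ := SatAux.supp_finset b m hb mh add2 T2 hT2 0 (2*ρ) (by positivity) hT2add
  obtain ⟨IQh, hIQh⟩ := SatAux.supp_finset b m hb mh (fun p => π (add2 p)) T2 hT2 0 (2*ρ)
    (by positivity) (hπbd add2 hT2add)
  obtain ⟨IPL, hIPL⟩ := SatAux.supp_finset b m hb mh Prod.fst T2 hT2 0 (2*ρ) (by positivity) hT2ω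
  obtain ⟨IPR, hIPR⟩ := SatAux.supp_finset b m hb mh Prod.snd T2 hT2 0 (2*ρ) (by positivity) hT2η
  obtain ⟨IQY, hIQY⟩ := SatAux.supp_finset b m hb mh (fun p => π p.2) T2 hT2 0 (2*ρ)
    (by positivity) (hπbd Prod.snd hT2η)
  obtain ⟨IQX, hIQX⟩ := SatAux.supp_finset b m hb mh (fun p => π p.1) T2 hT2 0 (2*ρ)
    (by positivity) (hπbd Prod.fst hT2ω)
  -- support finsets for ω
  obtain ⟨Iω, hIω⟩ := SatAux.supp_finset b m hb ω id Kω hKω0 0 (2*ρ) (by positivity)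
    (fun x hx => le_trans (hKωb x hx) (by linarith))
  obtain ⟨IωQ, hIωQ⟩ := SatAux.supp_finset b m hb ω π Kω hKω0 0 (2*ρ) (by positivity)
    (fun x hx => by
      calc dist (π x) 0 = dist (π x) (π 0) := by rw [hπ0]
        _ ≤ dist x 0 := hπd _ _
        _ ≤ 2*ρ := le_trans (hKωb x hx) (by linarith))
  -- misc helpers
  have hβ0 : (0:ℝ) ≤ β := by positivity
  have hcell : ∀ (k : Fin d → ℤ) (x : Ed d), x ∈ P k → dist x (SatAux.corner b m k) ≤ (d:ℝ) * β :=
    fun k x hx => SatAux.dist_corner_le b m hb hx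
  have hNsub : ((2*(2*d)+2)^d : ℕ) ≤ N := by
    rw [hNdef]
    calc (2*(2*d)+2)^d ≤ (4*d+2)^d := Nat.pow_le_pow_left (by omega) d
      _ ≤ (4*d+2)^d * (4*d+2)^d := Nat.le_mul_of_pos_right _ hNf
  have hNsub1 : ((2*d+2)^d : ℕ) ≤ N := by
    rw [hNdef]
    calc (2*d+2)^d ≤ (4*d+2)^d := Nat.pow_le_pow_left (by omega) d
      _ ≤ (4*d+2)^d * (4*d+2)^d := Nat.le_mul_of_pos_right _ hNf
  have h2dcast : (d:ℝ)*β + (d:ℝ)*β ≤ ((2*d : ℕ):ℝ) * β := by push_cast; nlinarith [hβ0]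
  have hprob_le_one : ∀ (ν : Measure (Ed d)) (_ : IsProbabilityMeasure ν) (s : Set (Ed d)),
      (ν s).toReal ≤ 1 := by
    intro ν hν s
    calc (ν s).toReal ≤ (ν Set.univ).toReal :=
        ENNReal.toReal_mono (measure_ne_top ν _) (measure_mono (Set.subset_univ s))
      _ = 1 := by simp
  have hHgQ_eta : SatAux.Hg η Q = ∑' i, SatAux.F (η (Q i)).toReal 1 := by
    unfold SatAux.Hg
    apply tsum_congr
    intro i
    rw [(by simp : (η Set.univ).toReal = 1)]
  -- mass of restricted measures
  have hrmass : ∀ j, ((mh.restrict (PL j)) Set.univ) = ω (P j) := by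
    intro j
    rw [Measure.restrict_apply_univ, hPLprod j, hmhdef, Measure.prod_prod]
    simp
  -- decomposition over PL
  have hdecompL : ∀ s : Set (Ed d × Ed d), MeasurableSet s →
      mh s = ∑ j ∈ IPL, (mh.restrict (PL j)) s := by
    intro s hs
    have h1 := SatAux.measure_eq_sum_inter mh s hs PL hPLm hPLd Set.univ MeasurableSet.univ
      (by simp) (by rw [hPLu]) IPL hIPL
    rw [h1]
    apply Finset.sum_congr rfl
    intro j _
    rw [Measure.restrict_apply hs, Set.inter_univ]
  -- Step C per-piece
  have hpieceC : ∀ j ∈ IPL,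
      (ω (P j)).toReal * SatAux.Hg η Q - (ω (P j)).toReal * δ
        ≤ SatAux.Hg (mh.restrict (PL j)) Qh := by
    intro j _
    set μj := mh.restrict (PL j) with hμj
    haveI : IsFiniteMeasure μj := by rw [hμj]; infer_instance
    have hmultC : ∀ i ∈ IQh, ∃ s : Finset (Fin d → ℤ), s.card ≤ N ∧
        ∀ i', (QY i' ∩ Qh i ∩ PL j).Nonempty → i' ∈ s := by
      intro i _
      obtain ⟨s0, hs0c, hs0⟩ := SatAux.cell_count b m hb (2*d)
        (SatAux.corner b m i - π (SatAux.corner b m j))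
      refine ⟨s0, le_trans hs0c hNsub, ?_⟩
      rintro i' ⟨p, ⟨hp1, hp2⟩, hp3⟩
      apply hs0 i' (π p.2) hp1
      have e1 : π p.2 = π (add2 p) - π p.1 := by
        have := hπa p.1 p.2
        rw [hadd2def]
        simp only
        rw [this]
        abel
      rw [e1]
      calc dist (π (add2 p) - π p.1)
            (SatAux.corner b m i - π (SatAux.corner b m j))
          ≤ dist (π (add2 p)) (SatAux.corner b m i)
            + dist (π p.1) (π (SatAux.corner b m j)) := dist_sub_sub_le _ _ _ _
        _ ≤ (d:ℝ)*β + (d:ℝ)*β := add_le_add (hcell i _ hp2)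
            (le_trans (hπd _ _) (hcell j _ hp3))
        _ ≤ ((2*d : ℕ):ℝ) * β := h2dcast
    have hmulti := SatAux.multi μj QY Qh (PL j) hQYm hQhm (hPLm j) hQYd hQhd
      (by rw [hμj, Measure.restrict_apply (hPLm j).compl]; simp)
      (by rw [hQYu]; exact Set.subset_univ _)
      (by rw [hQhu]; exact Set.subset_univ _)
      IQY IQh
      (fun i hi => by
        rw [hμj, Measure.restrict_apply (hQYm i)]
        exact le_antisymm (le_trans (measure_mono Set.inter_subset_left)
          (le_of_eq (hIQY i hi))) (zero_le))
      (fun i hi => by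
        rw [hμj, Measure.restrict_apply (hQhm i)]
        exact le_antisymm (le_trans (measure_mono Set.inter_subset_left)
          (le_of_eq (hIQh i hi))) (zero_le))
      N hN1 hmultC
    have hQYmass : ∀ i, μj (QY i) = ω (P j) * η (Q i) := by
      intro i
      rw [hμj, Measure.restrict_apply (hQYm i)]
      have he : QY i ∩ PL j = (P j) ×ˢ (Q i) := by
        ext p
        constructor
        · rintro ⟨h1, h2⟩; exact ⟨h2, h1⟩
        · rintro ⟨h1, h2⟩; exact ⟨h2, h1⟩
      rw [he, hmhdef, Measure.prod_prod]
    have hHgQY : SatAux.Hg μj QY = (ω (P j)).toReal * SatAux.Hg η Q := by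
      rw [hHgQ_eta]
      unfold SatAux.Hg
      rw [← tsum_mul_left]
      apply tsum_congr
      intro i
      rw [hQYmass i, hrmass j, ENNReal.toReal_mul]
      calc SatAux.F ((ω (P j)).toReal * (η (Q i)).toReal) (ω (P j)).toReal
          = SatAux.F ((ω (P j)).toReal * (η (Q i)).toReal) ((ω (P j)).toReal * 1) := by
            rw [mul_one]
        _ = (ω (P j)).toReal * SatAux.F (η (Q i)).toReal 1 :=
            SatAux.F_smul ENNReal.toReal_nonneg ENNReal.toReal_nonneg (hprob_le_one η hη _)
    have hmass_univ : (μj Set.univ).toReal = (ω (P j)).toReal := by rw [hrmass j]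
    rw [← hHgQY, ← hmass_univ, hδdef]
    linarith [hmulti]
  -- Step C assembly
  have hstepC : SatAux.Hg η Q - δ ≤ SatAux.Hg mh Qh := by
    have hsuper := SatAux.Dg_super mh (fun j => mh.restrict (PL j)) IPL hdecompL Qh
      (fun _ => Set.univ) (fun i => Set.subset_univ _) hQhm (fun _ => MeasurableSet.univ)
      IQh hIQh
    have hsum1 : ∑ j ∈ IPL, (ω (P j)).toReal = 1 := by
      have h0 := hdecompL Set.univ MeasurableSet.univ
      have h1 : (mh Set.univ).toReal
          = ∑ j ∈ IPL, ((mh.restrict (PL j)) Set.univ).toReal := by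
        rw [h0]
        exact ENNReal.toReal_sum fun j _ => by rw [hrmass j]; exact measure_ne_top ω _
      calc ∑ j ∈ IPL, (ω (P j)).toReal
          = ∑ j ∈ IPL, ((mh.restrict (PL j)) Set.univ).toReal :=
            Finset.sum_congr rfl fun j _ => by rw [hrmass j]
        _ = (mh Set.univ).toReal := h1.symm
        _ = 1 := by simp
    calc SatAux.Hg η Q - δ
        = ∑ j ∈ IPL, ((ω (P j)).toReal * SatAux.Hg η Q - (ω (P j)).toReal * δ) := by
          rw [Finset.sum_sub_distrib, ← Finset.sum_mul, ← Finset.sum_mul, hsum1, one_mul, one_mul]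
      _ ≤ ∑ j ∈ IPL, SatAux.Hg (mh.restrict (PL j)) Qh := Finset.sum_le_sum hpieceC
      _ ≤ SatAux.Hg mh Qh := hsuper
  -- pair families
  set Rf : (Fin d → ℤ) × (Fin d → ℤ) → Set (Ed d) := fun p => P p.1 ∩ Q p.2 with hRfdef
  set Rh : (Fin d → ℤ) × (Fin d → ℤ) → Set (Ed d × Ed d) := fun p => Ah p.1 ∩ Qh p.2 with hRhdef
  set RX : (Fin d → ℤ) × (Fin d → ℤ) → Set (Ed d × Ed d) := fun p => PL p.1 ∩ QX p.2 with hRXdef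
  have hRfm : ∀ p, MeasurableSet (Rf p) := fun p => (hPm p.1).inter (hQm p.2)
  have hRhm : ∀ p, MeasurableSet (Rh p) := fun p => (hAhm p.1).inter (hQhm p.2)
  have hRXm : ∀ p, MeasurableSet (RX p) := fun p => (hPLm p.1).inter (hQXm p.2)
  have hRfd : Pairwise (Disjoint on Rf) := SatAux.pair_disjoint hPd hQd
  have hRhd : Pairwise (Disjoint on Rh) := SatAux.pair_disjoint hAhd hQhd
  have hRXd : Pairwise (Disjoint on RX) := SatAux.pair_disjoint hPLd hQXd
  have hRfu : (⋃ p, Rf p) = Set.univ := SatAux.pair_iUnion hPu hQu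
  have hRhu : (⋃ p, Rh p) = Set.univ := SatAux.pair_iUnion hAhu hQhu
  have hRXu : (⋃ p, RX p) = Set.univ := SatAux.pair_iUnion hPLu hQXu
  -- pair support finsets
  have hIRf : ∀ p ∉ Iω ×ˢ IωQ, ω (Rf p) = 0 := by
    intro p hp
    by_cases h1 : p.1 ∈ Iω
    · have h2 : p.2 ∉ IωQ := fun h2 => hp (Finset.mem_product.mpr ⟨h1, h2⟩)
      exact le_antisymm (le_trans (measure_mono Set.inter_subset_right)
        (le_of_eq (hIωQ p.2 h2))) (zero_le)
    · exact le_antisymm (le_trans (measure_mono Set.inter_subset_left)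
        (le_of_eq (hIω p.1 h1))) (zero_le)
  have hIRh : ∀ p ∉ IA ×ˢ IQh, mh (Rh p) = 0 := by
    intro p hp
    by_cases h1 : p.1 ∈ IA
    · have h2 : p.2 ∉ IQh := fun h2 => hp (Finset.mem_product.mpr ⟨h1, h2⟩)
      exact le_antisymm (le_trans (measure_mono Set.inter_subset_right)
        (le_of_eq (hIQh p.2 h2))) (zero_le)
    · exact le_antisymm (le_trans (measure_mono Set.inter_subset_left)
        (le_of_eq (hIA p.1 h1))) (zero_le)
  have hIRX : ∀ p ∉ IPL ×ˢ IQX, mh (RX p) = 0 := by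
    intro p hp
    by_cases h1 : p.1 ∈ IPL
    · have h2 : p.2 ∉ IQX := fun h2 => hp (Finset.mem_product.mpr ⟨h1, h2⟩)
      exact le_antisymm (le_trans (measure_mono Set.inter_subset_right)
        (le_of_eq (hIQX p.2 h2))) (zero_le)
    · exact le_antisymm (le_trans (measure_mono Set.inter_subset_left)
        (le_of_eq (hIPL p.1 h1))) (zero_le)
  -- masses of PR-restricted measures
  have hrmassR : ∀ l, ((mh.restrict (PR l)) Set.univ) = η (P l) := by
    intro l
    rw [Measure.restrict_apply_univ, hPRprod l, hmhdef, Measure.prod_prod]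
    simp
  -- decomposition over PR
  have hdecompR : ∀ s : Set (Ed d × Ed d), MeasurableSet s →
      mh s = ∑ l ∈ IPR, (mh.restrict (PR l)) s := by
    intro s hs
    have h1 := SatAux.measure_eq_sum_inter mh s hs PR hPRm hPRd Set.univ MeasurableSet.univ
      (by simp) (by rw [hPRu]) IPR hIPR
    rw [h1]
    apply Finset.sum_congr rfl
    intro l _
    rw [Measure.restrict_apply hs, Set.inter_univ]
  -- ω-level chain and refinement (step E)
  have hchainω := SatAux.chain_rule ω P Q hPm hQm hPd hPu Iω hIω IωQ hIωQ
  have hstepE : SatAux.Hg ω P - δ ≤ SatAux.Hg ω Rf := by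
    have hmultE : ∀ p ∈ Iω ×ˢ IωQ, ∃ s : Finset (Fin d → ℤ), s.card ≤ N ∧
        ∀ k', (P k' ∩ Rf p ∩ Set.univ).Nonempty → k' ∈ s := by
      intro p _
      refine ⟨{p.1}, by simpa using hN1, ?_⟩
      rintro k' ⟨x, ⟨hx1, hx2, -⟩, -⟩
      simp only [Finset.mem_singleton]
      by_contra hne
      exact Set.disjoint_left.mp (hPd hne) hx1 hx2
    have hmultiE := SatAux.multi ω P Rf Set.univ hPm hRfm MeasurableSet.univ hPd hRfd
      (by simp) (by rw [hPu]) (by rw [hRfu]) Iω (Iω ×ˢ IωQ) hIω hIRf N hN1 hmultE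
    have hmass1 : (ω Set.univ).toReal = 1 := by simp
    rw [hδdef]
    rw [hmass1] at hmultiE
    linarith [hmultiE]
  have hDω : SatAux.Hg ω P - SatAux.Hg ω Q - δ
      ≤ SatAux.Dg ω Rf (fun p => Q p.2) := by
    have h1 : SatAux.Hg ω Rf = SatAux.Hg ω Q + SatAux.Dg ω Rf (fun p => Q p.2) := hchainω
    linarith [hstepE]
  -- step D per-piece
  have hpieceD : ∀ l ∈ IPR,
      (η (P l)).toReal * (SatAux.Hg ω P - SatAux.Hg ω Q - 3*δ)
        ≤ SatAux.Dg (mh.restrict (PR l)) Rh (fun p => Qh p.2) := by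
    intro l _
    set μl := mh.restrict (PR l) with hμl
    haveI : IsFiniteMeasure μl := by rw [hμl]; infer_instance
    have hμlI : ∀ (G : (Fin d → ℤ) → Set (Ed d × Ed d)) (hGm : ∀ i, MeasurableSet (G i))
        (I0 : Finset (Fin d → ℤ)) (hI0 : ∀ i ∉ I0, mh (G i) = 0), ∀ i ∉ I0, μl (G i) = 0 := by
      intro G hGm I0 hI0 i hi
      rw [hμl, Measure.restrict_apply (hGm i)]
      exact le_antisymm (le_trans (measure_mono Set.inter_subset_left)
        (le_of_eq (hI0 i hi))) (zero_le)
    have hμlIRh : ∀ p ∉ IA ×ˢ IQh, μl (Rh p) = 0 := by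
      intro p hp
      rw [hμl, Measure.restrict_apply (hRhm p)]
      exact le_antisymm (le_trans (measure_mono Set.inter_subset_left)
        (le_of_eq (hIRh p hp))) (zero_le)
    have hμlIRX : ∀ p ∉ IPL ×ˢ IQX, μl (RX p) = 0 := by
      intro p hp
      rw [hμl, Measure.restrict_apply (hRXm p)]
      exact le_antisymm (le_trans (measure_mono Set.inter_subset_left)
        (le_of_eq (hIRX p hp))) (zero_le)
    have hμlS : μl (PR l)ᶜ = 0 := by
      rw [hμl, Measure.restrict_apply (hPRm l).compl]; simp
    -- M2 : Hg μl RX ≤ Hg μl Rh + mass δ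
    have hmultM2 : ∀ p ∈ IA ×ˢ IQh, ∃ s : Finset ((Fin d → ℤ) × (Fin d → ℤ)),
        s.card ≤ N ∧ ∀ p', (RX p' ∩ Rh p ∩ PR l).Nonempty → p' ∈ s := by
      rintro ⟨k, i⟩ _
      obtain ⟨s1, hs1c, hs1⟩ := SatAux.cell_count b m hb (2*d)
        (SatAux.corner b m k - SatAux.corner b m l)
      obtain ⟨s2, hs2c, hs2⟩ := SatAux.cell_count b m hb (2*d)
        (SatAux.corner b m i - π (SatAux.corner b m l))
      refine ⟨s1 ×ˢ s2, ?_, ?_⟩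
      · calc (s1 ×ˢ s2).card = s1.card * s2.card := Finset.card_product _ _
          _ ≤ (2*(2*d)+2)^d * (2*(2*d)+2)^d := Nat.mul_le_mul hs1c hs2c
          _ ≤ N := by
              rw [hNdef]
              exact Nat.mul_le_mul (Nat.pow_le_pow_left (by omega) d)
                (Nat.pow_le_pow_left (by omega) d)
      · rintro ⟨k', i'⟩ ⟨p, ⟨⟨hq1, hq2⟩, hq3, hq4⟩, hq5⟩
        -- hq1 : p.1 ∈ P k', hq2 : π p.1 ∈ P i', hq3 : add2 p ∈ P k,
        -- hq4 : π (add2 p) ∈ P i, hq5 : p.2 ∈ P l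
        rw [Finset.mem_product]
        constructor
        · apply hs1 k' p.1 hq1
          have e1 : p.1 = add2 p - p.2 := by
            rw [hadd2def]; simp only; abel
          rw [e1]
          calc dist (add2 p - p.2) (SatAux.corner b m k - SatAux.corner b m l)
              ≤ dist (add2 p) (SatAux.corner b m k) + dist p.2 (SatAux.corner b m l) :=
                dist_sub_sub_le _ _ _ _
            _ ≤ (d:ℝ)*β + (d:ℝ)*β := add_le_add (hcell k _ hq3) (hcell l _ hq5)
            _ ≤ ((2*d : ℕ):ℝ) * β := h2dcast
        · apply hs2 i' (π p.1) hq2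
          have e1 : π p.1 = π (add2 p) - π p.2 := by
            have := hπa p.1 p.2
            rw [hadd2def]; simp only
            rw [this]; abel
          rw [e1]
          calc dist (π (add2 p) - π p.2) (SatAux.corner b m i - π (SatAux.corner b m l))
              ≤ dist (π (add2 p)) (SatAux.corner b m i)
                + dist (π p.2) (π (SatAux.corner b m l)) := dist_sub_sub_le _ _ _ _
            _ ≤ (d:ℝ)*β + (d:ℝ)*β := add_le_add (hcell i _ hq4)
                (le_trans (hπd _ _) (hcell l _ hq5))
            _ ≤ ((2*d : ℕ):ℝ) * β := h2dcast
    have hmultiM2 := SatAux.multi μl RX Rh (PR l) hRXm hRhm (hPRm l) hRXd hRhd hμlS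
      (by rw [hRXu]; exact Set.subset_univ _) (by rw [hRhu]; exact Set.subset_univ _)
      (IPL ×ˢ IQX) (IA ×ˢ IQh) hμlIRX hμlIRh N hN1 hmultM2
    -- M3 : Hg μl Qh ≤ Hg μl QX + mass δ
    have hmultM3 : ∀ i ∈ IQX, ∃ s : Finset (Fin d → ℤ), s.card ≤ N ∧
        ∀ i', (Qh i' ∩ QX i ∩ PR l).Nonempty → i' ∈ s := by
      intro i _
      obtain ⟨s0, hs0c, hs0⟩ := SatAux.cell_count b m hb (2*d)
        (SatAux.corner b m i + π (SatAux.corner b m l))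
      refine ⟨s0, le_trans hs0c hNsub, ?_⟩
      rintro i' ⟨p, ⟨hp1, hp2⟩, hp3⟩
      apply hs0 i' (π (add2 p)) hp1
      have e1 : π (add2 p) = π p.1 + π p.2 := by
        rw [hadd2def]; simp only; exact hπa p.1 p.2
      rw [e1]
      calc dist (π p.1 + π p.2) (SatAux.corner b m i + π (SatAux.corner b m l))
          ≤ dist (π p.1) (SatAux.corner b m i) + dist (π p.2) (π (SatAux.corner b m l)) :=
            dist_add_add_le _ _ _ _
        _ ≤ (d:ℝ)*β + (d:ℝ)*β := add_le_add (hcell i _ hp2)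
            (le_trans (hπd _ _) (hcell l _ hp3))
        _ ≤ ((2*d : ℕ):ℝ) * β := h2dcast
    have hmultiM3 := SatAux.multi μl Qh QX (PR l) hQhm hQXm (hPRm l) hQhd hQXd hμlS
      (by rw [hQhu]; exact Set.subset_univ _) (by rw [hQXu]; exact Set.subset_univ _)
      IQh IQX (hμlI Qh hQhm IQh hIQh) (hμlI QX hQXm IQX hIQX) N hN1 hmultM3
    -- chain rule for μl
    have hchainμl := SatAux.chain_rule μl Ah Qh hAhm hQhm hAhd hAhu
      IA (hμlI Ah hAhm IA hIA) IQh (hμlI Qh hQhm IQh hIQh)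
    -- homogeneity
    have hRXmass : ∀ p : (Fin d → ℤ) × (Fin d → ℤ),
        μl (RX p) = ω (Rf p) * η (P l) := by
      intro p
      rw [hμl, Measure.restrict_apply (hRXm p)]
      have he : RX p ∩ PR l = (Rf p) ×ˢ (P l) := by
        ext q
        constructor
        · rintro ⟨⟨h1, h2⟩, h3⟩; exact ⟨⟨h1, h2⟩, h3⟩
        · rintro ⟨⟨h1, h2⟩, h3⟩; exact ⟨⟨h1, h2⟩, h3⟩
      rw [he, hmhdef, Measure.prod_prod]
    have hQXmass : ∀ i, μl (QX i) = ω (Q i) * η (P l) := by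
      intro i
      rw [hμl, Measure.restrict_apply (hQXm i)]
      have he : QX i ∩ PR l = (Q i) ×ˢ (P l) := by
        ext q
        constructor
        · rintro ⟨h1, h2⟩; exact ⟨h1, h2⟩
        · rintro ⟨h1, h2⟩; exact ⟨h1, h2⟩
      rw [he, hmhdef, Measure.prod_prod]
    have hμluniv : (μl Set.univ).toReal = (η (P l)).toReal := by rw [hrmassR l]
    have hHgRX : SatAux.Hg μl RX = (η (P l)).toReal * SatAux.Hg ω Rf := by
      have hωuniv : SatAux.Hg ω Rf = ∑' p, SatAux.F (ω (Rf p)).toReal 1 := by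
        unfold SatAux.Hg
        exact tsum_congr fun p => by rw [(by simp : (ω Set.univ).toReal = 1)]
      rw [hωuniv]
      unfold SatAux.Hg
      rw [← tsum_mul_left]
      apply tsum_congr
      intro p
      rw [hRXmass p, hμluniv, ENNReal.toReal_mul, mul_comm (ω (Rf p)).toReal _]
      calc SatAux.F ((η (P l)).toReal * (ω (Rf p)).toReal) (η (P l)).toReal
          = SatAux.F ((η (P l)).toReal * (ω (Rf p)).toReal) ((η (P l)).toReal * 1) := by
            rw [mul_one]
        _ = (η (P l)).toReal * SatAux.F (ω (Rf p)).toReal 1 :=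
            SatAux.F_smul ENNReal.toReal_nonneg ENNReal.toReal_nonneg (hprob_le_one ω hω _)
    have hHgQX : SatAux.Hg μl QX = (η (P l)).toReal * SatAux.Hg ω Q := by
      have hωuniv : SatAux.Hg ω Q = ∑' i, SatAux.F (ω (Q i)).toReal 1 := by
        unfold SatAux.Hg
        exact tsum_congr fun i => by rw [(by simp : (ω Set.univ).toReal = 1)]
      rw [hωuniv]
      unfold SatAux.Hg
      rw [← tsum_mul_left]
      apply tsum_congr
      intro i
      rw [hQXmass i, hμluniv, ENNReal.toReal_mul, mul_comm (ω (Q i)).toReal _]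
      calc SatAux.F ((η (P l)).toReal * (ω (Q i)).toReal) (η (P l)).toReal
          = SatAux.F ((η (P l)).toReal * (ω (Q i)).toReal) ((η (P l)).toReal * 1) := by
            rw [mul_one]
        _ = (η (P l)).toReal * SatAux.F (ω (Q i)).toReal 1 :=
            SatAux.F_smul ENNReal.toReal_nonneg ENNReal.toReal_nonneg (hprob_le_one ω hω _)
    -- combine: Dg μl Rh (Qh∘snd) = Hg μl Rh - Hg μl Qh
    --   ≥ (Hg μl RX - mass δ) - (Hg μl QX + mass δ)
    have hcl0 : (0:ℝ) ≤ (η (P l)).toReal := ENNReal.toReal_nonneg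
    have h1 : SatAux.Hg μl Rh = SatAux.Hg μl Qh + SatAux.Dg μl Rh (fun p => Qh p.2) := hchainμl
    rw [hδdef]
    rw [hμluniv] at hmultiM2 hmultiM3
    rw [hHgRX] at hmultiM2
    rw [hHgQX] at hmultiM3
    nlinarith [hmultiM2, hmultiM3, h1, hcl0, hδ0]
  -- Step D assembly
  have hstepD : SatAux.Hg ω P - SatAux.Hg ω Q - 3*δ ≤ SatAux.Dg mh Rh (fun p => Qh p.2) := by
    have hsuper := SatAux.Dg_super mh (fun l => mh.restrict (PR l)) IPR hdecompR Rh
      (fun p => Qh p.2) (fun p => Set.inter_subset_right) hRhm (fun p => hQhm p.2)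
      (IA ×ˢ IQh) hIRh
    have hsum1R : ∑ l ∈ IPR, (η (P l)).toReal = 1 := by
      have h0 := hdecompR Set.univ MeasurableSet.univ
      have h1 : (mh Set.univ).toReal
          = ∑ l ∈ IPR, ((mh.restrict (PR l)) Set.univ).toReal := by
        rw [h0]
        exact ENNReal.toReal_sum fun l _ => by rw [hrmassR l]; exact measure_ne_top η _
      calc ∑ l ∈ IPR, (η (P l)).toReal
          = ∑ l ∈ IPR, ((mh.restrict (PR l)) Set.univ).toReal :=
            Finset.sum_congr rfl fun l _ => by rw [hrmassR l]
        _ = (mh Set.univ).toReal := h1.symm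
        _ = 1 := by simp
    calc SatAux.Hg ω P - SatAux.Hg ω Q - 3*δ
        = ∑ l ∈ IPR, (η (P l)).toReal * (SatAux.Hg ω P - SatAux.Hg ω Q - 3*δ) := by
          rw [← Finset.sum_mul, hsum1R, one_mul]
      _ ≤ ∑ l ∈ IPR, SatAux.Dg (mh.restrict (PR l)) Rh (fun p => Qh p.2) :=
          Finset.sum_le_sum fun l hl => by
            have := hpieceD l hl
            linarith [this]
      _ ≤ SatAux.Dg mh Rh (fun p => Qh p.2) := hsuper
  -- Step B
  have hchainmh := SatAux.chain_rule mh Ah Qh hAhm hQhm hAhd hAhu IA hIA IQh hIQh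
  have hstepB : SatAux.Hg mh Rh - δ ≤ SatAux.Hg mh Ah := by
    have hmultB : ∀ k ∈ IA, ∃ s : Finset ((Fin d → ℤ) × (Fin d → ℤ)), s.card ≤ N ∧
        ∀ p', (Rh p' ∩ Ah k ∩ Set.univ).Nonempty → p' ∈ s := by
      intro k _
      obtain ⟨s2, hs2c, hs2⟩ := SatAux.cell_count b m hb d (π (SatAux.corner b m k))
      refine ⟨{k} ×ˢ s2, ?_, ?_⟩
      · have hcard : ({k} ×ˢ s2).card = s2.card := by
          rw [Finset.card_product, Finset.card_singleton, one_mul]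
        rw [hcard]
        exact le_trans hs2c hNsub1
      · rintro ⟨k', i'⟩ ⟨p, ⟨⟨hp1, hp2⟩, hp3⟩, -⟩
        rw [Finset.mem_product, Finset.mem_singleton]
        constructor
        · by_contra hne
          exact Set.disjoint_left.mp (hPd hne) hp1 hp3
        · apply hs2 i' (π (add2 p)) hp2
          calc dist (π (add2 p)) (π (SatAux.corner b m k))
              ≤ dist (add2 p) (SatAux.corner b m k) := hπd _ _
            _ ≤ (d:ℝ) * β := hcell k _ hp3
            _ = ((d:ℕ):ℝ) * β := by norm_num
    have hmultiB := SatAux.multi mh Rh Ah Set.univ hRhm hAhm MeasurableSet.univ hRhd hAhd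
      (by simp) (by rw [hRhu]) (by rw [hAhu]) (IA ×ˢ IQh) IA hIRh hIA N hN1 hmultB
    have hmass1 : (mh Set.univ).toReal = 1 := by simp
    rw [hδdef]
    rw [hmass1] at hmultiB
    linarith [hmultiB]
  -- Key inequality
  have hkey : SatAux.Hg η Q + (SatAux.Hg ω P - SatAux.Hg ω Q) - 5*δ ≤ SatAux.Hg mh Ah := by
    have h1 : SatAux.Hg mh Rh = SatAux.Hg mh Qh + SatAux.Dg mh Rh (fun p => Qh p.2) := hchainmh
    linarith [hstepB, hstepC, hstepD]
  -- interfaces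
  have hconvdef : ω ∗ η = Measure.map add2 mh := rfl
  haveI hθp : IsProbabilityMeasure (ω ∗ η) := by
    rw [hconvdef]; exact Measure.isProbabilityMeasure_map hadd2m.aemeasurable
  haveI : IsProbabilityMeasure (Measure.map π ω) := Measure.isProbabilityMeasure_map hπm.aemeasurable
  haveI : IsProbabilityMeasure (Measure.map π η) := Measure.isProbabilityMeasure_map hπm.aemeasurable
  have heθ : entH d b m (ω ∗ η) = SatAux.Hg mh Ah * (Real.log b)⁻¹ := by
    rw [SatAux.entH_eq_Hg b m]
    congr 1
    unfold SatAux.Hg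
    apply tsum_congr
    intro k
    rw [hconvdef, Measure.map_apply hadd2m (hPm k),
      Measure.map_apply hadd2m MeasurableSet.univ, Set.preimage_univ]
  have heη : entH d b m η = SatAux.Hg η P * (Real.log b)⁻¹ := SatAux.entH_eq_Hg b m η
  have heω : entH d b m ω = SatAux.Hg ω P * (Real.log b)⁻¹ := SatAux.entH_eq_Hg b m ω
  have heπη : entH d b m (Measure.map π η) = SatAux.Hg η Q * (Real.log b)⁻¹ := by
    rw [SatAux.entH_eq_Hg b m]
    congr 1
    unfold SatAux.Hg
    apply tsum_congr
    intro lidx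
    rw [Measure.map_apply hπm (hPm lidx), Measure.map_apply hπm MeasurableSet.univ,
      Set.preimage_univ]
  have heπω : entH d b m (Measure.map π ω) = SatAux.Hg ω Q * (Real.log b)⁻¹ := by
    rw [SatAux.entH_eq_Hg b m]
    congr 1
    unfold SatAux.Hg
    apply tsum_congr
    intro lidx
    rw [Measure.map_apply hπm (hPm lidx), Measure.map_apply hπm MeasurableSet.univ,
      Set.preimage_univ]
  -- final arithmetic
  unfold Saturated at hsat ⊢
  rw [← hπdef] at hsat ⊢
  rw [heω, heπω] at hsat
  rw [heη, heπη]
  rw [heθ, heη] at hconv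
  have hminv : (0:ℝ) < 1/(m:ℝ) := by positivity
  have hL2 : Real.log 2 ≤ Real.log b :=
    Real.log_le_log (by norm_num) (by exact_mod_cast hb)
  have hmM : (5*δ) / (Real.log 2 * ε) ≤ (m:ℝ) := by
    have h1 : ((⌈(5*δ) / (Real.log 2 * ε)⌉₊ + 1 : ℕ) : ℝ) ≤ (m:ℝ) := by exact_mod_cast hm
    calc (5*δ) / (Real.log 2 * ε) ≤ (⌈(5*δ) / (Real.log 2 * ε)⌉₊ : ℝ) := Nat.le_ceil _
      _ ≤ (m:ℝ) := by push_cast at h1 ⊢; linarith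
  have hδm : 5*δ * ((1/(m:ℝ)) * (Real.log b)⁻¹) ≤ ε := by
    rw [div_le_iff₀ (by positivity : (0:ℝ) < Real.log 2 * ε)] at hmM
    have h2 : 5*δ ≤ ε * ((m:ℝ) * Real.log b) := by nlinarith [hmR, hε, hL2, hlog2, hδ0]
    have h3 : 5*δ * ((1/(m:ℝ)) * (Real.log b)⁻¹) = 5*δ / ((m:ℝ) * Real.log b) := by
      field_simp
    rw [h3, div_le_iff₀ (by positivity : (0:ℝ) < (m:ℝ) * Real.log b)]
    linarith [h2]
  have hkey2 : (1/(m:ℝ)) * ((SatAux.Hg η Q + (SatAux.Hg ω P - SatAux.Hg ω Q) - 5*δ)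
        * (Real.log b)⁻¹)
      ≤ (1/(m:ℝ)) * (SatAux.Hg mh Ah * (Real.log b)⁻¹) := by
    apply mul_le_mul_of_nonneg_left _ (le_of_lt hminv)
    apply mul_le_mul_of_nonneg_right hkey (by positivity)
  have hexp : (1/(m:ℝ)) * ((SatAux.Hg η Q + (SatAux.Hg ω P - SatAux.Hg ω Q) - 5*δ)
        * (Real.log b)⁻¹)
      = (1/(m:ℝ)) * (SatAux.Hg η Q * (Real.log b)⁻¹)
        + (1/(m:ℝ)) * (SatAux.Hg ω P * (Real.log b)⁻¹)
        - (1/(m:ℝ)) * (SatAux.Hg ω Q * (Real.log b)⁻¹)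
        - 5*δ * ((1/(m:ℝ)) * (Real.log b)⁻¹) := by ring
  rw [hexp] at hkey2
  linarith [hsat, hconv, hkey2, hδm]





end Weier
end
end
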